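/- arXiv:1602.01187 — 7 statements merged into one kernel-verified Lean document; each statement's English description precedes it below -/
import Mathlib

section
/- Let p ≥ 1, let X be a p×p SPD matrix, and let (U,D) ∈ E_X. Then E_X = { (U·R·P⁻¹, P·D·P⁻¹) : R ∈ SO(p) with R·D = D·R, and P an even p×p signed permutation matrix }. -/
open Matrix

/-- `U` is a special orthogonal (rotation) matrix. -/
def IsSO {p : ℕ} (U : Matrix (Fin p) (Fin p) ℝ) : Prop :=
  Uᵀ * U = 1 ∧ U.det = 1

/-- `D` is diagonal with strictly positive diagonal entries. -/
def IsPosDiag {p : ℕ} (D : Matrix (Fin p) (Fin p) ℝ) : Prop :=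
  D.IsDiag ∧ ∀ i, 0 < D i i

/-- The fiber `E_X` of eigendecompositions of `X`. -/
def fiber {p : ℕ} (X : Matrix (Fin p) (Fin p) ℝ) :
    Set (Matrix (Fin p) (Fin p) ℝ × Matrix (Fin p) (Fin p) ℝ) :=
  { UD | IsSO UD.1 ∧ IsPosDiag UD.2 ∧ UD.1 * UD.2 * UD.1ᵀ = X }

/-- A signed permutation matrix: exactly one nonzero entry in each row and column,
each nonzero entry being `1` or `-1`. -/
def IsSignedPerm {p : ℕ} (M : Matrix (Fin p) (Fin p) ℝ) : Prop :=
  (∀ i, ∃! j, M i j ≠ 0) ∧ (∀ j, ∃! i, M i j ≠ 0) ∧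
    ∀ i j, M i j = 0 ∨ M i j = 1 ∨ M i j = -1

/-- An even signed permutation matrix. -/
def IsEvenSignedPerm {p : ℕ} (M : Matrix (Fin p) (Fin p) ℝ) : Prop :=
  IsSignedPerm M ∧ M.det = 1

/-- Frobenius norm of a matrix. -/
noncomputable def frob {p : ℕ} (A : Matrix (Fin p) (Fin p) ℝ) : ℝ :=
  Real.sqrt (∑ i, ∑ j, (A i j) ^ 2)

/-- `logdist Q` is the infimum of Frobenius norms of skew-symmetric logarithms of `Q`. -/
noncomputable def logdist {p : ℕ} (Q : Matrix (Fin p) (Fin p) ℝ) : ℝ :=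
  sInf { r | ∃ A : Matrix (Fin p) (Fin p) ℝ,
      Aᵀ = -A ∧ NormedSpace.exp A = Q ∧ r = frob A }

/-- Log of a positive diagonal matrix (entrywise log of the diagonal). -/
noncomputable def logDiag {p : ℕ} (D : Matrix (Fin p) (Fin p) ℝ) :
    Matrix (Fin p) (Fin p) ℝ :=
  Matrix.diagonal fun i => Real.log (D i i)

/-- The product distance on `SO(p) × Diag⁺(p)` with weight `k`. -/
noncomputable def dM {p : ℕ} (k : ℝ)
    (UD VL : Matrix (Fin p) (Fin p) ℝ × Matrix (Fin p) (Fin p) ℝ) : ℝ :=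
  Real.sqrt ((k / 2) * logdist (UD.1⁻¹ * VL.1) ^ 2 +
    frob (logDiag UD.2 - logDiag VL.2) ^ 2)

/-- The scaling–rotation distance between `X` and `Y`. -/
noncomputable def dSR {p : ℕ} (k : ℝ) (X Y : Matrix (Fin p) (Fin p) ℝ) : ℝ :=
  sInf { r | ∃ UD ∈ fiber X, ∃ VL ∈ fiber Y, r = dM k UD VL }

/-- The stabilizer `G_D` of `D` in `SO(p)`. -/
def GD {p : ℕ} (D : Matrix (Fin p) (Fin p) ℝ) : Set (Matrix (Fin p) (Fin p) ℝ) :=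
  { R | IsSO R ∧ R * D = D * R }

lemma one_mem_GD {p : ℕ} (D : Matrix (Fin p) (Fin p) ℝ) :
    (1 : Matrix (Fin p) (Fin p) ℝ) ∈ GD D :=
  ⟨⟨by simp, by simp⟩, by simp⟩

/-- The identity component `G_D⁰` of `G_D` (subspace topology). -/
noncomputable def GD0 {p : ℕ} (D : Matrix (Fin p) (Fin p) ℝ) :
    Set (Matrix (Fin p) (Fin p) ℝ) :=
  { R | ∃ h : R ∈ GD D,
      (⟨R, h⟩ : GD D) ∈ connectedComponent (⟨1, one_mem_GD D⟩ : GD D) }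

/-- The coordinate plane `ℝ^J ⊆ ℝ^p`. -/
def coordPlane {p : ℕ} (J : Finset (Fin p)) : Submodule ℝ (Fin p → ℝ) where
  carrier := { x | ∀ i ∉ J, x i = 0 }
  add_mem' := by intro a b ha hb i hi; simp [ha i hi, hb i hi]
  zero_mem' := by intro i _; rfl
  smul_mem' := by intro c a ha i hi; simp [ha i hi]

lemma signedPerm_orth {p : ℕ} {P : Matrix (Fin p) (Fin p) ℝ} (h : IsSignedPerm P) :
    Pᵀ * P = 1 := by
  obtain ⟨hrow, hcol, hval⟩ := h
  ext j k
  simp only [Matrix.mul_apply, Matrix.transpose_apply, Matrix.one_apply]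
  by_cases hjk : j = k
  · subst hjk
    obtain ⟨i₀, hi₀, huniq⟩ := hcol j
    rw [if_pos rfl, Finset.sum_eq_single i₀]
    · rcases hval i₀ j with h | h | h
      · exact absurd h hi₀
      · rw [h]; norm_num
      · rw [h]; norm_num
    · intro b _ hb
      by_cases hbj : P b j = 0
      · simp [hbj]
      · exact absurd (huniq b hbj) hb
    · simp
  · rw [if_neg hjk]
    apply Finset.sum_eq_zero
    intro i _
    by_cases h1 : P i j = 0
    · simp [h1]
    by_cases h2 : P i k = 0
    · simp [h2]
    obtain ⟨j₀, _, hu⟩ := hrow i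
    exact absurd ((hu j h1).trans (hu k h2).symm) hjk

lemma conj_diag_entry {p : ℕ} (P : Matrix (Fin p) (Fin p) ℝ) (d : Fin p → ℝ) (a b : Fin p) :
    (P * Matrix.diagonal d * Pᵀ) a b = ∑ k, P a k * d k * P b k := by
  rw [Matrix.mul_assoc]
  simp only [Matrix.mul_apply, Matrix.transpose_apply, Matrix.diagonal_apply, mul_ite, mul_zero,
    ite_mul, zero_mul, Finset.sum_ite_eq, Finset.mem_univ, if_pos]
  exact Finset.sum_congr rfl fun k _ => by ring

lemma signedPerm_conj_posdiag {p : ℕ} {P : Matrix (Fin p) (Fin p) ℝ} {d : Fin p → ℝ}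
    (hP : IsSignedPerm P) (hd : ∀ i, 0 < d i) :
    (P * Matrix.diagonal d * Pᵀ).IsDiag ∧ ∀ i, 0 < (P * Matrix.diagonal d * Pᵀ) i i := by
  obtain ⟨hrow, hcol, hval⟩ := hP
  constructor
  · intro a b hab
    rw [conj_diag_entry]
    apply Finset.sum_eq_zero
    intro k _
    by_cases h1 : P a k = 0
    · simp [h1]
    by_cases h2 : P b k = 0
    · simp [h2]
    obtain ⟨i₀, _, hu⟩ := hcol k
    exact absurd ((hu a h1).trans (hu b h2).symm) hab
  · intro a
    rw [conj_diag_entry]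
    obtain ⟨k₀, hk₀, hu⟩ := hrow a
    rw [Finset.sum_eq_single k₀]
    · have h1 : P a k₀ * P a k₀ = 1 := by
        rcases hval a k₀ with h | h | h
        · exact absurd h hk₀
        · rw [h]; norm_num
        · rw [h]; norm_num
      calc 0 < d k₀ := hd k₀
        _ = (P a k₀ * P a k₀) * d k₀ := by rw [h1, one_mul]
        _ = P a k₀ * d k₀ * P a k₀ := by ring
    · intro b _ hb
      by_cases hbk : P a b = 0
      · simp [hbk]
      · exact absurd (hu b hbk) hb
    · simp

lemma exists_perm_comp {p : ℕ} {f g : Fin p → ℝ}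
    (h : Multiset.map f Finset.univ.val = Multiset.map g Finset.univ.val) :
    ∃ σ : Equiv.Perm (Fin p), f ∘ σ = g := by
  have hperm : (List.ofFn f).Perm (List.ofFn g) := by
    rw [← Multiset.coe_eq_coe]
    simpa [Fin.univ_def, List.ofFn_eq_map, ← Multiset.map_coe] using h
  have hsorted : f ∘ Tuple.sort f = g ∘ Tuple.sort g := by
    apply List.ofFn_injective
    exact List.Perm.eq_of_sortedLE
      (List.sortedLE_ofFn_iff.mpr (Tuple.monotone_sort f)) (List.sortedLE_ofFn_iff.mpr (Tuple.monotone_sort g))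
      (((Tuple.sort f).ofFn_comp_perm f).trans (hperm.trans ((Tuple.sort g).ofFn_comp_perm g).symm))
  refine ⟨(Tuple.sort g).symm.trans (Tuple.sort f), ?_⟩
  funext i
  simpa using congrFun hsorted ((Tuple.sort g).symm i)

lemma permMatrix_apply {p : ℕ} (σ : Equiv.Perm (Fin p)) (i j : Fin p) :
    (σ.permMatrix ℝ) i j = if σ i = j then 1 else 0 := by
  simp [Equiv.Perm.permMatrix, PEquiv.toMatrix_apply, Equiv.toPEquiv_apply, Option.mem_def, eq_comm]

lemma signedPermMat_apply {p : ℕ} (σ : Equiv.Perm (Fin p)) (ε : Fin p → ℝ) (i j : Fin p) :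
    (Matrix.diagonal ε * σ.permMatrix ℝ) i j = ε i * (if σ i = j then 1 else 0) := by
  rw [Matrix.diagonal_mul, permMatrix_apply]

lemma signedPermMat_isSignedPerm {p : ℕ} (σ : Equiv.Perm (Fin p)) (ε : Fin p → ℝ)
    (hε : ∀ i, ε i = 1 ∨ ε i = -1) :
    (∀ i, ∃! j, (Matrix.diagonal ε * σ.permMatrix ℝ) i j ≠ 0) ∧
    (∀ j, ∃! i, (Matrix.diagonal ε * σ.permMatrix ℝ) i j ≠ 0) ∧
    ∀ i j, (Matrix.diagonal ε * σ.permMatrix ℝ) i j = 0 ∨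
      (Matrix.diagonal ε * σ.permMatrix ℝ) i j = 1 ∨
      (Matrix.diagonal ε * σ.permMatrix ℝ) i j = -1 := by
  have hε0 : ∀ i, ε i ≠ 0 := by
    intro i; rcases hε i with h | h <;> rw [h] <;> norm_num
  refine ⟨fun i => ⟨σ i, ?_, fun j hj => ?_⟩, fun j => ⟨σ.symm j, ?_, fun i hi => ?_⟩, fun i j => ?_⟩
  · simp [signedPermMat_apply, hε0 i, Equiv.toPEquiv_apply]
  · by_contra hne
    simp only [signedPermMat_apply] at hj
    rw [if_neg (fun hh => hne hh.symm), mul_zero] at hj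
    exact hj rfl
  · simp [signedPermMat_apply, hε0 (σ.symm j), Equiv.toPEquiv_apply]
  · by_contra hne
    have hne2 : σ i ≠ j := fun hh => hne (by rw [← hh, Equiv.symm_apply_apply])
    simp only [signedPermMat_apply] at hi
    rw [if_neg hne2, mul_zero] at hi
    exact hi rfl
  · rw [signedPermMat_apply]
    by_cases hij : σ i = j
    · rw [if_pos hij, mul_one]
      rcases hε i with h | h <;> simp [h]
    · rw [if_neg hij, mul_zero]; left; rfl

lemma signedPermMat_conj {p : ℕ} (σ : Equiv.Perm (Fin p)) (ε : Fin p → ℝ)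
    (hε : ∀ i, ε i = 1 ∨ ε i = -1) (d : Fin p → ℝ) :
    (Matrix.diagonal ε * σ.permMatrix ℝ) * Matrix.diagonal d *
      (Matrix.diagonal ε * σ.permMatrix ℝ)ᵀ = Matrix.diagonal (fun i => d (σ i)) := by
  have hsq : ∀ i, ε i * ε i = 1 := by
    intro i; rcases hε i with h | h <;> rw [h] <;> norm_num
  ext a b
  rw [show ((Matrix.diagonal ε * σ.permMatrix ℝ) * Matrix.diagonal d *
      (Matrix.diagonal ε * σ.permMatrix ℝ)ᵀ) a b
      = ∑ k, (Matrix.diagonal ε * σ.permMatrix ℝ) a k * d k *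
        (Matrix.diagonal ε * σ.permMatrix ℝ) b k from by
    rw [Matrix.mul_assoc]
    simp only [Matrix.mul_apply, Matrix.transpose_apply, Matrix.diagonal_apply, mul_ite, mul_zero,
      ite_mul, zero_mul, Finset.sum_ite_eq, Finset.mem_univ, if_pos]
    exact Finset.sum_congr rfl fun k _ => by ring]
  rw [Finset.sum_eq_single (σ a)]
  · rw [signedPermMat_apply, signedPermMat_apply, if_pos rfl, mul_one]
    by_cases hab : a = b
    · subst hab
      rw [if_pos rfl, Matrix.diagonal_apply_eq]
      calc ε a * d (σ a) * (ε a * 1) = (ε a * ε a) * d (σ a) := by ring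
        _ = d (σ a) := by rw [hsq, one_mul]
    · rw [if_neg (fun hh => hab (σ.injective hh.symm)), Matrix.diagonal_apply_ne _ hab]
      ring
  · intro k _ hk
    rw [signedPermMat_apply, if_neg (fun hh => hk hh.symm)]
    ring
  · simp

lemma multiset_eq_of_conj {p : ℕ} {W : Matrix (Fin p) (Fin p) ℝ} {d l : Fin p → ℝ}
    (hW : Wᵀ * W = 1) (hL : Matrix.diagonal l = W * Matrix.diagonal d * Wᵀ) :
    Multiset.map d Finset.univ.val = Multiset.map l Finset.univ.val := by
  have hWWt : W * Wᵀ = 1 := mul_eq_one_comm.mp hW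
  have hdd : W.det * Wᵀ.det = 1 := by
    rw [← Matrix.det_mul, hWWt, Matrix.det_one]
  have hdet : ∀ x : ℝ, ∏ i, (x - d i) = ∏ i, (x - l i) := by
    intro x
    have hconst : W * Matrix.diagonal (fun _ : Fin p => x) * Wᵀ
        = Matrix.diagonal (fun _ : Fin p => x) := by
      have h1 : Matrix.diagonal (fun _ : Fin p => x) = x • (1 : Matrix (Fin p) (Fin p) ℝ) := by
        ext i j
        by_cases h : i = j <;> simp [Matrix.diagonal_apply, Matrix.one_apply, h]
      rw [h1, Matrix.mul_smul, Matrix.mul_one, Matrix.smul_mul, hWWt]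
    have h2 : Matrix.diagonal (fun i => x - l i)
        = W * Matrix.diagonal (fun i => x - d i) * Wᵀ := by
      have hd1 : Matrix.diagonal (fun i => x - d i)
          = Matrix.diagonal (fun _ : Fin p => x) - Matrix.diagonal d := by
        rw [Matrix.diagonal_sub]
      have hl1 : Matrix.diagonal (fun i => x - l i)
          = Matrix.diagonal (fun _ : Fin p => x) - Matrix.diagonal l := by
        rw [Matrix.diagonal_sub]
      rw [hd1, hl1, Matrix.mul_sub, Matrix.sub_mul, hconst, hL]
    have h3 := congrArg Matrix.det h2
    rw [Matrix.det_mul, Matrix.det_mul, Matrix.det_diagonal, Matrix.det_diagonal] at h3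
    calc (∏ i, (x - d i)) = (∏ i, (x - d i)) * (W.det * Wᵀ.det) := by rw [hdd, mul_one]
      _ = W.det * (∏ i, (x - d i)) * Wᵀ.det := by ring
      _ = ∏ i, (x - l i) := h3.symm
  have hpoly : (∏ i, (Polynomial.X - Polynomial.C (d i)))
      = ∏ i, (Polynomial.X - Polynomial.C (l i)) := by
    apply Polynomial.funext
    intro x
    simpa [Polynomial.eval_prod] using hdet x
  calc Multiset.map d Finset.univ.val
      = ((Multiset.map d Finset.univ.val).map
          (fun a => Polynomial.X - Polynomial.C a)).prod.roots :=
        (Polynomial.roots_multiset_prod_X_sub_C _).symm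
    _ = ((Multiset.map l Finset.univ.val).map
          (fun a => Polynomial.X - Polynomial.C a)).prod.roots := by
        rw [Multiset.map_map, Multiset.map_map, ← Finset.prod_eq_multiset_prod,
          ← Finset.prod_eq_multiset_prod]
        simp only [Function.comp]
        rw [hpoly]
    _ = Multiset.map l Finset.univ.val := Polynomial.roots_multiset_prod_X_sub_C _

theorem stmt1 (p : ℕ) (hp : 1 ≤ p) (X : Matrix (Fin p) (Fin p) ℝ) (hX : X.PosDef)
    (U D : Matrix (Fin p) (Fin p) ℝ) (hUD : (U, D) ∈ fiber X) :
    fiber X = { VL | ∃ R P : Matrix (Fin p) (Fin p) ℝ,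
      IsSO R ∧ R * D = D * R ∧ IsEvenSignedPerm P ∧
      VL = (U * R * P⁻¹, P * D * P⁻¹) } := by
  obtain ⟨⟨hUt, hUdet⟩, hDpos, hUDU⟩ := hUD
  have hUUt : U * Uᵀ = 1 := mul_eq_one_comm.mp hUt
  have hDdiag : Matrix.diagonal D.diag = D := hDpos.1.diagonal_diag
  ext VL
  obtain ⟨V, L⟩ := VL
  constructor
  · rintro ⟨⟨hVt, hVdet⟩, hLpos, hVLV⟩
    have hVVt : V * Vᵀ = 1 := mul_eq_one_comm.mp hVt
    have hLdiag : Matrix.diagonal L.diag = L := hLpos.1.diagonal_diag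
    have hX2 : V * L * Vᵀ = U * D * Uᵀ := hVLV.trans hUDU.symm
    have hWtW : (Vᵀ * U)ᵀ * (Vᵀ * U) = 1 := by
      have h1 : (Vᵀ * U)ᵀ * (Vᵀ * U) = Uᵀ * (V * Vᵀ) * U := by
        simp only [Matrix.transpose_mul, Matrix.transpose_transpose]
        noncomm_ring
      rw [h1, hVVt, Matrix.mul_one, hUt]
    have hLW : Matrix.diagonal L.diag = (Vᵀ * U) * Matrix.diagonal D.diag * (Vᵀ * U)ᵀ := by
      rw [hDdiag, hLdiag]
      have h1 : (Vᵀ * U) * D * (Vᵀ * U)ᵀ = Vᵀ * (U * D * Uᵀ) * V := by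
        simp only [Matrix.transpose_mul, Matrix.transpose_transpose]
        noncomm_ring
      rw [h1, ← hX2]
      calc L = (Vᵀ * V) * L * (Vᵀ * V) := by rw [hVt, Matrix.one_mul, Matrix.mul_one]
        _ = Vᵀ * (V * L * Vᵀ) * V := by noncomm_ring
    obtain ⟨σ, hσ⟩ := exists_perm_comp (multiset_eq_of_conj hWtW hLW)
    obtain ⟨ε, hε, hprodsign⟩ : ∃ ε : Fin p → ℝ, (∀ i, ε i = 1 ∨ ε i = -1) ∧
        (∏ i, ε i) * ((Equiv.Perm.sign σ : ℤ) : ℝ) = 1 := by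
      rcases Int.units_eq_one_or (Equiv.Perm.sign σ) with hs | hs
      · exact ⟨fun _ => 1, fun _ => Or.inl rfl, by rw [hs]; simp⟩
      · refine ⟨fun i => if i = (⟨0, hp⟩ : Fin p) then -1 else 1,
          fun i => by by_cases h : i = (⟨0, hp⟩ : Fin p) <;> simp [h], ?_⟩
        rw [hs, Finset.prod_ite_eq' Finset.univ (⟨0, hp⟩ : Fin p) (fun _ => (-1 : ℝ))]
        simp
    set P : Matrix (Fin p) (Fin p) ℝ := Matrix.diagonal ε * σ.permMatrix ℝ with hPdef
    have hPsp : IsSignedPerm P := signedPermMat_isSignedPerm σ ε hε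
    have hdetP : P.det = 1 := by
      rw [hPdef, Matrix.det_mul, Matrix.det_diagonal, Matrix.det_permutation]
      exact_mod_cast hprodsign
    have hPtP : Pᵀ * P = 1 := signedPerm_orth hPsp
    have hPPt : P * Pᵀ = 1 := mul_eq_one_comm.mp hPtP
    have hPinv : P⁻¹ = Pᵀ := Matrix.inv_eq_left_inv hPtP
    have hPDPt : P * D * Pᵀ = L := by
      rw [← hDdiag, hPdef, signedPermMat_conj σ ε hε D.diag, ← hLdiag]
      exact congrArg Matrix.diagonal (funext fun i => congrFun hσ i)
    refine ⟨Uᵀ * V * P, P, ⟨?_, ?_⟩, ?_, ⟨hPsp, hdetP⟩, ?_⟩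
    · have h1 : ((Uᵀ * V) * P)ᵀ * ((Uᵀ * V) * P) = Pᵀ * (Vᵀ * (U * Uᵀ) * V) * P := by
        simp only [Matrix.transpose_mul, Matrix.transpose_transpose]
        noncomm_ring
      rw [Matrix.mul_assoc Uᵀ V P] at h1 ⊢
      rw [h1, hUUt, Matrix.mul_one, hVt, Matrix.mul_one, hPtP]
    · rw [Matrix.det_mul, Matrix.det_mul, Matrix.det_transpose, hUdet, hVdet, hdetP]
      norm_num
    · -- (Uᵀ * V * P) * D = D * (Uᵀ * V * P)
      have hRDRt : (Uᵀ * V * P) * D * (Uᵀ * V * P)ᵀ = D := by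
        have h1 : (Uᵀ * V * P) * D * (Uᵀ * V * P)ᵀ = Uᵀ * (V * (P * D * Pᵀ) * Vᵀ) * U := by
          simp only [Matrix.transpose_mul, Matrix.transpose_transpose]
          noncomm_ring
        rw [h1, hPDPt, hX2]
        calc Uᵀ * (U * D * Uᵀ) * U = (Uᵀ * U) * D * (Uᵀ * U) := by noncomm_ring
          _ = D := by rw [hUt, Matrix.one_mul, Matrix.mul_one]
      have hRtR : (Uᵀ * V * P)ᵀ * (Uᵀ * V * P) = 1 := by
        have h1 : (Uᵀ * V * P)ᵀ * (Uᵀ * V * P) = Pᵀ * (Vᵀ * (U * Uᵀ) * V) * P := by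
          simp only [Matrix.transpose_mul, Matrix.transpose_transpose]
          noncomm_ring
        rw [h1, hUUt, Matrix.mul_one, hVt, Matrix.mul_one, hPtP]
      calc (Uᵀ * V * P) * D
          = (Uᵀ * V * P) * D * ((Uᵀ * V * P)ᵀ * (Uᵀ * V * P)) := by
            rw [hRtR, Matrix.mul_one]
        _ = ((Uᵀ * V * P) * D * (Uᵀ * V * P)ᵀ) * (Uᵀ * V * P) := by noncomm_ring
        _ = D * (Uᵀ * V * P) := by rw [hRDRt]
    · rw [hPinv]
      have hV' : U * (Uᵀ * V * P) * Pᵀ = V := by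
        calc U * (Uᵀ * V * P) * Pᵀ = (U * Uᵀ) * V * (P * Pᵀ) := by noncomm_ring
          _ = V := by rw [hUUt, hPPt, Matrix.one_mul, Matrix.mul_one]
      exact Prod.ext hV'.symm hPDPt.symm
  · rintro ⟨R, P, ⟨hRt, hRdet⟩, hRD, ⟨hPsp, hPdet⟩, heq⟩
    have hPtP : Pᵀ * P = 1 := signedPerm_orth hPsp
    have hPPt : P * Pᵀ = 1 := mul_eq_one_comm.mp hPtP
    have hPinv : P⁻¹ = Pᵀ := Matrix.inv_eq_left_inv hPtP
    have hRRt : R * Rᵀ = 1 := mul_eq_one_comm.mp hRt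
    have hRDRt : R * D * Rᵀ = D := by
      rw [hRD, Matrix.mul_assoc, hRRt, Matrix.mul_one]
    rw [heq, hPinv]
    refine ⟨⟨?_, ?_⟩, ?_, ?_⟩
    · show (U * R * Pᵀ)ᵀ * (U * R * Pᵀ) = 1
      have h1 : (U * R * Pᵀ)ᵀ * (U * R * Pᵀ) = P * (Rᵀ * (Uᵀ * U) * R) * Pᵀ := by
        simp only [Matrix.transpose_mul, Matrix.transpose_transpose]
        noncomm_ring
      rw [h1, hUt, Matrix.mul_one, hRt, Matrix.mul_one, hPPt]
    · show (U * R * Pᵀ).det = 1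
      rw [Matrix.det_mul, Matrix.det_mul, Matrix.det_transpose, hUdet, hRdet, hPdet]
      norm_num
    · show IsPosDiag (P * D * Pᵀ)
      rw [← hDdiag]
      exact signedPerm_conj_posdiag hPsp hDpos.2
    · show (U * R * Pᵀ) * (P * D * Pᵀ) * (U * R * Pᵀ)ᵀ = X
      calc (U * R * Pᵀ) * (P * D * Pᵀ) * (U * R * Pᵀ)ᵀ
          = U * (R * ((Pᵀ * P) * D * (Pᵀ * P)) * Rᵀ) * Uᵀ := by
            simp only [Matrix.transpose_mul, Matrix.transpose_transpose]
            noncomm_ring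
        _ = U * (R * D * Rᵀ) * Uᵀ := by rw [hPtP, Matrix.one_mul, Matrix.mul_one]
        _ = U * D * Uᵀ := by rw [hRDRt]
        _ = X := hUDU
end

section
/- Let p ≥ 1, let X be a p×p SPD matrix, and let (U,D) ∈ E_X. Then E_X = { (U·R·P⁻¹, P·D·P⁻¹) : R ∈ G_D⁰, P an even p×p signed permutation matrix }. -/
open Matrix

section Aux

variable {p : ℕ}

lemma continuous_matdet : Continuous fun A : Matrix (Fin p) (Fin p) ℝ => A.det := by
  simp only [Matrix.det_apply']
  exact continuous_finset_sum _ fun σ _ => continuous_const.mul <|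
    continuous_finset_prod _ fun i _ => (continuous_apply i).comp (continuous_apply (σ i))

lemma vmv_mul (x y z w : Fin p → ℝ) :
    vecMulVec x y * vecMulVec z w = (∑ k, y k * z k) • vecMulVec x w := by
  ext i j
  simp only [mul_apply, vecMulVec_apply, Matrix.smul_apply, smul_eq_mul, Finset.sum_mul]
  exact Finset.sum_congr rfl fun k _ => by ring

lemma vmv_transpose (x y : Fin p → ℝ) : (vecMulVec x y)ᵀ = vecMulVec y x := by
  ext i j; simp [vecMulVec_apply, mul_comm]

lemma vmv_mulVec (x y z : Fin p → ℝ) :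
    vecMulVec x y *ᵥ z = (∑ k, y k * z k) • x := by
  ext i
  simp only [mulVec, dotProduct, vecMulVec_apply, Pi.smul_apply, smul_eq_mul, Finset.sum_mul]
  exact Finset.sum_congr rfl fun k _ => by ring

lemma diag_mul_vmv {D : Matrix (Fin p) (Fin p) ℝ} (hD : D.IsDiag) {x : Fin p → ℝ}
    {lam : ℝ} (hx : ∀ i, x i ≠ 0 → D i i = lam) (y : Fin p → ℝ) :
    D * vecMulVec x y = lam • vecMulVec x y := by
  ext i j
  simp only [mul_apply, vecMulVec_apply, Matrix.smul_apply, smul_eq_mul]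
  rw [Finset.sum_eq_single i (fun k _ hk => by rw [hD (Ne.symm hk)]; ring) (fun h => absurd (Finset.mem_univ i) h)]
  by_cases h : x i = 0
  · simp [h]
  · rw [hx i h]

lemma vmv_mul_diag {D : Matrix (Fin p) (Fin p) ℝ} (hD : D.IsDiag) {y : Fin p → ℝ}
    {lam : ℝ} (hy : ∀ i, y i ≠ 0 → D i i = lam) (x : Fin p → ℝ) :
    vecMulVec x y * D = lam • vecMulVec x y := by
  ext i j
  simp only [mul_apply, vecMulVec_apply, Matrix.smul_apply, smul_eq_mul]
  rw [Finset.sum_eq_single j (fun k _ hk => by rw [hD hk]; ring) (fun h => absurd (Finset.mem_univ j) h)]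
  by_cases h : y j = 0
  · simp [h]
  · rw [hy j h]; ring

lemma isdiag_transpose_eq {D : Matrix (Fin p) (Fin p) ℝ} (hD : D.IsDiag) : Dᵀ = D := by
  ext i j; by_cases h : i = j
  · subst h; rfl
  · rw [transpose_apply, hD h, hD (Ne.symm h)]

/-- `W` is joined to `1` by a path of orthogonal matrices commuting with `D`. -/
def Good (D W : Matrix (Fin p) (Fin p) ℝ) : Prop :=
  ∃ γ : ℝ → Matrix (Fin p) (Fin p) ℝ, ContinuousOn γ (Set.Icc 0 1) ∧ γ 0 = 1 ∧ γ 1 = W ∧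
    ∀ t ∈ Set.Icc (0:ℝ) 1, (γ t)ᵀ * γ t = 1 ∧ γ t * D = D * γ t

lemma good_one (D : Matrix (Fin p) (Fin p) ℝ) : Good D 1 :=
  ⟨fun _ => 1, continuousOn_const, rfl, rfl, fun _ _ => by simp⟩

lemma good_mul {D W₁ W₂ : Matrix (Fin p) (Fin p) ℝ} (h₁ : Good D W₁) (h₂ : Good D W₂) :
    Good D (W₁ * W₂) := by
  obtain ⟨γ₁, hc₁, h0₁, h1₁, hm₁⟩ := h₁
  obtain ⟨γ₂, hc₂, h0₂, h1₂, hm₂⟩ := h₂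
  refine ⟨fun t => γ₁ t * γ₂ t, hc₁.mul hc₂, by show γ₁ 0 * γ₂ 0 = 1; rw [h0₁, h0₂, one_mul],
    by show γ₁ 1 * γ₂ 1 = W₁ * W₂; rw [h1₁, h1₂], fun t ht => ⟨?_, ?_⟩⟩
  · rw [transpose_mul, mul_assoc, ← mul_assoc (γ₁ t)ᵀ, (hm₁ t ht).1, one_mul, (hm₂ t ht).1]
  · rw [mul_assoc, (hm₂ t ht).2, ← mul_assoc, (hm₁ t ht).2, mul_assoc]

lemma good_transpose {D W : Matrix (Fin p) (Fin p) ℝ} (hD : D.IsDiag) (h : Good D W) :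
    Good D Wᵀ := by
  obtain ⟨γ, hc, h0, h1, hm⟩ := h
  refine ⟨fun t => (γ t)ᵀ, ?_, by show (γ 0)ᵀ = 1; rw [h0, transpose_one],
    by show (γ 1)ᵀ = Wᵀ; rw [h1], fun t ht => ⟨?_, ?_⟩⟩
  · exact (Continuous.matrix_transpose continuous_id).comp_continuousOn hc
  · rw [transpose_transpose]; exact mul_eq_one_comm.mp (hm t ht).1
  · have := congrArg Matrix.transpose (hm t ht).2
    rw [transpose_mul, transpose_mul, isdiag_transpose_eq hD] at this
    exact this.symm

lemma good_det_path {D : Matrix (Fin p) (Fin p) ℝ} (γ : ℝ → Matrix (Fin p) (Fin p) ℝ)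
    (hc : ContinuousOn γ (Set.Icc 0 1)) (h0 : γ 0 = 1)
    (hm : ∀ t ∈ Set.Icc (0:ℝ) 1, (γ t)ᵀ * γ t = 1 ∧ γ t * D = D * γ t) :
    ∀ t ∈ Set.Icc (0:ℝ) 1, (γ t).det = 1 := by
  have hsq : ∀ t ∈ Set.Icc (0:ℝ) 1, (γ t).det = 1 ∨ (γ t).det = -1 := by
    intro t ht
    have := congrArg Matrix.det (hm t ht).1
    rw [det_mul, det_transpose, det_one] at this
    exact mul_self_eq_one_iff.mp this
  intro t ht
  rcases hsq t ht with h | h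
  · exact h
  · exfalso
    have hcont : ContinuousOn (fun τ => (γ τ).det) (Set.Icc 0 t) :=
      (continuous_matdet.comp_continuousOn hc).mono
        (Set.Icc_subset_Icc le_rfl ht.2)
    have h0' : (0:ℝ) ∈ Set.Icc ((γ t).det) ((γ 0).det) := by
      rw [h0, det_one, h]; exact ⟨by norm_num, by norm_num⟩
    obtain ⟨τ, hτ, hτ0⟩ := intermediate_value_Icc' ht.1 hcont h0'
    have hτ0' : (γ τ).det = 0 := hτ0
    have := hsq τ ⟨hτ.1, hτ.2.trans ht.2⟩
    rcases this with h' | h' <;> rw [hτ0'] at h' <;> norm_num at h'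

lemma good_mem_GD {D W : Matrix (Fin p) (Fin p) ℝ} (h : Good D W) : W ∈ GD D := by
  obtain ⟨γ, hc, h0, h1, hm⟩ := h
  have h1mem : (1:ℝ) ∈ Set.Icc (0:ℝ) 1 := ⟨zero_le_one, le_rfl⟩
  have hdet := good_det_path γ hc h0 hm 1 h1mem
  rw [h1] at hdet
  refine ⟨⟨?_, hdet⟩, ?_⟩
  · rw [← h1]; exact (hm 1 h1mem).1
  · rw [← h1]; exact (hm 1 h1mem).2

lemma good_mem_GD0 {D W : Matrix (Fin p) (Fin p) ℝ} (h : Good D W) : W ∈ GD0 D := by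
  obtain ⟨γ, hc, h0, h1, hm⟩ := h
  have hmemGD : ∀ t : Set.Icc (0:ℝ) 1, γ t ∈ GD D := by
    intro ⟨t, ht⟩
    exact ⟨⟨(hm t ht).1, good_det_path γ hc h0 hm t ht⟩, (hm t ht).2⟩
  set g : ℝ → ↥(GD D) := fun t =>
    ⟨γ (Set.projIcc (0:ℝ) 1 zero_le_one t), hmemGD _⟩ with hg
  have hgc : Continuous g := by
    refine Continuous.subtype_mk ?_ _
    exact hc.comp_continuous (continuous_subtype_val.comp continuous_projIcc)
      fun x => (Set.projIcc (0:ℝ) 1 zero_le_one x).2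
  have hpre : IsPreconnected (Set.range g) := by
    rw [← Set.image_univ]
    exact isPreconnected_univ.image g hgc.continuousOn
  have hg0 : g 0 = ⟨1, one_mem_GD D⟩ := by
    apply Subtype.ext
    show γ _ = 1
    rw [Set.projIcc_left]; exact h0
  have hg1 : (g 1 : Matrix (Fin p) (Fin p) ℝ) = W := by
    show γ _ = W
    rw [Set.projIcc_right]; exact h1
  have hWmem : W ∈ GD D := good_mem_GD ⟨γ, hc, h0, h1, hm⟩
  refine ⟨hWmem, ?_⟩
  have hsub : Set.range g ⊆ connectedComponent (⟨1, one_mem_GD D⟩ : GD D) := by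
    refine hpre.subset_connectedComponent ?_
    rw [← hg0]; exact ⟨0, rfl⟩
  have : (⟨W, hWmem⟩ : GD D) = g 1 := Subtype.ext hg1.symm
  rw [this]
  exact hsub ⟨1, rfl⟩

section Rot
variable {D : Matrix (Fin p) (Fin p) ℝ} (hD : D.IsDiag) {e u : Fin p → ℝ} {lam : ℝ}
  (he : ∑ i, e i * e i = 1) (hu : ∑ i, u i * u i = 1) (hue : ∑ i, u i * e i = 0)
  (hesupp : ∀ i, e i ≠ 0 → D i i = lam) (husupp : ∀ i, u i ≠ 0 → D i i = lam)

include hD he hu hue hesupp husupp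

lemma rot_mem (a b : ℝ) (hab : a * a + b * b + 2 * b = 0) :
    (1 + a • (vecMulVec u e - vecMulVec e u) + b • (vecMulVec e e + vecMulVec u u))ᵀ *
      (1 + a • (vecMulVec u e - vecMulVec e u) + b • (vecMulVec e e + vecMulVec u u)) = 1 ∧
    (1 + a • (vecMulVec u e - vecMulVec e u) + b • (vecMulVec e e + vecMulVec u u)) * D =
      D * (1 + a • (vecMulVec u e - vecMulVec e u) + b • (vecMulVec e e + vecMulVec u u)) := by
  set K := vecMulVec u e - vecMulVec e u with hK
  set P := vecMulVec e e + vecMulVec u u with hP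
  have heu : ∑ i, e i * u i = 0 := by
    rw [← hue]; exact Finset.sum_congr rfl fun i _ => mul_comm _ _
  have hKK : K * K = -P := by
    rw [hK, hP, sub_mul, mul_sub, mul_sub, vmv_mul, vmv_mul, vmv_mul, vmv_mul,
      heu, hue, he, hu]
    simp only [zero_smul, one_smul]
    abel
  have hKP : K * P = K := by
    rw [hK, hP, sub_mul, mul_add, mul_add, vmv_mul, vmv_mul, vmv_mul, vmv_mul,
      heu, hue, he, hu]
    simp only [zero_smul, one_smul]
    abel
  have hPK : P * K = K := by
    rw [hK, hP, add_mul, mul_sub, mul_sub, vmv_mul, vmv_mul, vmv_mul, vmv_mul,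
      heu, hue, he, hu]
    simp only [zero_smul, one_smul]
    abel
  have hPP : P * P = P := by
    rw [hP, add_mul, mul_add, mul_add, vmv_mul, vmv_mul, vmv_mul, vmv_mul,
      heu, hue, he, hu]
    simp only [zero_smul, one_smul]
    abel
  have hKT : Kᵀ = -K := by
    rw [hK, transpose_sub, vmv_transpose, vmv_transpose]; abel
  have hPT : Pᵀ = P := by
    rw [hP, transpose_add, vmv_transpose, vmv_transpose]
  constructor
  · rw [transpose_add, transpose_add, transpose_one, transpose_smul, transpose_smul, hKT, hPT]
    have h1 : K * (1 + a • K + b • P) = K + a • (-P) + b • K := by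
      rw [mul_add, mul_add, mul_one, mul_smul_comm, mul_smul_comm, hKK, hKP]
    have h2 : P * (1 + a • K + b • P) = P + a • K + b • P := by
      rw [mul_add, mul_add, mul_one, mul_smul_comm, mul_smul_comm, hPK, hPP]
    rw [smul_neg, ← neg_smul, add_mul, add_mul, one_mul, smul_mul_assoc, smul_mul_assoc, h1, h2]
    match_scalars
    all_goals (first | ring1 | linear_combination hab | linear_combination -hab)
  · have hKD : K * D = lam • K := by
      rw [hK, sub_mul, vmv_mul_diag hD hesupp, vmv_mul_diag hD husupp, ← smul_sub]
    have hDK : D * K = lam • K := by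
      rw [hK, mul_sub, diag_mul_vmv hD husupp, diag_mul_vmv hD hesupp, ← smul_sub]
    have hPD : P * D = lam • P := by
      rw [hP, add_mul, vmv_mul_diag hD hesupp, vmv_mul_diag hD husupp, ← smul_add]
    have hDP : D * P = lam • P := by
      rw [hP, mul_add, diag_mul_vmv hD hesupp, diag_mul_vmv hD husupp, ← smul_add]
    simp only [add_mul, mul_add, one_mul, mul_one, smul_mul_assoc, mul_smul_comm,
      hKD, hDK, hPD, hDP]

lemma rotation_good (c s : ℝ) (hcs : c * c + s * s = 1) (hs : 0 ≤ s) :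
    Good D (1 + (-s) • (vecMulVec u e - vecMulVec e u) +
      (c - 1) • (vecMulVec e e + vecMulVec u u)) := by
  set K := vecMulVec u e - vecMulVec e u with hK
  set P := vecMulVec e e + vecMulVec u u with hP
  set θ := Real.arccos c with hθ
  have hc1 : -1 ≤ c := by nlinarith
  have hc2 : c ≤ 1 := by nlinarith
  have hcosθ : Real.cos θ = c := Real.cos_arccos hc1 hc2
  have hsinθ : Real.sin θ = s := by
    rw [hθ, Real.sin_arccos, show 1 - c ^ 2 = s ^ 2 by nlinarith]
    exact Real.sqrt_sq hs
  refine ⟨fun t => 1 + (-(Real.sin (t * θ))) • K + (Real.cos (t * θ) - 1) • P, ?_, ?_, ?_, ?_⟩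
  · apply Continuous.continuousOn
    refine (continuous_const.add ?_).add ?_
    · exact ((Real.continuous_sin.comp (continuous_id.mul continuous_const)).neg).smul
        continuous_const
    · exact ((Real.continuous_cos.comp (continuous_id.mul continuous_const)).sub
        continuous_const).smul continuous_const
  · show 1 + (-(Real.sin (0 * θ))) • K + (Real.cos (0 * θ) - 1) • P = 1
    simp
  · show 1 + (-(Real.sin (1 * θ))) • K + (Real.cos (1 * θ) - 1) • P = _
    rw [one_mul, hcosθ, hsinθ]
  · intro t _
    exact rot_mem hD he hu hue hesupp husupp (-(Real.sin (t * θ))) (Real.cos (t * θ) - 1)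
      (by nlinarith [Real.sin_sq_add_cos_sq (t * θ)])

end Rot

/-- Sign diagonal matrices. -/
def SignDiag (S : Matrix (Fin p) (Fin p) ℝ) : Prop :=
  S.IsDiag ∧ ∀ i, S i i = 1 ∨ S i i = -1

lemma entry_mul_diag {D R : Matrix (Fin p) (Fin p) ℝ} (hD : D.IsDiag) (i j : Fin p) :
    (R * D) i j = R i j * D j j := by
  rw [mul_apply, Finset.sum_eq_single j (fun m _ hm => by rw [hD hm, mul_zero])
    (fun h => absurd (Finset.mem_univ j) h)]

lemma diag_mul_entry {D R : Matrix (Fin p) (Fin p) ℝ} (hD : D.IsDiag) (i j : Fin p) :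
    (D * R) i j = D i i * R i j := by
  rw [mul_apply, Finset.sum_eq_single i (fun m _ hm => by rw [hD (Ne.symm hm), zero_mul])
    (fun h => absurd (Finset.mem_univ i) h)]

lemma commute_entry {D R : Matrix (Fin p) (Fin p) ℝ} (hD : D.IsDiag)
    (h : R * D = D * R) {i j : Fin p} (hij : R i j ≠ 0) : D i i = D j j := by
  have h2 := Matrix.ext_iff.mpr h i j
  rw [entry_mul_diag hD, diag_mul_entry hD] at h2
  have h3 : R i j * D j j = R i j * D i i := by rw [h2]; ring
  exact ((mul_right_inj' hij).mp h3).symm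

lemma col_norm {R : Matrix (Fin p) (Fin p) ℝ} (h : Rᵀ * R = 1) (j : Fin p) :
    ∑ i, R i j * R i j = 1 := by
  have h2 := Matrix.ext_iff.mpr h j j
  rw [mul_apply] at h2
  simpa [transpose_apply, one_apply] using h2

lemma reduce {D : Matrix (Fin p) (Fin p) ℝ} (hD : D.IsDiag) :
    ∀ k : ℕ, ∀ R : Matrix (Fin p) (Fin p) ℝ, Rᵀ * R = 1 → R * D = D * R →
      (∀ j : Fin p, k ≤ j.1 → ∀ i, i ≠ j → R i j = 0) →
      ∃ W S, Good D W ∧ SignDiag S ∧ R = W * S := by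
  intro k
  induction k with
  | zero =>
    intro R horth hcomm hcols
    have hdiag : R.IsDiag := fun i j hij => hcols j (Nat.zero_le _) i hij
    refine ⟨1, R, good_one D, ⟨hdiag, fun i => ?_⟩, (one_mul R).symm⟩
    have h1 := col_norm horth i
    rw [Finset.sum_eq_single i (fun m _ hm => by rw [hdiag hm, zero_mul])
      (fun h => absurd (Finset.mem_univ i) h)] at h1
    exact mul_self_eq_one_iff.mp h1
  | succ k ih =>
    intro R horth hcomm hcols
    by_cases hk : k < p
    swap
    · apply ih R horth hcomm
      intro j hj i hij
      exact absurd (lt_of_le_of_lt hj j.2) hk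
    set j₀ : Fin p := ⟨k, hk⟩ with hj₀
    have hRR : R * Rᵀ = 1 := mul_eq_one_comm.mp horth
    have hrownorm : ∀ i, ∑ j, R i j * R i j = 1 := by
      intro i
      have h2 := Matrix.ext_iff.mpr hRR i i
      rw [mul_apply] at h2
      simpa [transpose_apply, one_apply] using h2
    have hrow : ∀ i : Fin p, k + 1 ≤ i.1 → ∀ j, j ≠ i → R i j = 0 := by
      intro i hi j hj
      have hRii : R i i * R i i = 1 := by
        have h1 := col_norm horth i
        rw [Finset.sum_eq_single i (fun m _ hm => by rw [hcols i hi m hm, zero_mul])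
          (fun h => absurd (Finset.mem_univ i) h)] at h1
        exact h1
      have h4 := Finset.add_sum_erase Finset.univ (fun m => R i m * R i m) (Finset.mem_univ i)
      beta_reduce at h4
      rw [hrownorm i, hRii] at h4
      have h3 : ∑ m ∈ Finset.univ.erase i, R i m * R i m = 0 := by linarith
      have h5 := (Finset.sum_eq_zero_iff_of_nonneg (fun m _ => mul_self_nonneg (R i m))).mp h3 j
        (Finset.mem_erase.2 ⟨hj, Finset.mem_univ j⟩)
      exact mul_self_eq_zero.mp h5
    set v : Fin p → ℝ := fun i => R i j₀ with hv
    have hvnorm : ∑ i, v i * v i = 1 := col_norm horth j₀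
    have hvblk : ∀ i, v i ≠ 0 → D i i = D j₀ j₀ := fun i hi => commute_entry hD hcomm hi
    have hvtop : ∀ i : Fin p, k + 1 ≤ i.1 → v i = 0 := by
      intro i hi
      refine hrow i hi j₀ ?_
      intro h
      rw [← h] at hi
      exact Nat.not_succ_le_self k hi
    by_cases hdone : ∀ i, i ≠ j₀ → v i = 0
    · apply ih R horth hcomm
      intro j hj i hij
      rcases Nat.eq_or_lt_of_le hj with h | h
      · have hjj : j = j₀ := Fin.ext h.symm
        rw [hjj]
        exact hdone i (by rw [← hjj]; exact hij)
      · exact hcols j h i hij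
    · push_neg at hdone
      obtain ⟨i₁, hi₁ne, hi₁⟩ := hdone
      set e : Fin p → ℝ := fun i => if i = j₀ then 1 else 0 with he
      set c : ℝ := v j₀ with hc
      have henorm : ∑ i, e i * e i = 1 := by simp [he]
      have hve : ∑ i, v i * e i = c := by
        rw [he]
        simp [mul_ite, mul_one, mul_zero]
        exact hc.symm
      have hsplit := Finset.add_sum_erase Finset.univ (fun m => v m * v m) (Finset.mem_univ j₀)
      beta_reduce at hsplit
      rw [hvnorm] at hsplit
      have hrest_pos : 0 < ∑ i ∈ Finset.univ.erase j₀, v i * v i :=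
        Finset.sum_pos' (fun m _ => mul_self_nonneg (v m))
          ⟨i₁, Finset.mem_erase.2 ⟨hi₁ne, Finset.mem_univ i₁⟩, mul_self_pos.2 hi₁⟩
      have hc2 : c * c < 1 := by
        have : c * c = v j₀ * v j₀ := rfl
        linarith
      set s : ℝ := Real.sqrt (1 - c * c) with hs
      have hs2 : s * s = 1 - c * c := Real.mul_self_sqrt (by linarith)
      have hspos : 0 < s := Real.sqrt_pos.2 (by linarith)
      set u : Fin p → ℝ := fun i => (v i - c * e i) / s with hu
      have hvdecomp : ∀ i, v i = c * e i + s * u i := by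
        intro i
        rw [hu]
        field_simp
        ring
      have hsum_u : ∑ i, u i * u i = 1 := by
        have h1 : ∀ i, u i * u i = (v i * v i - 2 * c * (v i * e i) + c * c * (e i * e i)) / (s * s) := by
          intro i
          rw [hu]
          field_simp
          ring
        rw [Finset.sum_congr rfl fun i _ => h1 i, ← Finset.sum_div]
        rw [Finset.sum_add_distrib, Finset.sum_sub_distrib, ← Finset.mul_sum, ← Finset.mul_sum,
          hvnorm, hve, henorm, hs2]
        have hne : (1:ℝ) - c * c ≠ 0 := ne_of_gt (by linarith)
        rw [div_eq_one_iff_eq hne]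
        ring
      have hue' : ∑ i, u i * e i = 0 := by
        have h1 : ∀ i, u i * e i = (v i * e i - c * (e i * e i)) / s := by
          intro i
          rw [hu]
          field_simp
        rw [Finset.sum_congr rfl fun i _ => h1 i, ← Finset.sum_div]
        rw [Finset.sum_sub_distrib, ← Finset.mul_sum, hve, henorm]
        simp
      have heblk : ∀ i, e i ≠ 0 → D i i = D j₀ j₀ := by
        intro i hi
        rw [he] at hi
        by_cases hij : i = j₀
        · rw [hij]
        · simp [hij] at hi
      have hublk : ∀ i, u i ≠ 0 → D i i = D j₀ j₀ := by
        intro i hi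
        by_cases hij : i = j₀
        · rw [hij]
        · refine hvblk i ?_
          intro h0
          apply hi
          rw [hu]
          simp only [he]
          rw [if_neg hij, h0]
          simp
      have hutop : ∀ i : Fin p, k + 1 ≤ i.1 → u i = 0 := by
        intro i hi
        have h1 : v i = 0 := hvtop i hi
        have h2 : e i = 0 := by
          rw [he]
          refine if_neg ?_
          intro h
          rw [h] at hi
          exact Nat.not_succ_le_self k hi
        show (v i - c * e i) / s = 0
        rw [h1, h2]
        simp
      have hcs : c * c + s * s = 1 := by rw [hs2]; ring
      have hGW := rotation_good hD henorm hsum_u hue' heblk hublk c s hcs hspos.le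
      set W : Matrix (Fin p) (Fin p) ℝ := 1 + (-s) • (vecMulVec u e - vecMulVec e u) +
        (c - 1) • (vecMulVec e e + vecMulVec u u) with hWdef
      have hWGD := good_mem_GD hGW
      have hWo : Wᵀ * W = 1 := hWGD.1.1
      have hWc : W * D = D * W := hWGD.2
      have hsum_ev : ∑ m, e m * v m = c := by
        rw [← hve]; exact Finset.sum_congr rfl fun m _ => mul_comm _ _
      have hsum_uv : ∑ m, u m * v m = s := by
        have h1 : ∀ m, u m * v m = c * (u m * e m) + s * (u m * u m) := by
          intro m
          rw [hvdecomp m]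
          ring
        rw [Finset.sum_congr rfl fun m _ => h1 m, Finset.sum_add_distrib, ← Finset.mul_sum,
          ← Finset.mul_sum, hue', hsum_u]
        ring
      have hWv : W *ᵥ v = e := by
        rw [hWdef, add_mulVec, add_mulVec, one_mulVec, smul_mulVec, smul_mulVec,
          sub_mulVec, add_mulVec, vmv_mulVec, vmv_mulVec, vmv_mulVec, vmv_mulVec,
          hsum_ev, hsum_uv]
        funext i
        simp only [Pi.add_apply, Pi.smul_apply, Pi.sub_apply, smul_eq_mul]
        have hvi := hvdecomp i
        linear_combination hvi + e i * hcs
      have hcols' : ∀ j : Fin p, k ≤ j.1 → ∀ i, i ≠ j → (W * R) i j = 0 := by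
        intro j hj i hij
        rcases Nat.eq_or_lt_of_le hj with hkj | hkj
        · have hjj : j = j₀ := Fin.ext hkj.symm
          have h1 : (W * R) i j = (W *ᵥ v) i := by
            rw [hjj, mul_apply, mulVec, dotProduct]
          rw [h1, hWv]
          show (if i = j₀ then (1:ℝ) else 0) = 0
          exact if_neg (fun h => hij (h.trans hjj.symm))
        · have hej : e j = 0 := by
            rw [he]
            refine if_neg ?_
            intro h
            rw [h] at hkj
            exact Nat.lt_irrefl k hkj
          have huj : u j = 0 := hutop j hkj
          have hWij : W i j = 0 := by
            rw [hWdef]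
            simp [Matrix.add_apply, Matrix.smul_apply, Matrix.sub_apply, vecMulVec_apply, one_apply_ne hij, hej, huj]
          rw [mul_apply, Finset.sum_eq_single j (fun m _ hm => by rw [hcols j hkj m hm, mul_zero])
            (fun h => absurd (Finset.mem_univ j) h), hWij, zero_mul]
      have hR'orth : (W * R)ᵀ * (W * R) = 1 := by
        rw [transpose_mul, mul_assoc, ← mul_assoc Wᵀ, hWo, one_mul, horth]
      have hR'comm : (W * R) * D = D * (W * R) := by
        rw [mul_assoc, hcomm, ← mul_assoc, hWc, mul_assoc]
      obtain ⟨W', S, hGW', hS, hWRS⟩ := ih (W * R) hR'orth hR'comm hcols'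
      refine ⟨Wᵀ * W', S, good_mul (good_transpose hD hGW) hGW', hS, ?_⟩
      rw [mul_assoc, ← hWRS, ← mul_assoc, hWo, one_mul]

/-- Signed permutation matrix from a permutation and signs. -/
def genPerm (σ : Equiv.Perm (Fin p)) (ε : Fin p → ℝ) : Matrix (Fin p) (Fin p) ℝ :=
  Matrix.of fun i j => if j = σ i then ε i else 0

lemma genPerm_apply (σ : Equiv.Perm (Fin p)) (ε : Fin p → ℝ) (i j : Fin p) :
    genPerm σ ε i j = if j = σ i then ε i else 0 := rfl

lemma genPerm_mul_transpose {σ : Equiv.Perm (Fin p)} {ε : Fin p → ℝ}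
    (hε : ∀ i, ε i * ε i = 1) : genPerm σ ε * (genPerm σ ε)ᵀ = 1 := by
  ext a b
  rw [mul_apply, one_apply]
  by_cases hab : a = b
  · subst hab
    rw [if_pos rfl, Finset.sum_eq_single (σ a)
      (fun m _ hm => by rw [transpose_apply, genPerm_apply, if_neg hm, zero_mul])
      (fun h => absurd (Finset.mem_univ (σ a)) h)]
    simp only [transpose_apply, genPerm_apply, if_pos rfl]
    exact hε a
  · rw [if_neg hab]
    refine Finset.sum_eq_zero fun m _ => ?_
    rw [transpose_apply, genPerm_apply, genPerm_apply]
    by_cases h1 : m = σ a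
    · rw [if_neg (fun h2 : m = σ b => hab (σ.injective (h1.symm.trans h2))), mul_zero]
    · rw [if_neg h1, zero_mul]

lemma isSignedPerm_genPerm {σ : Equiv.Perm (Fin p)} {ε : Fin p → ℝ}
    (hε : ∀ i, ε i = 1 ∨ ε i = -1) : IsSignedPerm (genPerm σ ε) := by
  have hne : ∀ i, ε i ≠ 0 := by
    intro i
    rcases hε i with h | h <;> rw [h] <;> norm_num
  refine ⟨fun i => ⟨σ i, ?_, fun j hj => ?_⟩, fun j => ⟨σ.symm j, ?_, fun i hi => ?_⟩, fun i j => ?_⟩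
  · show genPerm σ ε i (σ i) ≠ 0
    rw [genPerm_apply, if_pos rfl]; exact hne i
  · by_contra h
    exact hj (by rw [genPerm_apply, if_neg h])
  · show genPerm σ ε (σ.symm j) j ≠ 0
    rw [genPerm_apply, if_pos (σ.apply_symm_apply j).symm]
    exact hne _
  · by_contra h
    refine hi ?_
    show genPerm σ ε i j = 0
    rw [genPerm_apply, if_neg]
    intro h2
    exact h (by rw [h2, Equiv.symm_apply_apply])
  · rw [genPerm_apply]
    by_cases h : j = σ i
    · rw [if_pos h]
      rcases hε i with h1 | h1 <;> rw [h1] <;> simp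
    · rw [if_neg h]; left; rfl

lemma genPerm_conj_diag {D : Matrix (Fin p) (Fin p) ℝ} (hD : D.IsDiag)
    {σ : Equiv.Perm (Fin p)} {ε : Fin p → ℝ} (hε : ∀ i, ε i * ε i = 1) :
    genPerm σ ε * D * (genPerm σ ε)ᵀ = Matrix.diagonal (fun a => D (σ a) (σ a)) := by
  ext a b
  rw [mul_apply]
  have h1 : ∀ m, (genPerm σ ε * D) a m = ε a * D (σ a) m := by
    intro m
    rw [mul_apply, Finset.sum_eq_single (σ a)
      (fun n _ hn => by rw [genPerm_apply, if_neg hn, zero_mul])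
      (fun h => absurd (Finset.mem_univ (σ a)) h), genPerm_apply, if_pos rfl]
  rw [Finset.sum_eq_single (σ b)
    (fun m _ hm => by rw [transpose_apply, genPerm_apply, if_neg hm, mul_zero])
    (fun h => absurd (Finset.mem_univ (σ b)) h), h1, transpose_apply, genPerm_apply, if_pos rfl]
  by_cases hab : a = b
  · subst hab
    rw [diagonal_apply_eq]
    linear_combination D (σ a) (σ a) * hε a
  · rw [diagonal_apply_ne _ hab, hD (fun h => hab (σ.injective h)), mul_zero, zero_mul]

lemma diag_mul_genPerm (δ : Fin p → ℝ) (σ : Equiv.Perm (Fin p)) (ε : Fin p → ℝ) :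
    Matrix.diagonal δ * genPerm σ ε = genPerm σ (fun i => δ i * ε i) := by
  ext a b
  rw [mul_apply, Finset.sum_eq_single a
    (fun m _ hm => by rw [diagonal_apply_ne _ (Ne.symm hm), zero_mul])
    (fun h => absurd (Finset.mem_univ a) h), diagonal_apply_eq, genPerm_apply, genPerm_apply]
  by_cases h : b = σ a
  · rw [if_pos h, if_pos h]
  · rw [if_neg h, if_neg h, mul_zero]

lemma signedPerm_eq_genPerm {P : Matrix (Fin p) (Fin p) ℝ} (h : IsSignedPerm P) :
    ∃ (σ : Equiv.Perm (Fin p)) (ε : Fin p → ℝ),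
      (∀ i, ε i = 1 ∨ ε i = -1) ∧ P = genPerm σ ε := by
  choose f hf hfu using h.1
  have hinj : Function.Injective f := by
    intro i₁ i₂ hi
    exact ((h.2.1 (f i₁)).unique (hf i₁) (by rw [hi]; exact hf i₂))
  have hbij : Function.Bijective f := Finite.injective_iff_bijective.mp hinj
  refine ⟨Equiv.ofBijective f hbij, fun i => P i (f i), fun i => ?_, ?_⟩
  · rcases h.2.2 i (f i) with h0 | h1 | h2
    · exact absurd h0 (hf i)
    · left; exact h1
    · right; exact h2
  · ext i j
    rw [genPerm_apply, Equiv.ofBijective_apply]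
    by_cases hj : j = f i
    · rw [if_pos hj, hj]
    · rw [if_neg hj]
      by_contra h0
      exact hj (hfu i j h0)

lemma diag_conj_count {Q L D' : Matrix (Fin p) (Fin p) ℝ} (hQ : Qᵀ * Q = 1)
    (hL : L.IsDiag) (hD : D'.IsDiag) (hQL : Q * L = D' * Q) :
    ∃ σ : Equiv.Perm (Fin p), ∀ j, D' (σ j) (σ j) = L j j := by
  have hQQ : Q * Qᵀ = 1 := mul_eq_one_comm.mp hQ
  have hentry : ∀ i j, Q i j ≠ 0 → L j j = D' i i := by
    intro i j hij
    have h2 := Matrix.ext_iff.mpr hQL i j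
    rw [entry_mul_diag hL, diag_mul_entry hD] at h2
    have h3 : Q i j * L j j = Q i j * D' i i := by rw [h2]; ring
    exact (mul_right_inj' hij).mp h3
  have hcard : ∀ lam : ℝ, Fintype.card {j // L j j = lam} = Fintype.card {i // D' i i = lam} := by
    intro lam
    set χL : Matrix (Fin p) (Fin p) ℝ := Matrix.diagonal (fun j => if L j j = lam then 1 else 0)
      with hχL
    set χD : Matrix (Fin p) (Fin p) ℝ := Matrix.diagonal (fun i => if D' i i = lam then 1 else 0)
      with hχD
    have hcomm : Q * χL = χD * Q := by
      ext i j
      rw [entry_mul_diag (isDiag_diagonal _), diag_mul_entry (isDiag_diagonal _),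
        diagonal_apply_eq, diagonal_apply_eq]
      by_cases hq : Q i j = 0
      · rw [hq, zero_mul, mul_zero]
      · rw [hentry i j hq, mul_comm]
    have htr : χL.trace = χD.trace := by
      have h1 : χD.trace = (χD * (Q * Qᵀ)).trace := by rw [hQQ, mul_one]
      rw [h1, ← mul_assoc, ← hcomm, mul_assoc, trace_mul_comm, mul_assoc, hQ, mul_one]
    have htrL : χL.trace = ((Finset.univ.filter (fun j => L j j = lam)).card : ℝ) := by
      rw [hχL, trace_diagonal]
      simp [Finset.sum_boole]
    have htrD : χD.trace = ((Finset.univ.filter (fun i => D' i i = lam)).card : ℝ) := by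
      rw [hχD, trace_diagonal]
      simp [Finset.sum_boole]
    have hnat : ((Finset.univ.filter (fun j => L j j = lam)).card : ℝ) =
        ((Finset.univ.filter (fun i => D' i i = lam)).card : ℝ) := by
      rw [← htrL, ← htrD]; exact htr
    rw [Fintype.card_subtype, Fintype.card_subtype]
    exact_mod_cast hnat
  have fe : ∀ lam : ℝ, {j // L j j = lam} ≃ {i // D' i i = lam} := fun lam =>
    Fintype.equivOfCardEq (hcard lam)
  refine ⟨(Equiv.sigmaFiberEquiv fun j : Fin p => L j j).symm.trans
    ((Equiv.sigmaCongrRight fe).trans (Equiv.sigmaFiberEquiv fun i : Fin p => D' i i)), ?_⟩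
  intro j
  exact (fe (L j j) ⟨j, rfl⟩).2

lemma mul_cancel_l {A B X : Matrix (Fin p) (Fin p) ℝ} (h : A * B = 1) :
    A * (B * X) = X := by rw [← mul_assoc, h, one_mul]

lemma signdiag_mul_self {S : Matrix (Fin p) (Fin p) ℝ} (hS : SignDiag S) : S * S = 1 := by
  ext i j
  rw [entry_mul_diag hS.1, one_apply]
  by_cases h : i = j
  · subst h
    rw [if_pos rfl]
    rcases hS.2 i with h1 | h1 <;> rw [h1] <;> norm_num
  · rw [if_neg h, hS.1 h, zero_mul]

lemma diag_commute {S D : Matrix (Fin p) (Fin p) ℝ} (hS : S.IsDiag) (hD : D.IsDiag) :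
    S * D = D * S := by
  ext i j
  rw [entry_mul_diag hD, diag_mul_entry hD]
  by_cases h : i = j
  · subst h; ring
  · rw [hS h, zero_mul, mul_zero]

end Aux

theorem stmt2 (p : ℕ) (hp : 1 ≤ p) (X : Matrix (Fin p) (Fin p) ℝ) (hX : X.PosDef)
    (U D : Matrix (Fin p) (Fin p) ℝ) (hUD : (U, D) ∈ fiber X) :
    fiber X = { VL | ∃ R P : Matrix (Fin p) (Fin p) ℝ,
      R ∈ GD0 D ∧ IsEvenSignedPerm P ∧
      VL = (U * R * P⁻¹, P * D * P⁻¹) } := by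
  obtain ⟨hU, hD, hXeq⟩ := hUD
  replace hU : IsSO U := hU
  replace hD : IsPosDiag D := hD
  replace hXeq : U * D * Uᵀ = X := hXeq
  have hUo : Uᵀ * U = 1 := hU.1
  have hUdet : U.det = 1 := hU.2
  have hUUt : U * Uᵀ = 1 := mul_eq_one_comm.mp hUo
  ext VL
  constructor
  · rintro ⟨hV, hL, hprod⟩
    set V := VL.1 with hVdef
    set L := VL.2 with hLdef
    have hVo : Vᵀ * V = 1 := hV.1
    set Q : Matrix (Fin p) (Fin p) ℝ := Uᵀ * V with hQ
    have hQo : Qᵀ * Q = 1 := by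
      rw [hQ, transpose_mul, transpose_transpose, mul_assoc, mul_cancel_l hUUt, hVo]
    have hQdet : Q.det = 1 := by
      rw [hQ, det_mul, det_transpose, hUdet, hV.2, mul_one]
    have hQLQ : Q * L * Qᵀ = D := by
      rw [hQ, transpose_mul, transpose_transpose]
      have h1 : Uᵀ * V * L * (Vᵀ * U) = Uᵀ * ((V * L * Vᵀ) * U) := by simp only [mul_assoc]
      rw [h1, hprod, ← hXeq]
      have h2 : Uᵀ * (U * D * Uᵀ * U) = (Uᵀ * U) * D * (Uᵀ * U) := by simp only [mul_assoc]
      rw [h2, hUo, one_mul, mul_one]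
    have hQL : Q * L = D * Q := by
      have h1 : Q * L * (Qᵀ * Q) = D * Q := by rw [← mul_assoc, hQLQ]
      rwa [hQo, mul_one] at h1
    obtain ⟨σ, hσ⟩ := diag_conj_count hQo hL.1 hD.1 hQL
    have hdet_choice : ∃ ε : Fin p → ℝ, (∀ i, ε i = 1 ∨ ε i = -1) ∧ (genPerm σ ε).det = 1 := by
      have h1 : genPerm σ (fun _ => (1:ℝ)) * (genPerm σ (fun _ => (1:ℝ)))ᵀ = 1 :=
        genPerm_mul_transpose (fun i => one_mul 1)
      have hd2 := congrArg Matrix.det h1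
      rw [det_mul, det_transpose, det_one] at hd2
      rcases mul_self_eq_one_iff.mp hd2 with hd | hd
      · exact ⟨fun _ => 1, fun i => Or.inl rfl, hd⟩
      · set δ : Fin p → ℝ := fun i => if i = (⟨0, hp⟩ : Fin p) then -1 else 1 with hδ
        refine ⟨fun i => δ i * 1, fun i => ?_, ?_⟩
        · by_cases h : i = (⟨0, hp⟩ : Fin p) <;> simp [hδ, h]
        · rw [← diag_mul_genPerm, det_mul, det_diagonal, hd, hδ]
          rw [Finset.prod_ite_eq' Finset.univ (⟨0, hp⟩ : Fin p) (fun _ => (-1:ℝ))]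
          simp
    obtain ⟨ε, hεpm, hεdet⟩ := hdet_choice
    have hεsq : ∀ i, ε i * ε i = 1 := by
      intro i; rcases hεpm i with h | h <;> rw [h] <;> norm_num
    set P : Matrix (Fin p) (Fin p) ℝ := genPerm σ ε with hP
    have hPo : P * Pᵀ = 1 := genPerm_mul_transpose hεsq
    have hPtP : Pᵀ * P = 1 := mul_eq_one_comm.mp hPo
    have hLdiag : L = Matrix.diagonal (fun a => L a a) := by
      ext i j
      by_cases h : i = j
      · subst h; rw [diagonal_apply_eq]
      · rw [diagonal_apply_ne _ h, hL.1 h]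
    have hfunσ : (fun a => D (σ a) (σ a)) = fun a => L a a := funext fun a => hσ a
    have hPDPt : P * D * Pᵀ = L := by
      rw [hP, genPerm_conj_diag hD.1 hεsq, hfunσ, ← hLdiag]
    set R₁ : Matrix (Fin p) (Fin p) ℝ := Q * P with hR₁
    have hR₁o : R₁ᵀ * R₁ = 1 := by
      rw [hR₁, transpose_mul, mul_assoc, mul_cancel_l hQo, hPtP]
    have hR₁DRt : R₁ * D * R₁ᵀ = D := by
      rw [hR₁, transpose_mul]
      have h1 : Q * P * D * (Pᵀ * Qᵀ) = Q * ((P * D * Pᵀ) * Qᵀ) := by simp only [mul_assoc]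
      rw [h1, hPDPt, ← mul_assoc, hQLQ]
    have hR₁comm : R₁ * D = D * R₁ := by
      have h1 : R₁ * D * (R₁ᵀ * R₁) = D * R₁ := by rw [← mul_assoc, hR₁DRt]
      rwa [hR₁o, mul_one] at h1
    have hR₁det : R₁.det = 1 := by rw [hR₁, det_mul, hQdet, hεdet, mul_one]
    obtain ⟨W, S, hGW, hS, hR₁WS⟩ := reduce hD.1 p R₁ hR₁o hR₁comm
      (fun j hj i hij => absurd (lt_of_le_of_lt hj j.2) (lt_irrefl p))
    have hWGD := good_mem_GD hGW
    have hWdet : W.det = 1 := hWGD.1.2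
    have hSdet : S.det = 1 := by
      have h1 := congrArg Matrix.det hR₁WS
      rw [hR₁det, det_mul, hWdet, one_mul] at h1
      exact h1.symm
    have hStS : Sᵀ = S := isdiag_transpose_eq hS.1
    set P' : Matrix (Fin p) (Fin p) ℝ := genPerm σ (fun i => ε i * S (σ i) (σ i)) with hP'
    have hP'pm : ∀ i, ε i * S (σ i) (σ i) = 1 ∨ ε i * S (σ i) (σ i) = -1 := by
      intro i
      rcases hεpm i with h1 | h1 <;> rcases hS.2 (σ i) with h2 | h2 <;> rw [h1, h2] <;> norm_num
    have hP'sq : ∀ i, (ε i * S (σ i) (σ i)) * (ε i * S (σ i) (σ i)) = 1 := by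
      intro i; rcases hP'pm i with h | h <;> rw [h] <;> norm_num
    have hPS : P * S = P' := by
      ext i j
      rw [entry_mul_diag hS.1, hP, hP', genPerm_apply, genPerm_apply]
      by_cases h : j = σ i
      · rw [if_pos h, if_pos h, h]
      · rw [if_neg h, if_neg h, zero_mul]
    have hP'o : P' * P'ᵀ = 1 := genPerm_mul_transpose hP'sq
    have hP'inv : P'⁻¹ = P'ᵀ := inv_eq_right_inv hP'o
    have hP'det : P'.det = 1 := by
      rw [← hPS, det_mul, hεdet, hSdet, mul_one]
    have hP'DPt : P' * D * P'ᵀ = L := by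
      rw [hP', genPerm_conj_diag hD.1 hP'sq, hfunσ, ← hLdiag]
    refine ⟨W, P', good_mem_GD0 hGW, ⟨isSignedPerm_genPerm hP'pm, hP'det⟩, ?_⟩
    have hVLpair : VL = (V, L) := rfl
    rw [hVLpair, Prod.ext_iff]
    constructor
    · show V = U * W * P'⁻¹
      rw [hP'inv, ← hPS, transpose_mul, hStS]
      rw [mul_assoc, ← mul_assoc W S, ← hR₁WS, hR₁]
      rw [mul_assoc Q, hPo, mul_one, hQ, mul_cancel_l hUUt]
    · show L = P' * D * P'⁻¹
      rw [hP'inv, hP'DPt]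
  · rintro ⟨R, P, hR, hP, hVL⟩
    obtain ⟨hRGD, -⟩ := hR
    have hRo : Rᵀ * R = 1 := hRGD.1.1
    have hRdet : R.det = 1 := hRGD.1.2
    have hRcomm : R * D = D * R := hRGD.2
    have hRRt : R * Rᵀ = 1 := mul_eq_one_comm.mp hRo
    obtain ⟨σ, ε, hεpm, hPg⟩ := signedPerm_eq_genPerm hP.1
    have hεsq : ∀ i, ε i * ε i = 1 := by
      intro i; rcases hεpm i with h | h <;> rw [h] <;> norm_num
    have hPo : P * Pᵀ = 1 := by rw [hPg]; exact genPerm_mul_transpose hεsq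
    have hPtP : Pᵀ * P = 1 := mul_eq_one_comm.mp hPo
    have hPinv : P⁻¹ = Pᵀ := inv_eq_right_inv hPo
    have hPDPt : P * D * Pᵀ = Matrix.diagonal (fun a => D (σ a) (σ a)) := by
      rw [hPg]; exact genPerm_conj_diag hD.1 hεsq
    rw [hVL, hPinv]
    refine ⟨⟨?_, ?_⟩, ⟨?_, ?_⟩, ?_⟩
    · show (U * R * Pᵀ)ᵀ * (U * R * Pᵀ) = 1
      rw [transpose_mul, transpose_mul, transpose_transpose]
      have h1 : P * (Rᵀ * Uᵀ) * (U * R * Pᵀ) = P * (Rᵀ * ((Uᵀ * U) * (R * Pᵀ))) := by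
        simp only [mul_assoc]
      rw [h1, hUo, one_mul, mul_cancel_l hRo, hPo]
    · show (U * R * Pᵀ).det = 1
      rw [det_mul, det_mul, det_transpose, hUdet, hRdet, hP.2]
      norm_num
    · show (P * D * Pᵀ).IsDiag
      rw [hPDPt]; exact isDiag_diagonal _
    · show ∀ i, 0 < (P * D * Pᵀ) i i
      intro i
      rw [hPDPt, diagonal_apply_eq]
      exact hD.2 (σ i)
    · show (U * R * Pᵀ) * (P * D * Pᵀ) * (U * R * Pᵀ)ᵀ = X
      rw [transpose_mul, transpose_mul, transpose_transpose]
      have h1 : U * R * Pᵀ * (P * D * Pᵀ) * (P * (Rᵀ * Uᵀ)) =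
          U * (R * ((Pᵀ * P) * (D * ((Pᵀ * P) * (Rᵀ * Uᵀ))))) := by
        simp only [mul_assoc]
      rw [h1, hPtP, one_mul, one_mul]
      have h2 : R * (D * (Rᵀ * Uᵀ)) = R * D * (Rᵀ * Uᵀ) := by rw [mul_assoc]
      rw [h2, hRcomm, mul_assoc, mul_cancel_l hRRt, ← mul_assoc, hXeq]
end

section
/- Let X and Y be p×p SPD matrices. The stabilizer subgroups G_X = {U ∈ SO(p) : U·X·Uᵀ = X} and G_Y = {U ∈ SO(p) : U·Y·Uᵀ = Y} are conjugate subgroups of SO(p) (i.e., G_Y = Q·G_X·Q⁻¹ for some Q ∈ SO(p)) if and only if X and Y have the same eigenvalue-multiplicity type, i.e., the multiset of multiplicities { dim ker(X − μ·I) : μ an eigenvalue of X } equals the multiset { dim ker(Y − μ·I) : μ an eigenvalue of Y }. -/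
open Matrix

namespace SR

open Finset


variable {p : ℕ}

abbrev Mat (p : ℕ) := Matrix (Fin p) (Fin p) ℝ

def stab (X : Mat p) : Set (Mat p) := { V | IsSO V ∧ V * X * Vᵀ = X }





noncomputable def mult (X : Mat p) (μ : ℝ) : ℕ :=
  Module.finrank ℝ (LinearMap.ker (Matrix.toLin' (X - μ • 1)))

lemma toLin'_eq_mulVecLin (M : Mat p) : Matrix.toLin' M = M.mulVecLin :=
  LinearMap.ext fun v => by rw [Matrix.toLin'_apply, Matrix.mulVecLin_apply]

lemma mult_add_rank (M : Mat p) (μ : ℝ) : mult M μ + (M - μ • 1).rank = p := by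
  rw [mult, toLin'_eq_mulVecLin, Matrix.rank, Nat.add_comm]
  rw [LinearMap.finrank_range_add_finrank_ker (M - μ • 1).mulVecLin]
  exact Module.finrank_fin_fun ℝ

lemma mult_le (M : Mat p) (μ : ℝ) : mult M μ ≤ p := by
  have := mult_add_rank M μ; omega

lemma isUnit_det_of_orth {U : Mat p} (hU : Uᵀ * U = 1) : IsUnit U.det := by
  have h : U.det * U.det = 1 := by
    have := congrArg Matrix.det hU
    rwa [Matrix.det_mul, Matrix.det_transpose, Matrix.det_one] at this
  exact IsUnit.of_mul_eq_one _ h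

lemma det_eq_one_or_neg_one_of_orth {U : Mat p} (hU : Uᵀ * U = 1) :
    U.det = 1 ∨ U.det = -1 := by
  have h : U.det * U.det = 1 := by
    have := congrArg Matrix.det hU
    rwa [Matrix.det_mul, Matrix.det_transpose, Matrix.det_one] at this
  exact mul_self_eq_one_iff.mp h

lemma conj_sub_smul_one (U : Mat p) (hU : Uᵀ * U = 1) (M : Mat p) (μ : ℝ) :
    U * M * Uᵀ - μ • 1 = U * (M - μ • 1) * Uᵀ := by
  have hU' : U * Uᵀ = 1 := mul_eq_one_comm.mp hU
  rw [Matrix.mul_sub, Matrix.sub_mul]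
  congr 1
  rw [Matrix.mul_smul, Matrix.smul_mul, Matrix.mul_one, hU']

lemma mult_conj (U : Mat p) (hU : Uᵀ * U = 1) (M : Mat p) (μ : ℝ) :
    mult (U * M * Uᵀ) μ = mult M μ := by
  have h1 := mult_add_rank (U * M * Uᵀ) μ
  have h2 := mult_add_rank M μ
  rw [conj_sub_smul_one U hU M μ] at h1
  have hUdet := isUnit_det_of_orth hU
  have hUtdet : IsUnit Uᵀ.det := by rwa [Matrix.det_transpose]
  rw [Matrix.rank_mul_eq_left_of_isUnit_det Uᵀ (U * (M - μ • 1)) hUtdet,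
    Matrix.rank_mul_eq_right_of_isUnit_det U (M - μ • 1) hUdet] at h1
  omega

lemma mult_diagonal (d : Fin p → ℝ) (μ : ℝ) :
    mult (diagonal d) μ = (univ.filter fun i => d i = μ).card := by
  classical
  have h1 : diagonal d - μ • 1 = diagonal (fun i => d i - μ) := by
    ext i j
    rcases eq_or_ne i j with rfl | h
    · simp [Matrix.diagonal_apply_eq, Matrix.one_apply]
    · simp [Matrix.diagonal_apply_ne _ h, Matrix.one_apply_ne h]
  have h2 := mult_add_rank (diagonal d) μ
  rw [h1, Matrix.rank_diagonal] at h2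
  rw [Fintype.card_subtype] at h2
  have h3 := Finset.card_filter_add_card_filter_not
    (s := (univ : Finset (Fin p))) (p := fun i => d i = μ)
  have h4 : (univ.filter fun i => ¬ d i = μ).card = (univ.filter fun i => d i - μ ≠ 0).card := by
    apply Finset.card_bij (fun a _ => a) <;> simp [sub_ne_zero]
  simp only [Finset.card_univ, Fintype.card_fin] at h3
  omega






lemma orth_mul {U V : Mat p} (hU : Uᵀ * U = 1) (hV : Vᵀ * V = 1) :
    (U * V)ᵀ * (U * V) = 1 := by
  rw [Matrix.transpose_mul]
  calc Vᵀ * Uᵀ * (U * V) = Vᵀ * (Uᵀ * U) * V := by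
        simp only [Matrix.mul_assoc]
    _ = 1 := by rw [hU, Matrix.mul_one, hV]

lemma stab_conj (U Z : Mat p) (hU : Uᵀ * U = 1) :
    stab (U * Z * Uᵀ) = (fun W => U * W * Uᵀ) '' stab Z := by
  have hU' : U * Uᵀ = 1 := mul_eq_one_comm.mp hU
  have cUtU : ∀ M : Mat p, M * Uᵀ * U = M := fun M => by
    rw [Matrix.mul_assoc, hU, Matrix.mul_one]
  have cUUt : ∀ M : Mat p, M * U * Uᵀ = M := fun M => by
    rw [Matrix.mul_assoc, hU', Matrix.mul_one]
  ext V
  constructor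
  · rintro ⟨⟨hVo, hVd⟩, hVZ⟩
    refine ⟨Uᵀ * V * U, ⟨⟨?_, ?_⟩, ?_⟩, ?_⟩
    · exact orth_mul (orth_mul (show (Uᵀ)ᵀ * Uᵀ = 1 by
        rwa [Matrix.transpose_transpose]) hVo) hU
    · rw [Matrix.det_mul, Matrix.det_mul, Matrix.det_transpose, hVd, mul_one]
      have := congrArg Matrix.det hU'
      rwa [Matrix.det_mul, Matrix.det_transpose, Matrix.det_one] at this
    · -- (Uᵀ V U) Z (Uᵀ V U)ᵀ = Z
      rw [Matrix.transpose_mul, Matrix.transpose_mul, Matrix.transpose_transpose]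
      have expand : Uᵀ * V * U * Z * (Uᵀ * (Vᵀ * U)) = Uᵀ * (V * (U * Z * Uᵀ) * Vᵀ) * U := by
        simp only [Matrix.mul_assoc]
      rw [expand, hVZ]
      calc Uᵀ * (U * Z * Uᵀ) * U = (Uᵀ * U) * Z * (Uᵀ * U) := by simp only [Matrix.mul_assoc]
        _ = Z := by rw [hU, Matrix.one_mul, Matrix.mul_one]
    · show U * (Uᵀ * V * U) * Uᵀ = V
      calc U * (Uᵀ * V * U) * Uᵀ = (U * Uᵀ) * V * (U * Uᵀ) := by simp only [Matrix.mul_assoc]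
        _ = V := by rw [hU', Matrix.one_mul, Matrix.mul_one]
  · rintro ⟨W, ⟨⟨hWo, hWd⟩, hWZ⟩, rfl⟩
    refine ⟨⟨?_, ?_⟩, ?_⟩
    · exact orth_mul (orth_mul hU hWo) (by rwa [Matrix.transpose_transpose])
    · rw [Matrix.det_mul, Matrix.det_mul, Matrix.det_transpose, hWd, mul_one]
      have := congrArg Matrix.det hU'
      rwa [Matrix.det_mul, Matrix.det_transpose, Matrix.det_one] at this
    · rw [Matrix.transpose_mul, Matrix.transpose_mul, Matrix.transpose_transpose]
      calc U * W * Uᵀ * (U * Z * Uᵀ) * (U * (Wᵀ * Uᵀ))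
            = U * W * (Uᵀ * U) * Z * (Uᵀ * U) * Wᵀ * Uᵀ := by simp only [Matrix.mul_assoc]
        _ = U * (W * Z * Wᵀ) * Uᵀ := by rw [hU]; simp only [Matrix.mul_one, Matrix.mul_assoc]
        _ = U * Z * Uᵀ := by rw [hWZ]

lemma mem_stab_conj_iff (U Z : Mat p) (hU : Uᵀ * U = 1) (V : Mat p) :
    V ∈ stab (U * Z * Uᵀ) ↔ Uᵀ * V * U ∈ stab Z := by
  have hU' : U * Uᵀ = 1 := mul_eq_one_comm.mp hU
  rw [stab_conj U Z hU]
  constructor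
  · rintro ⟨W, hW, rfl⟩
    have : Uᵀ * (U * W * Uᵀ) * U = W := by
      calc Uᵀ * (U * W * Uᵀ) * U = (Uᵀ * U) * W * (Uᵀ * U) := by simp only [Matrix.mul_assoc]
        _ = W := by rw [hU, Matrix.one_mul, Matrix.mul_one]
    rwa [this]
  · intro h
    refine ⟨Uᵀ * V * U, h, ?_⟩
    calc U * (Uᵀ * V * U) * Uᵀ = (U * Uᵀ) * V * (U * Uᵀ) := by simp only [Matrix.mul_assoc]
      _ = V := by rw [hU', Matrix.one_mul, Matrix.mul_one]

lemma image_conj_comp (A B : Mat p) (s : Set (Mat p)) :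
    (fun W => A * W * Aᵀ) '' ((fun W => B * W * Bᵀ) '' s) =
      (fun W => (A * B) * W * (A * B)ᵀ) '' s := by
  rw [← Set.image_comp]
  apply Set.image_congr
  intro W _
  show A * (B * W * Bᵀ) * Aᵀ = (A * B) * W * (A * B)ᵀ
  rw [Matrix.transpose_mul]
  simp only [Matrix.mul_assoc]

lemma mem_stab_diag_iff (f : Fin p → ℝ) (V : Mat p) :
    V ∈ stab (diagonal f) ↔ IsSO V ∧ ∀ i j, V i j = 0 ∨ f i = f j := by
  constructor
  · rintro ⟨hV, hVD⟩
    refine ⟨hV, fun i j => ?_⟩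
    have hcomm : V * diagonal f = diagonal f * V := by
      have := congrArg (fun M => M * V) hVD
      calc V * diagonal f = V * diagonal f * (Vᵀ * V) := by rw [hV.1, Matrix.mul_one]
        _ = (V * diagonal f * Vᵀ) * V := by simp only [Matrix.mul_assoc]
        _ = diagonal f * V := by rw [hVD]
    have := congrArg (fun M => M i j) hcomm
    simp only [Matrix.mul_diagonal, Matrix.diagonal_mul] at this
    rcases eq_or_ne (V i j) 0 with h | h
    · exact Or.inl h
    · right
      have h2 : V i j * f j = V i j * f i := by rw [this, mul_comm]
      exact (mul_left_cancel₀ h h2).symm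
  · rintro ⟨hV, hf⟩
    refine ⟨hV, ?_⟩
    have hcomm : V * diagonal f = diagonal f * V := by
      ext i j
      simp only [Matrix.mul_diagonal, Matrix.diagonal_mul]
      rcases hf i j with h | h
      · rw [h, zero_mul, mul_zero]
      · rw [h, mul_comm]
    have hV' : V * Vᵀ = 1 := mul_eq_one_comm.mp hV.1
    calc V * diagonal f * Vᵀ = diagonal f * (V * Vᵀ) := by
          rw [hcomm]; simp only [Matrix.mul_assoc]
      _ = diagonal f := by rw [hV', Matrix.mul_one]

lemma stab_diag_pattern {d e : Fin p → ℝ} (h : ∀ i j, d i = d j ↔ e i = e j) :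
    stab (diagonal d) = stab (diagonal e) := by
  ext V
  rw [mem_stab_diag_iff, mem_stab_diag_iff]
  constructor <;> rintro ⟨hV, hf⟩ <;> refine ⟨hV, fun i j => ?_⟩
  · rcases hf i j with h0 | h0
    · exact Or.inl h0
    · exact Or.inr ((h i j).mp h0)
  · rcases hf i j with h0 | h0
    · exact Or.inl h0
    · exact Or.inr ((h i j).mpr h0)




/-- perm matrix transpose -/
lemma permM_transpose (σ : Equiv.Perm (Fin p)) :
    (σ.permMatrix ℝ)ᵀ = σ⁻¹.permMatrix ℝ := by
  rw [Equiv.Perm.permMatrix, Equiv.Perm.permMatrix, ← PEquiv.toMatrix_symm,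
    ← Equiv.toPEquiv_symm]
  rfl

lemma permM_orth (σ : Equiv.Perm (Fin p)) :
    (σ.permMatrix ℝ)ᵀ * σ.permMatrix ℝ = 1 := by
  rw [permM_transpose, Equiv.Perm.permMatrix, Equiv.Perm.permMatrix,
    ← PEquiv.toMatrix_trans, ← Equiv.toPEquiv_trans]
  have : (σ⁻¹ : Equiv.Perm (Fin p)).trans σ = Equiv.refl (Fin p) := by
    ext x; simp
  rw [this, Equiv.toPEquiv_refl, PEquiv.toMatrix_refl]

lemma permM_conj_diag (σ : Equiv.Perm (Fin p)) (f : Fin p → ℝ) :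
    σ.permMatrix ℝ * diagonal f * (σ.permMatrix ℝ)ᵀ = diagonal (fun i => f (σ i)) := by
  rw [permM_transpose, Equiv.Perm.permMatrix, Equiv.Perm.permMatrix,
    PEquiv.toMatrix_toPEquiv_mul, PEquiv.mul_toMatrix_toPEquiv]
  ext i j
  rcases eq_or_ne i j with rfl | h
  · simp [Matrix.submatrix_apply, Matrix.diagonal_apply, Equiv.Perm.inv_def]
  · have : σ i ≠ σ j := fun hc => h (σ.injective hc)
    simp [Matrix.submatrix_apply, Matrix.diagonal_apply, h, this, Equiv.Perm.inv_def]

/-- sign flip at one coordinate -/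
noncomputable def sgn (i₀ : Fin p) : Mat p :=
  diagonal (fun l => if l = i₀ then (-1 : ℝ) else 1)

lemma sgn_transpose (i₀ : Fin p) : (sgn i₀)ᵀ = sgn i₀ := Matrix.diagonal_transpose _

lemma sgn_orth (i₀ : Fin p) : (sgn i₀)ᵀ * sgn i₀ = 1 := by
  rw [sgn_transpose, sgn, Matrix.diagonal_mul_diagonal]
  have : (fun l => (if l = i₀ then (-1:ℝ) else 1) * (if l = i₀ then (-1:ℝ) else 1))
      = fun _ => (1:ℝ) := by
    funext l; by_cases h : l = i₀ <;> simp [h]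
  rw [this, Matrix.diagonal_one]

lemma sgn_det (i₀ : Fin p) : (sgn i₀).det = -1 := by
  rw [sgn, Matrix.det_diagonal]
  rw [Fintype.prod_ite_eq' i₀ (fun _ => (-1:ℝ))]

lemma sgn_conj_diag (i₀ : Fin p) (f : Fin p → ℝ) :
    sgn i₀ * diagonal f * (sgn i₀)ᵀ = diagonal f := by
  rw [sgn_transpose, sgn, Matrix.diagonal_mul_diagonal, Matrix.diagonal_mul_diagonal]
  ext l m
  rcases eq_or_ne l m with rfl | hlm
  · rw [Matrix.diagonal_apply_eq, Matrix.diagonal_apply_eq]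
    by_cases h : l = i₀ <;> simp [h]
  · rw [Matrix.diagonal_apply_ne _ hlm, Matrix.diagonal_apply_ne _ hlm]

/-- double sign flip -/
noncomputable def sgn2 (i k : Fin p) : Mat p :=
  diagonal (fun l => if l = i ∨ l = k then (-1 : ℝ) else 1)

lemma sgn2_transpose (i k : Fin p) : (sgn2 i k)ᵀ = sgn2 i k := Matrix.diagonal_transpose _

lemma sgn2_orth (i k : Fin p) : (sgn2 i k)ᵀ * sgn2 i k = 1 := by
  rw [sgn2_transpose, sgn2, Matrix.diagonal_mul_diagonal]
  have : (fun l => (if l = i ∨ l = k then (-1:ℝ) else 1) * (if l = i ∨ l = k then (-1:ℝ) else 1))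
      = fun _ => (1:ℝ) := by
    funext l; by_cases h : l = i ∨ l = k <;> simp [h]
  rw [this, Matrix.diagonal_one]

lemma sgn2_det {i k : Fin p} (hik : i ≠ k) : (sgn2 i k).det = 1 := by
  rw [sgn2, Matrix.det_diagonal]
  have : (fun l => if l = i ∨ l = k then (-1:ℝ) else 1)
      = fun l => (if l = i then (-1:ℝ) else 1) * (if l = k then (-1:ℝ) else 1) := by
    funext l
    rcases eq_or_ne l i with rfl | hi
    · simp [hik]
    · rcases eq_or_ne l k with rfl | hk
      · simp [hi]
      · simp [hi, hk]
  rw [this, Finset.prod_mul_distrib,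
    Fintype.prod_ite_eq' i (fun _ => (-1:ℝ)), Fintype.prod_ite_eq' k (fun _ => (-1:ℝ))]
  norm_num

lemma sgn2_conj_diag (i k : Fin p) (f : Fin p → ℝ) :
    sgn2 i k * diagonal f * (sgn2 i k)ᵀ = diagonal f := by
  rw [sgn2_transpose, sgn2, Matrix.diagonal_mul_diagonal, Matrix.diagonal_mul_diagonal]
  ext l m
  rcases eq_or_ne l m with rfl | hlm
  · rw [Matrix.diagonal_apply_eq, Matrix.diagonal_apply_eq]
    by_cases h : l = i ∨ l = k <;> simp [h]
  · rw [Matrix.diagonal_apply_ne _ hlm, Matrix.diagonal_apply_ne _ hlm]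

lemma diag_conj_apply (s : Fin p → ℝ) (A : Mat p) (i j : Fin p) :
    (diagonal s * A * (diagonal s)ᵀ) i j = s i * A i j * s j := by
  rw [Matrix.diagonal_transpose]
  rw [Matrix.mul_diagonal, Matrix.diagonal_mul]


noncomputable def rot (i j : Fin p) : Mat p := (Equiv.swap i j).permMatrix ℝ * sgn i

lemma rot_orth (i j : Fin p) : (rot i j)ᵀ * rot i j = 1 :=
  orth_mul (permM_orth _) (sgn_orth i)

lemma rot_det {i j : Fin p} (hij : i ≠ j) : (rot i j).det = 1 := by
  rw [rot, Matrix.det_mul, Matrix.det_permutation, Equiv.Perm.sign_swap hij, sgn_det]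
  norm_num

lemma rot_conj_diag (i j : Fin p) (f : Fin p → ℝ) :
    rot i j * diagonal f * (rot i j)ᵀ = diagonal (fun l => f (Equiv.swap i j l)) := by
  have h1 : rot i j * diagonal f * (rot i j)ᵀ =
      (Equiv.swap i j).permMatrix ℝ * (sgn i * diagonal f * (sgn i)ᵀ) *
        ((Equiv.swap i j).permMatrix ℝ)ᵀ := by
    rw [rot, Matrix.transpose_mul]
    simp only [Matrix.mul_assoc]
  rw [h1, sgn_conj_diag, permM_conj_diag]

lemma rot_mem_stab_diag_iff {i j : Fin p} (hij : i ≠ j) (f : Fin p → ℝ) :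
    rot i j ∈ stab (diagonal f) ↔ f i = f j := by
  constructor
  · rintro ⟨-, hc⟩
    rw [rot_conj_diag] at hc
    have h2 := congrArg (fun M => M i i) hc
    simp only [Matrix.diagonal_apply_eq, Equiv.swap_apply_left] at h2
    exact h2.symm
  · intro hf
    refine ⟨⟨rot_orth i j, rot_det hij⟩, ?_⟩
    rw [rot_conj_diag]
    have hfun : (fun l => f (Equiv.swap i j l)) = f := by
      funext l
      rcases eq_or_ne l i with rfl | hi
      · rw [Equiv.swap_apply_left]; exact hf.symm
      rcases eq_or_ne l j with rfl | hj
      · rw [Equiv.swap_apply_right]; exact hf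
      · rw [Equiv.swap_apply_of_ne_of_ne hi hj]
    rw [hfun]

lemma backward_core (hp : 3 ≤ p) (d : Fin p → ℝ) (Y : Mat p)
    (hstab : stab (diagonal d) = stab Y) :
    ∃ e : Fin p → ℝ, Y = diagonal e ∧ ∀ i j, d i = d j ↔ e i = e j := by
  have hoff : ∀ i j, i ≠ j → Y i j = 0 := by
    intro i j hij
    have hcard : ({i, j} : Finset (Fin p)).card ≤ 2 := by
      apply le_trans (Finset.card_insert_le _ _)
      simp
    have hne : (({i, j} : Finset (Fin p))ᶜ).Nonempty := by
      rw [← Finset.card_pos, Finset.card_compl]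
      have hcf : Fintype.card (Fin p) = p := Fintype.card_fin p
      omega
    obtain ⟨k, hk⟩ := hne
    rw [Finset.mem_compl] at hk
    simp only [Finset.mem_insert, Finset.mem_singleton, not_or] at hk
    obtain ⟨hki, hkj⟩ := hk
    have hSmem : sgn2 i k ∈ stab (diagonal d) :=
      ⟨⟨sgn2_orth i k, sgn2_det (fun h => hki h.symm)⟩, sgn2_conj_diag i k d⟩
    rw [hstab] at hSmem
    have hS := hSmem.2
    rw [sgn2] at hS
    set s : Fin p → ℝ := fun l => if l = i ∨ l = k then (-1 : ℝ) else 1 with hsdef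
    have hentry : (diagonal s * Y * (diagonal s)ᵀ) i j = Y i j := by rw [hS]
    rw [diag_conj_apply] at hentry
    have hsi : s i = -1 := if_pos (Or.inl rfl)
    have hsj : s j = 1 := if_neg (by push_neg; exact ⟨hij.symm, fun hc => hkj hc.symm⟩)
    rw [hsi, hsj] at hentry
    linarith
  set e : Fin p → ℝ := fun l => Y l l with hedef
  have hY : Y = diagonal e := by
    ext i j
    rcases eq_or_ne i j with rfl | hij
    · rw [Matrix.diagonal_apply_eq]
    · rw [Matrix.diagonal_apply_ne _ hij]; exact hoff i j hij
  refine ⟨e, hY, fun i j => ?_⟩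
  rcases eq_or_ne i j with rfl | hij
  · simp
  constructor
  · intro hd
    have hm := (rot_mem_stab_diag_iff hij d).mpr hd
    rw [hstab, hY] at hm
    exact (rot_mem_stab_diag_iff hij e).mp hm
  · intro he
    have hm := (rot_mem_stab_diag_iff hij e).mpr he
    rw [← hY, ← hstab] at hm
    exact (rot_mem_stab_diag_iff hij d).mp hm

lemma exists_diag_decomp (X : Mat p) (hX : X.IsHermitian) :
    ∃ (U : Mat p) (d : Fin p → ℝ), Uᵀ * U = 1 ∧ X = U * diagonal d * Uᵀ := by
  classical
  refine ⟨(hX.eigenvectorUnitary : Mat p), hX.eigenvalues, ?_, ?_⟩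
  · have h := hX.eigenvectorUnitary.2
    rw [Matrix.mem_unitaryGroup_iff'] at h
    rwa [Matrix.star_eq_conjTranspose, Matrix.conjTranspose_eq_transpose_of_trivial] at h
  · have h := hX.spectral_theorem
    rwa [Unitary.conjStarAlgAut_apply, Matrix.star_eq_conjTranspose, Matrix.conjTranspose_eq_transpose_of_trivial,
      RCLike.ofReal_real_eq_id, Function.id_comp] at h

lemma pattern_ncard {d e : Fin p → ℝ} (h : ∀ i j, d i = d j ↔ e i = e j)
    (m : ℕ) (hm : 0 < m) :
    {μ : ℝ | (univ.filter fun i => d i = μ).card = m}.ncard =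
    {μ : ℝ | (univ.filter fun i => e i = μ).card = m}.ncard := by
  classical
  set cd : ℝ → ℕ := fun μ => (univ.filter fun i => d i = μ).card with hcddef
  set ce : ℝ → ℕ := fun μ => (univ.filter fun i => e i = μ).card with hcedef
  have hcc : ∀ i, cd (d i) = ce (e i) := by
    intro i
    apply Finset.card_bij (fun a _ => a)
    · intro a ha
      rw [Finset.mem_filter] at ha ⊢
      exact ⟨ha.1, (h a i).mp ha.2⟩
    · intro a _ b _ hab
      exact hab
    · intro b hb
      rw [Finset.mem_filter] at hb
      exact ⟨b, Finset.mem_filter.mpr ⟨hb.1, (h b i).mpr hb.2⟩, rfl⟩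
  set f : ℝ → ℝ := fun μ => if hμ : ∃ i, d i = μ then e hμ.choose else 0 with hfdef
  have hf : ∀ i, f (d i) = e i := by
    intro i
    have hex : ∃ k, d k = d i := ⟨i, rfl⟩
    have hch : d hex.choose = d i := hex.choose_spec
    simp only [hfdef, dif_pos hex]
    exact (h _ _).mp hch
  have himg : f '' {μ | cd μ = m} = {ν | ce ν = m} := by
    ext ν
    constructor
    · rintro ⟨μ, hμ, rfl⟩
      simp only [Set.mem_setOf_eq] at hμ ⊢
      have hpos : 0 < cd μ := by omega
      obtain ⟨i, hi⟩ := Finset.card_pos.mp hpos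
      rw [Finset.mem_filter] at hi
      obtain ⟨-, hdi⟩ := hi
      subst hdi
      rw [hf i, ← hcc i]
      exact hμ
    · intro hν
      simp only [Set.mem_setOf_eq] at hν
      have hpos : 0 < ce ν := by omega
      obtain ⟨i, hi⟩ := Finset.card_pos.mp hpos
      rw [Finset.mem_filter] at hi
      obtain ⟨-, hei⟩ := hi
      refine ⟨d i, ?_, by rw [hf i, hei]⟩
      simp only [Set.mem_setOf_eq]
      rw [hcc i, hei]
      exact hν
  have hinj : Set.InjOn f {μ | cd μ = m} := by
    intro μ hμ ν hν hfeq
    simp only [Set.mem_setOf_eq] at hμ hν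
    have hposμ : 0 < cd μ := by omega
    have hposν : 0 < cd ν := by omega
    obtain ⟨i, hi⟩ := Finset.card_pos.mp hposμ
    obtain ⟨j, hj⟩ := Finset.card_pos.mp hposν
    rw [Finset.mem_filter] at hi hj
    obtain ⟨-, hdi⟩ := hi
    obtain ⟨-, hdj⟩ := hj
    subst hdi; subst hdj
    rw [hf i, hf j] at hfeq
    exact (h i j).mpr hfeq
  rw [← himg, Set.ncard_image_of_injOn hinj]

lemma exists_perm (d e : Fin p → ℝ)
    (h : ∀ m : ℕ, 0 < m →
      {μ : ℝ | (univ.filter fun i => d i = μ).card = m}.ncard =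
      {μ : ℝ | (univ.filter fun i => e i = μ).card = m}.ncard) :
    ∃ σ : Equiv.Perm (Fin p), ∀ i j, d i = d j ↔ e (σ i) = e (σ j) := by
  classical
  set cd : ℝ → ℕ := fun μ => (univ.filter fun i => d i = μ).card with hcddef
  set ce : ℝ → ℕ := fun μ => (univ.filter fun i => e i = μ).card with hcedef
  set Td : Finset ℝ := univ.image d with hTddef
  set Te : Finset ℝ := univ.image e with hTedef
  have hmemTd : ∀ μ, 0 < cd μ → μ ∈ Td := by
    intro μ hμ
    obtain ⟨i, hi⟩ := Finset.card_pos.mp hμ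
    rw [Finset.mem_filter] at hi
    exact Finset.mem_image.mpr ⟨i, Finset.mem_univ i, hi.2⟩
  have hmemTe : ∀ ν, 0 < ce ν → ν ∈ Te := by
    intro ν hν
    obtain ⟨i, hi⟩ := Finset.card_pos.mp hν
    rw [Finset.mem_filter] at hi
    exact Finset.mem_image.mpr ⟨i, Finset.mem_univ i, hi.2⟩
  have hposTd : ∀ μ ∈ Td, 0 < cd μ := by
    intro μ hμ
    obtain ⟨i, -, rfl⟩ := Finset.mem_image.mp hμ
    exact Finset.card_pos.mpr ⟨i, Finset.mem_filter.mpr ⟨Finset.mem_univ i, rfl⟩⟩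
  have hposTe : ∀ ν ∈ Te, 0 < ce ν := by
    intro ν hν
    obtain ⟨i, -, rfl⟩ := Finset.mem_image.mp hν
    exact Finset.card_pos.mpr ⟨i, Finset.mem_filter.mpr ⟨Finset.mem_univ i, rfl⟩⟩
  set A : ℕ → Finset ℝ := fun m => Td.filter fun μ => cd μ = m with hAdef
  set B : ℕ → Finset ℝ := fun m => Te.filter fun μ => ce μ = m with hBdef
  have hAB : ∀ m, (A m).card = (B m).card := by
    intro m
    rcases Nat.eq_zero_or_pos m with rfl | hm
    · have hA0 : A 0 = ∅ := Finset.filter_eq_empty_iff.mpr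
        (fun {μ} hμ => by have := hposTd μ hμ; omega)
      have hB0 : B 0 = ∅ := Finset.filter_eq_empty_iff.mpr
        (fun {ν} hν => by have := hposTe ν hν; omega)
      rw [hA0, hB0]
    · have hsA : {μ : ℝ | cd μ = m} = ↑(A m) := by
        ext μ
        simp only [Set.mem_setOf_eq, hAdef, Finset.coe_filter, Set.mem_setOf_eq]
        exact ⟨fun hμ => ⟨hmemTd μ (by omega), hμ⟩, fun hμ => hμ.2⟩
      have hsB : {ν : ℝ | ce ν = m} = ↑(B m) := by
        ext ν
        simp only [Set.mem_setOf_eq, hBdef, Finset.coe_filter, Set.mem_setOf_eq]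
        exact ⟨fun hν => ⟨hmemTe ν (by omega), hν⟩, fun hν => hν.2⟩
      have hh := h m hm
      rw [hsA, hsB, Set.ncard_coe_finset, Set.ncard_coe_finset] at hh
      exact hh
  let Φ : ∀ m : ℕ, (A m : Finset ℝ) ≃ (B m : Finset ℝ) := fun m => Finset.equivOfCardEq (hAB m)
  let φ : ℝ → ℝ := fun μ =>
    if hμ : μ ∈ Td then ((Φ (cd μ)) ⟨μ, Finset.mem_filter.mpr ⟨hμ, rfl⟩⟩ : ℝ) else 0
  have hφmem : ∀ μ (hμ : μ ∈ Td), φ μ ∈ B (cd μ) := by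
    intro μ hμ
    simp only [φ, dif_pos hμ]
    exact Finset.coe_mem _
  have hφTe : ∀ μ ∈ Td, φ μ ∈ Te := fun μ hμ => (Finset.mem_filter.mp (hφmem μ hμ)).1
  have hφce : ∀ μ ∈ Td, ce (φ μ) = cd μ := fun μ hμ => (Finset.mem_filter.mp (hφmem μ hμ)).2
  have hΦcongr : ∀ (m m' : ℕ) (hmm : m = m') (μ : ℝ) (h1 : μ ∈ A m) (h2 : μ ∈ A m'),
      ((Φ m ⟨μ, h1⟩ : ℝ)) = ((Φ m' ⟨μ, h2⟩ : ℝ)) := by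
    intro m m' hmm μ h1 h2
    subst hmm
    rfl
  have hφinj : ∀ μ ∈ Td, ∀ ν ∈ Td, φ μ = φ ν → μ = ν := by
    intro μ hμ ν hν hfeq
    have hm : cd μ = cd ν := by
      have h1 := hφce μ hμ
      have h2 := hφce ν hν
      rw [hfeq] at h1
      omega
    have hμA : μ ∈ A (cd ν) := Finset.mem_filter.mpr ⟨hμ, hm⟩
    have e1 : φ μ = ((Φ (cd ν)) ⟨μ, hμA⟩ : ℝ) := by
      simp only [φ, dif_pos hμ]
      exact hΦcongr _ _ hm μ _ _
    have e2 : φ ν = ((Φ (cd ν)) ⟨ν, Finset.mem_filter.mpr ⟨hν, rfl⟩⟩ : ℝ) := by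
      simp only [φ, dif_pos hν]
    rw [e1, e2] at hfeq
    have := (Φ (cd ν)).injective (Subtype.coe_injective hfeq)
    exact congrArg Subtype.val this
  set F : ℝ → Finset (Fin p) := fun μ => univ.filter fun i => d i = μ with hFdef
  set Fe : ℝ → Finset (Fin p) := fun ν => univ.filter fun i => e i = ν with hFedef
  have hFcard : ∀ μ (hμ : μ ∈ Td), (F μ).card = (Fe (φ μ)).card := fun μ hμ => (hφce μ hμ).symm
  let Ψ : ∀ μ, μ ∈ Td → ((F μ : Finset (Fin p)) ≃ (Fe (φ μ) : Finset (Fin p))) :=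
    fun μ hμ => Finset.equivOfCardEq (hFcard μ hμ)
  have hdTd : ∀ i, d i ∈ Td := fun i => Finset.mem_image.mpr ⟨i, Finset.mem_univ i, rfl⟩
  have hiF : ∀ i, i ∈ F (d i) := fun i => Finset.mem_filter.mpr ⟨Finset.mem_univ i, rfl⟩
  let σ₀ : Fin p → Fin p := fun i => (Ψ (d i) (hdTd i) ⟨i, hiF i⟩ : Fin p)
  have hσe : ∀ i, e (σ₀ i) = φ (d i) := by
    intro i
    have hc := Finset.coe_mem (Ψ (d i) (hdTd i) ⟨i, hiF i⟩)
    exact (Finset.mem_filter.mp hc).2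
  have hΨcongr : ∀ (μ μ' : ℝ) (hmm : μ = μ') (hμ : μ ∈ Td) (hμ' : μ' ∈ Td) (i : Fin p)
      (h1 : i ∈ F μ) (h2 : i ∈ F μ'),
      ((Ψ μ hμ ⟨i, h1⟩ : Fin p)) = ((Ψ μ' hμ' ⟨i, h2⟩ : Fin p)) := by
    intro μ μ' hmm hμ hμ' i h1 h2
    subst hmm
    rfl
  have hσinj : Function.Injective σ₀ := by
    intro i j hij
    have hdij : d i = d j := by
      apply hφinj _ (hdTd i) _ (hdTd j)
      rw [← hσe i, ← hσe j, hij]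
    have hjF : j ∈ F (d i) := by rw [hdij]; exact hiF j
    have e2 : σ₀ j = (Ψ (d i) (hdTd i) ⟨j, hjF⟩ : Fin p) :=
      hΨcongr (d j) (d i) hdij.symm (hdTd j) (hdTd i) j (hiF j) hjF
    rw [e2] at hij
    have := (Ψ (d i) (hdTd i)).injective (Subtype.coe_injective hij)
    exact congrArg Subtype.val this
  refine ⟨Equiv.ofBijective σ₀ (Finite.injective_iff_bijective.mp hσinj), fun i j => ?_⟩
  show d i = d j ↔ e (σ₀ i) = e (σ₀ j)
  rw [hσe i, hσe j]
  constructor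
  · intro hd
    rw [hd]
  · intro hφeq
    exact hφinj _ (hdTd i) _ (hdTd j) hφeq

lemma det_sq_of_orth {U : Mat p} (hU : Uᵀ * U = 1) : U.det * U.det = 1 := by
  have h := congrArg Matrix.det hU
  rwa [Matrix.det_mul, Matrix.det_transpose, Matrix.det_one] at h

lemma conj_cancel (U : Mat p) (hU : Uᵀ * U = 1) (M : Mat p) :
    Uᵀ * (U * M * Uᵀ) * U = M := by
  calc Uᵀ * (U * M * Uᵀ) * U = (Uᵀ * U) * M * (Uᵀ * U) := by simp only [Matrix.mul_assoc]
    _ = M := by rw [hU, Matrix.one_mul, Matrix.mul_one]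

lemma permM_conj_apply (σ : Equiv.Perm (Fin p)) (M : Mat p) (a b : Fin p) :
    (σ.permMatrix ℝ * M * (σ.permMatrix ℝ)ᵀ) a b = M (σ a) (σ b) := by
  rw [permM_transpose, Equiv.Perm.permMatrix, Equiv.Perm.permMatrix,
    PEquiv.toMatrix_toPEquiv_mul, PEquiv.mul_toMatrix_toPEquiv]
  simp [Matrix.submatrix_apply, Equiv.Perm.inv_def]

lemma rot_conj_apply (i j : Fin p) (A : Mat p) (a b : Fin p) :
    (rot i j * A * (rot i j)ᵀ) a b =
      (if Equiv.swap i j a = i then (-1 : ℝ) else 1) *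
        A (Equiv.swap i j a) (Equiv.swap i j b) *
        (if Equiv.swap i j b = i then (-1 : ℝ) else 1) := by
  have h1 : rot i j * A * (rot i j)ᵀ =
      (Equiv.swap i j).permMatrix ℝ * (sgn i * A * (sgn i)ᵀ) *
        ((Equiv.swap i j).permMatrix ℝ)ᵀ := by
    rw [rot, Matrix.transpose_mul]
    simp only [Matrix.mul_assoc]
  rw [h1, permM_conj_apply]
  rw [sgn, diag_conj_apply]

lemma mult_decomp {U : Mat p} (hU : Uᵀ * U = 1) {d : Fin p → ℝ} {X : Mat p}
    (hX : X = U * diagonal d * Uᵀ) (μ : ℝ) :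
    mult X μ = (univ.filter fun i => d i = μ).card := by
  rw [hX, mult_conj U hU, mult_diagonal]

lemma forward (X Y : Mat p) (hXH : X.IsHermitian) (hYH : Y.IsHermitian)
    (h : ∀ m : ℕ, 0 < m →
      {μ : ℝ | mult X μ = m}.ncard = {μ : ℝ | mult Y μ = m}.ncard) :
    ∃ Q : Mat p, IsSO Q ∧ stab Y = (fun W => Q * W * Q⁻¹) '' stab X := by
  classical
  obtain ⟨UX, d, hUX, hXd⟩ := exists_diag_decomp X hXH
  obtain ⟨UY, e, hUY, hYe⟩ := exists_diag_decomp Y hYH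
  have hfib : ∀ m : ℕ, 0 < m →
      {μ : ℝ | (univ.filter fun i => d i = μ).card = m}.ncard =
      {μ : ℝ | (univ.filter fun i => e i = μ).card = m}.ncard := by
    intro m hm
    have h1 : {μ : ℝ | mult X μ = m} =
        {μ : ℝ | (univ.filter fun i => d i = μ).card = m} := by
      ext μ
      rw [Set.mem_setOf_eq, Set.mem_setOf_eq, mult_decomp hUX hXd]
    have h2 : {μ : ℝ | mult Y μ = m} =
        {μ : ℝ | (univ.filter fun i => e i = μ).card = m} := by
      ext μ
      rw [Set.mem_setOf_eq, Set.mem_setOf_eq, mult_decomp hUY hYe]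
    rw [← h1, ← h2]
    exact h m hm
  obtain ⟨σ, hσ⟩ := exists_perm d e hfib
  have hpat : ∀ i j, d (σ⁻¹ i) = d (σ⁻¹ j) ↔ e i = e j := by
    intro i j
    have hh := hσ (σ⁻¹ i) (σ⁻¹ j)
    rwa [Equiv.Perm.inv_def, Equiv.apply_symm_apply, Equiv.apply_symm_apply] at hh
  set P : Mat p := (σ⁻¹ : Equiv.Perm (Fin p)).permMatrix ℝ with hPdef
  have hPo : Pᵀ * P = 1 := permM_orth _
  have hUXt : (UXᵀ)ᵀ * UXᵀ = 1 := by
    rw [Matrix.transpose_transpose]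
    exact mul_eq_one_comm.mp hUX
  have hMo : ((UY * P) * UXᵀ)ᵀ * ((UY * P) * UXᵀ) = 1 :=
    orth_mul (orth_mul hUY hPo) hUXt
  obtain ⟨S, hSo, hS2, hdetS⟩ : ∃ S : Mat p, Sᵀ * S = 1 ∧
      S * diagonal d * Sᵀ = diagonal d ∧ S.det = ((UY * P) * UXᵀ).det := by
    rcases det_eq_one_or_neg_one_of_orth hMo with hc | hc
    · exact ⟨1, by simp, by simp [Matrix.transpose_one], by rw [hc, Matrix.det_one]⟩
    · have hpne : Nonempty (Fin p) := by
        by_contra h0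
        haveI := not_nonempty_iff.mp h0
        rw [Matrix.det_isEmpty] at hc
        norm_num at hc
      exact ⟨sgn (Classical.arbitrary (Fin p)), sgn_orth _, sgn_conj_diag _ d,
        by rw [sgn_det, hc]⟩
  set Q : Mat p := ((UY * P) * S) * UXᵀ with hQdef
  have hQo : Qᵀ * Q = 1 := orth_mul (orth_mul (orth_mul hUY hPo) hSo) hUXt
  have hQdet : Q.det = 1 := by
    have hexp : Q.det = ((UY * P) * UXᵀ).det * S.det := by
      rw [hQdef]
      simp only [Matrix.det_mul]
      ring
    rw [hexp, hdetS]
    exact det_sq_of_orth hMo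
  have step1 : stab Y = (fun W => UY * W * UYᵀ) '' stab (diagonal e) := by
    rw [hYe]
    exact stab_conj UY _ hUY
  have step2 : stab (diagonal e) = stab (diagonal (fun l => d (σ⁻¹ l))) :=
    (stab_diag_pattern hpat).symm
  have hPdiag : diagonal (fun l => d (σ⁻¹ l)) = P * diagonal d * Pᵀ :=
    (permM_conj_diag σ⁻¹ d).symm
  have step3 : stab (diagonal (fun l => d (σ⁻¹ l))) =
      (fun W => P * W * Pᵀ) '' stab (diagonal d) := by
    rw [hPdiag]
    exact stab_conj P _ hPo
  have step4 : stab (diagonal d) = (fun W => S * W * Sᵀ) '' stab (diagonal d) := by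
    conv_lhs => rw [← hS2]
    exact stab_conj S _ hSo
  have hdd : UXᵀ * X * (UXᵀ)ᵀ = diagonal d := by
    rw [Matrix.transpose_transpose, hXd]
    exact conj_cancel UX hUX (diagonal d)
  have step5 : stab (diagonal d) = (fun W => UXᵀ * W * (UXᵀ)ᵀ) '' stab X := by
    rw [← hdd]
    exact stab_conj UXᵀ X hUXt
  have hmain : stab Y = (fun W => Q * W * Qᵀ) '' stab X := by
    rw [step1, step2, step3, step4, step5, image_conj_comp, image_conj_comp, image_conj_comp]
  have hQinv : Q⁻¹ = Qᵀ := Matrix.inv_eq_left_inv hQo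
  refine ⟨Q, ⟨hQo, hQdet⟩, ?_⟩
  rw [hmain]
  apply Set.image_congr
  intro W _
  rw [hQinv]

lemma backward (X Y : Mat p) (hXH : X.IsHermitian) (hYH : Y.IsHermitian)
    (Q : Mat p) (hQ : IsSO Q)
    (hset : stab Y = (fun W => Q * W * Q⁻¹) '' stab X)
    (m : ℕ) (hm : 0 < m) :
    {μ : ℝ | mult X μ = m}.ncard = {μ : ℝ | mult Y μ = m}.ncard := by
  classical
  have hQinv : Q⁻¹ = Qᵀ := Matrix.inv_eq_left_inv hQ.1
  rw [hQinv] at hset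
  obtain ⟨UX, d, hUX, hXd⟩ := exists_diag_decomp X hXH
  obtain ⟨U, hUdef⟩ : ∃ U : Mat p, U = Q * UX := ⟨_, rfl⟩
  have hUo : Uᵀ * U = 1 := by rw [hUdef]; exact orth_mul hQ.1 hUX
  have hUo' : (Uᵀ)ᵀ * Uᵀ = 1 := by
    rw [Matrix.transpose_transpose]
    exact mul_eq_one_comm.mp hUo
  have hX1 : Q * X * Qᵀ = U * diagonal d * Uᵀ := by
    rw [hXd, hUdef, Matrix.transpose_mul]
    simp only [Matrix.mul_assoc]
  have hstabY : stab Y = stab (U * diagonal d * Uᵀ) := by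
    have h1 : stab (Q * X * Qᵀ) = (fun W => Q * W * Qᵀ) '' stab X := stab_conj Q X hQ.1
    rw [hset, ← h1, hX1]
  obtain ⟨Y1, hY1def⟩ : ∃ Y1 : Mat p, Y1 = Uᵀ * Y * U := ⟨_, rfl⟩
  have hY1conj : Y1 = Uᵀ * Y * (Uᵀ)ᵀ := by
    rw [Matrix.transpose_transpose]
    exact hY1def
  have hYim : stab Y = (fun W => U * W * Uᵀ) '' stab (diagonal d) := by
    rw [hstabY]
    exact stab_conj U _ hUo
  have hstab1 : stab (diagonal d) = stab Y1 := by
    have h2 : stab (Uᵀ * Y * (Uᵀ)ᵀ) = (fun W => Uᵀ * W * (Uᵀ)ᵀ) '' stab Y :=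
      stab_conj Uᵀ Y hUo'
    rw [← hY1conj] at h2
    rw [h2, hYim, ← Set.image_comp]
    have h4 : ((fun W : Mat p => Uᵀ * W * (Uᵀ)ᵀ) ∘ fun W : Mat p => U * W * Uᵀ) = id := by
      funext W
      show Uᵀ * (U * W * Uᵀ) * (Uᵀ)ᵀ = W
      rw [Matrix.transpose_transpose]
      exact conj_cancel U hUo W
    rw [h4, Set.image_id]
  have hYsym : Yᵀ = Y := by
    rw [← Matrix.conjTranspose_eq_transpose_of_trivial]
    exact hYH
  have hY1sym : Y1ᵀ = Y1 := by
    rw [hY1def, Matrix.transpose_mul, Matrix.transpose_mul, Matrix.transpose_transpose, hYsym,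
      Matrix.mul_assoc]
  have hmultY1 : ∀ μ, mult Y1 μ = mult Y μ := by
    intro μ
    rw [hY1conj]
    exact mult_conj Uᵀ hUo' Y μ
  have hmultX : ∀ μ, mult X μ = (univ.filter fun i => d i = μ).card :=
    mult_decomp hUX hXd
  -- Find e with Y's multiplicities given by fibers of e and pattern equivalence
  obtain ⟨e, hmultYe, hpattern⟩ : ∃ e : Fin p → ℝ,
      (∀ μ, mult Y μ = (univ.filter fun i => e i = μ).card) ∧
      (∀ i j, d i = d j ↔ e i = e j) := by
    rcases le_or_gt 3 p with hp3 | hplt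
    · obtain ⟨e, hY1e, hpat⟩ := backward_core hp3 d Y1 hstab1
      refine ⟨e, fun μ => ?_, hpat⟩
      rw [← hmultY1 μ, hY1e, mult_diagonal]
    · -- p ≤ 2
      have hY1H : Y1.IsHermitian := by
        show Y1ᴴ = Y1
        rw [Matrix.conjTranspose_eq_transpose_of_trivial]
        exact hY1sym
      obtain ⟨W, e, hWo, hY1e⟩ := exists_diag_decomp Y1 hY1H
      refine ⟨e, fun μ => by rw [← hmultY1 μ]; exact mult_decomp hWo hY1e μ, ?_⟩
      rcases Nat.lt_or_ge p 2 with hp1 | hp2'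
      · -- p ≤ 1 : all indices equal
        have hall : ∀ i j : Fin p, i = j := by
          intro i j
          have h1 := i.isLt
          have h2 := j.isLt
          apply Fin.ext
          omega
        intro i j
        rw [hall i j]
        exact ⟨fun _ => rfl, fun _ => rfl⟩
      · have hp2 : p = 2 := by omega
        set i0 : Fin p := ⟨0, by omega⟩ with hi0def
        set i1 : Fin p := ⟨1, by omega⟩ with hi1def
        have hne : i0 ≠ i1 := fun hc => absurd (congrArg Fin.val hc) (by norm_num)
        have hcases : ∀ i : Fin p, i = i0 ∨ i = i1 := by
          intro i
          have hil := i.isLt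
          have hv : (i : ℕ) = 0 ∨ (i : ℕ) = 1 := by omega
          rcases hv with hv | hv
          · left; apply Fin.ext; rw [hv]
          · right; apply Fin.ext; rw [hv]
        have hsymE : Y1 i1 i0 = Y1 i0 i1 := by
          have hh := congrArg (fun M => M i0 i1) hY1sym
          simpa [Matrix.transpose_apply] using hh
        have key1 : d i0 = d i1 ↔ e i0 = e i1 := by
          constructor
          · intro hd
            have hmem := (rot_mem_stab_diag_iff hne d).mpr hd
            rw [hstab1] at hmem
            have hR2 := hmem.2
            have h00 : (rot i0 i1 * Y1 * (rot i0 i1)ᵀ) i0 i0 = Y1 i0 i0 := by rw [hR2]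
            have h01 : (rot i0 i1 * Y1 * (rot i0 i1)ᵀ) i0 i1 = Y1 i0 i1 := by rw [hR2]
            rw [rot_conj_apply] at h00 h01
            rw [Equiv.swap_apply_left] at h00 h01
            rw [Equiv.swap_apply_right] at h01
            rw [if_neg (Ne.symm hne)] at h00 h01
            rw [if_pos rfl] at h01
            have hv00 : Y1 i1 i1 = Y1 i0 i0 := by linarith
            have hv01 : Y1 i0 i1 = 0 := by
              rw [hsymE] at h01
              linarith
            set a : ℝ := Y1 i0 i0 with hadef
            have hscal : Y1 = a • (1 : Mat p) := by
              ext x y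
              rcases hcases x with rfl | rfl <;> rcases hcases y with rfl | rfl
              · simp [Matrix.smul_apply, Matrix.one_apply, hadef]
              · simp [Matrix.smul_apply, Matrix.one_apply, hne, hv01]
              · simp [Matrix.smul_apply, Matrix.one_apply, Ne.symm hne]
                rw [hsymE]
                exact hv01
              · simp [Matrix.smul_apply, Matrix.one_apply]
                exact hv00
            have hde : diagonal e = a • (1 : Mat p) := by
              have h1 : Wᵀ * Y1 * W = diagonal e := by
                rw [hY1e]
                exact conj_cancel W hWo (diagonal e)
              rw [hscal] at h1
              rw [← h1]
              calc Wᵀ * (a • 1) * W = a • (Wᵀ * 1 * W) := by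
                    rw [Matrix.mul_smul, Matrix.smul_mul]
                _ = a • (1 : Mat p) := by rw [Matrix.mul_one, hWo]
            have he0 : e i0 = a := by
              have hh := congrArg (fun M => M i0 i0) hde
              simpa [Matrix.diagonal_apply_eq, Matrix.smul_apply, Matrix.one_apply] using hh
            have he1 : e i1 = a := by
              have hh := congrArg (fun M => M i1 i1) hde
              simpa [Matrix.diagonal_apply_eq, Matrix.smul_apply, Matrix.one_apply] using hh
            rw [he0, he1]
          · intro he
            have hecst : ∀ l, e l = e i0 := by
              intro l
              rcases hcases l with rfl | rfl
              · rfl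
              · exact he.symm
            have hdiagE : diagonal e = (e i0) • (1 : Mat p) := by
              ext x y
              rcases eq_or_ne x y with rfl | hxy
              · simp [Matrix.diagonal_apply_eq, Matrix.smul_apply, Matrix.one_apply, hecst x]
              · simp [Matrix.diagonal_apply_ne _ hxy, Matrix.smul_apply, Matrix.one_apply, hxy]
            have hW' : W * Wᵀ = 1 := mul_eq_one_comm.mp hWo
            have hY1scal : Y1 = (e i0) • (1 : Mat p) := by
              rw [hY1e, hdiagE]
              calc W * ((e i0) • 1) * Wᵀ = (e i0) • (W * 1 * Wᵀ) := by
                    rw [Matrix.mul_smul, Matrix.smul_mul]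
                _ = (e i0) • (1 : Mat p) := by rw [Matrix.mul_one, hW']
            have hR' : rot i0 i1 * (rot i0 i1)ᵀ = 1 :=
              mul_eq_one_comm.mp (rot_orth i0 i1)
            have hmem : rot i0 i1 ∈ stab Y1 := by
              refine ⟨⟨rot_orth _ _, rot_det hne⟩, ?_⟩
              rw [hY1scal]
              calc rot i0 i1 * ((e i0) • 1) * (rot i0 i1)ᵀ
                  = (e i0) • (rot i0 i1 * 1 * (rot i0 i1)ᵀ) := by
                    rw [Matrix.mul_smul, Matrix.smul_mul]
                _ = (e i0) • (1 : Mat p) := by rw [Matrix.mul_one, hR']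
            rw [← hstab1] at hmem
            exact (rot_mem_stab_diag_iff hne d).mp hmem
        intro i j
        rcases hcases i with rfl | rfl <;> rcases hcases j with rfl | rfl
        · exact ⟨fun _ => rfl, fun _ => rfl⟩
        · exact key1
        · exact ⟨fun hh => ((key1).mp hh.symm).symm, fun hh => ((key1).mpr hh.symm).symm⟩
        · exact ⟨fun _ => rfl, fun _ => rfl⟩
  have hsX : {μ : ℝ | mult X μ = m} =
      {μ : ℝ | (univ.filter fun i => d i = μ).card = m} := by
    ext μ
    rw [Set.mem_setOf_eq, Set.mem_setOf_eq, hmultX μ]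
  have hsY : {μ : ℝ | mult Y μ = m} =
      {μ : ℝ | (univ.filter fun i => e i = μ).card = m} := by
    ext μ
    rw [Set.mem_setOf_eq, Set.mem_setOf_eq, hmultYe μ]
  rw [hsX, hsY]
  exact pattern_ncard hpattern m hm

end SR

theorem stmt4 (p : ℕ) (X Y : Matrix (Fin p) (Fin p) ℝ)
    (hX : X.PosDef) (hY : Y.PosDef) :
    (∃ Q : Matrix (Fin p) (Fin p) ℝ, IsSO Q ∧
        { V : Matrix (Fin p) (Fin p) ℝ | IsSO V ∧ V * Y * Vᵀ = Y } =
          (fun W => Q * W * Q⁻¹) ''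
            { V : Matrix (Fin p) (Fin p) ℝ | IsSO V ∧ V * X * Vᵀ = X }) ↔
      ∀ m : ℕ, 0 < m →
        Set.ncard { μ : ℝ |
            Module.finrank ℝ (LinearMap.ker (Matrix.toLin' (X - μ • 1))) = m } =
        Set.ncard { μ : ℝ |
            Module.finrank ℝ (LinearMap.ker (Matrix.toLin' (Y - μ • 1))) = m } := by
  have hXH : X.IsHermitian := hX.1
  have hYH : Y.IsHermitian := hY.1
  constructor
  · rintro ⟨Q, hQ, hset⟩ m hm
    have hres := SR.backward X Y hXH hYH Q hQ hset m hm
    simpa [SR.mult] using hres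
  · intro hR
    obtain ⟨Q, hQ, hst⟩ := SR.forward X Y hXH hYH (fun m hm => by
      have hh := hR m hm
      simpa [SR.mult] using hh)
    exact ⟨Q, hQ, hst⟩
end

section
/- Fix a weight k > 0 and let X, Y be 3×3 SPD matrices each having three distinct eigenvalues, with (U,D) ∈ E_X and (V,Λ) ∈ E_Y. Then d_SR(X,Y)² = min{ (k/2)·logdist(U⁻¹·V·P⁻¹)² + ‖Log D − Log(P·Λ·P⁻¹)‖_F² : P an even 3×3 signed permutation matrix }. -/
open Matrix

namespace SRaux

open Matrix

variable {p : ℕ}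

/-- signed permutation matrix from a permutation and signs -/
def mkSP (σ : Equiv.Perm (Fin p)) (ε : Fin p → ℝ) : Matrix (Fin p) (Fin p) ℝ :=
  Matrix.of fun i j => if i = σ j then ε j else 0

def Eps (ε : Fin p → ℝ) : Prop := ∀ i, ε i = 1 ∨ ε i = -1

lemma Eps.sq {ε : Fin p → ℝ} (h : Eps ε) (i : Fin p) : ε i * ε i = 1 := by
  rcases h i with h' | h' <;> rw [h'] <;> ring

lemma Eps.ne_zero {ε : Fin p → ℝ} (h : Eps ε) (i : Fin p) : ε i ≠ 0 := by
  rcases h i with h' | h' <;> rw [h'] <;> norm_num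

lemma mkSP_apply (σ : Equiv.Perm (Fin p)) (ε : Fin p → ℝ) (i j : Fin p) :
    mkSP σ ε i j = if i = σ j then ε j else 0 := rfl

lemma mkSP_mul (σ τ : Equiv.Perm (Fin p)) (ε δ : Fin p → ℝ) :
    mkSP σ ε * mkSP τ δ = mkSP (σ * τ) (fun j => ε (τ j) * δ j) := by
  ext i j
  rw [Matrix.mul_apply]
  rw [Finset.sum_eq_single (τ j)]
  · simp [mkSP_apply]
    rfl
  · intro b _ hb
    simp [mkSP_apply, hb]
  · simp

lemma mkSP_transpose (σ : Equiv.Perm (Fin p)) (ε : Fin p → ℝ) :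
    (mkSP σ ε)ᵀ = mkSP σ⁻¹ (fun j => ε (σ⁻¹ j)) := by
  ext i j
  simp only [Matrix.transpose_apply, mkSP_apply]
  by_cases h : i = σ⁻¹ j
  · subst h; simp
  · rw [if_neg h, if_neg]
    intro hj
    exact h (by simp [hj])

lemma mkSP_one (ε : Fin p → ℝ) : mkSP 1 ε = Matrix.diagonal ε := by
  ext i j
  simp only [mkSP_apply, Matrix.diagonal_apply, Equiv.Perm.one_apply]
  by_cases h : i = j
  · subst h; simp
  · simp [h, Ne.symm h]

lemma mkSP_mul_transpose {σ : Equiv.Perm (Fin p)} {ε : Fin p → ℝ} (hε : Eps ε) :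
    mkSP σ ε * (mkSP σ ε)ᵀ = 1 := by
  rw [mkSP_transpose, mkSP_mul]
  have : (fun j => ε (σ⁻¹ j) * ε (σ⁻¹ j)) = fun _ => (1 : ℝ) := by
    funext j; exact hε.sq _
  rw [this, mul_inv_cancel, mkSP_one, Matrix.diagonal_one]

lemma mkSP_transpose_mul {σ : Equiv.Perm (Fin p)} {ε : Fin p → ℝ} (hε : Eps ε) :
    (mkSP σ ε)ᵀ * mkSP σ ε = 1 := by
  rw [mkSP_transpose, mkSP_mul]
  have : (fun j => ε (σ⁻¹ (σ j)) * ε j) = fun _ => (1 : ℝ) := by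
    funext j; rw [Equiv.Perm.inv_def, Equiv.symm_apply_apply]; exact hε.sq _
  rw [this, inv_mul_cancel, mkSP_one, Matrix.diagonal_one]

/-- conjugation of a diagonal matrix by a signed permutation -/
lemma conj_diag {σ : Equiv.Perm (Fin p)} {ε : Fin p → ℝ} (hε : Eps ε)
    {D : Matrix (Fin p) (Fin p) ℝ} (hD : D.IsDiag) :
    (mkSP σ ε)ᵀ * D * mkSP σ ε = Matrix.diagonal (fun j => D (σ j) (σ j)) := by
  ext i j
  rw [Matrix.mul_apply]
  rw [Finset.sum_eq_single (σ j)]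
  · rw [Matrix.mul_apply, Finset.sum_eq_single (σ i)]
    · simp only [Matrix.transpose_apply, mkSP_apply, if_pos rfl, Matrix.diagonal_apply]
      by_cases h : i = j
      · subst h
        simp only [if_pos rfl, if_true]
        rw [mul_right_comm, hε.sq, one_mul]
      · rw [hD (fun hc => h (σ.injective hc)), if_neg h]; ring
    · intro b _ hb
      simp [mkSP_apply, hb]
    · simp
  · intro b _ hb
    simp [mkSP_apply, hb]
  · simp

lemma isSignedPerm_mkSP {σ : Equiv.Perm (Fin p)} {ε : Fin p → ℝ} (hε : Eps ε) :
    IsSignedPerm (mkSP σ ε) := by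
  refine ⟨fun i => ⟨σ⁻¹ i, ?_, ?_⟩, fun j => ⟨σ j, ?_, ?_⟩, fun i j => ?_⟩
  · simp [mkSP_apply, hε.ne_zero]
  · intro j hj
    simp only [mkSP_apply, ne_eq, ite_eq_right_iff, not_forall] at hj
    rw [hj.1]; simp
  · simp [mkSP_apply, hε.ne_zero]
  · intro i hi
    simp only [mkSP_apply, ne_eq, ite_eq_right_iff, not_forall] at hi
    exact hi.1
  · simp only [mkSP_apply]
    by_cases h : i = σ j
    · rcases hε j with h' | h' <;> simp [h, h']
    · simp [h]

lemma signedPerm_exists {M : Matrix (Fin p) (Fin p) ℝ} (h : IsSignedPerm M) :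
    ∃ (σ : Equiv.Perm (Fin p)) (ε : Fin p → ℝ), Eps ε ∧ M = mkSP σ ε := by
  obtain ⟨hrow, hcol, hval⟩ := h
  choose f hf hf' using hcol
  have hinj : Function.Injective f := by
    intro j j' he
    obtain ⟨w, -, hu⟩ := hrow (f j)
    exact (hu j (hf j)).trans (hu j' (he ▸ hf j')).symm
  have hbij : Function.Bijective f := (Finite.injective_iff_bijective).mp hinj
  refine ⟨Equiv.ofBijective f hbij, fun j => M (f j) j, fun j => ?_, ?_⟩
  · rcases hval (f j) j with h0 | h1 | h2
    · exact absurd h0 (hf j)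
    · exact Or.inl h1
    · exact Or.inr h2
  · ext i j
    simp only [mkSP_apply, Equiv.ofBijective_apply]
    by_cases hij : i = f j
    · subst hij; simp
    · rw [if_neg hij]
      by_contra hne
      exact hij (hf' j i hne)

end SRaux
namespace SRaux

open Matrix

variable {p : ℕ}

lemma frob_nonneg (A : Matrix (Fin p) (Fin p) ℝ) : 0 ≤ frob A := Real.sqrt_nonneg _

lemma frob_sq (A : Matrix (Fin p) (Fin p) ℝ) :
    frob A ^ 2 = ∑ i, ∑ j, (A i j) ^ 2 := by
  rw [frob, Real.sq_sqrt]
  positivity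

lemma frob_eq_frob {A B : Matrix (Fin p) (Fin p) ℝ}
    (h : ∑ i, ∑ j, (A i j) ^ 2 = ∑ i, ∑ j, (B i j) ^ 2) : frob A = frob B := by
  rw [frob, frob, h]

lemma sum_sq_eq_trace (A : Matrix (Fin p) (Fin p) ℝ) :
    ∑ i, ∑ j, (A i j) ^ 2 = Matrix.trace (Aᵀ * A) := by
  rw [Matrix.trace]
  rw [Finset.sum_comm]
  apply Finset.sum_congr rfl
  intro j _
  rw [Matrix.diag_apply, Matrix.mul_apply]
  apply Finset.sum_congr rfl
  intro i _
  rw [Matrix.transpose_apply, sq]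

lemma frob_conj {S : Matrix (Fin p) (Fin p) ℝ} (h1 : Sᵀ * S = 1) (h2 : S * Sᵀ = 1)
    (A : Matrix (Fin p) (Fin p) ℝ) : frob (Sᵀ * A * S) = frob A := by
  apply frob_eq_frob
  rw [sum_sq_eq_trace, sum_sq_eq_trace]
  have : (Sᵀ * A * S)ᵀ * (Sᵀ * A * S) = Sᵀ * (Aᵀ * A) * S := by
    rw [Matrix.transpose_mul, Matrix.transpose_mul, Matrix.transpose_transpose]
    rw [show Sᵀ * (Aᵀ * S) * (Sᵀ * A * S) = Sᵀ * Aᵀ * (S * Sᵀ) * (A * S) by noncomm_ring, h2]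
    noncomm_ring
  rw [this, Matrix.trace_mul_cycle, ← Matrix.mul_assoc, h2, Matrix.one_mul]

lemma frob_diagonal (c : Fin p → ℝ) :
    frob (Matrix.diagonal c) = Real.sqrt (∑ i, (c i) ^ 2) := by
  rw [frob]
  congr 1
  apply Finset.sum_congr rfl
  intro i _
  rw [Finset.sum_eq_single i]
  · simp
  · intro b _ hb
    simp [Matrix.diagonal_apply, Ne.symm hb]
  · simp

lemma logdist_nonneg (Q : Matrix (Fin p) (Fin p) ℝ) : 0 ≤ logdist Q := by
  apply Real.sInf_nonneg
  rintro r ⟨A, -, -, rfl⟩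
  exact frob_nonneg A

lemma logdist_conj_subset {S : Matrix (Fin p) (Fin p) ℝ} (h1 : Sᵀ * S = 1) (h2 : S * Sᵀ = 1)
    (Q : Matrix (Fin p) (Fin p) ℝ) :
    { r | ∃ A : Matrix (Fin p) (Fin p) ℝ,
      Aᵀ = -A ∧ NormedSpace.exp A = Q ∧ r = frob A } ⊆
    { r | ∃ A : Matrix (Fin p) (Fin p) ℝ,
      Aᵀ = -A ∧ NormedSpace.exp A = Sᵀ * Q * S ∧ r = frob A } := by
  rintro r ⟨A, hskew, hexp, rfl⟩
  have hS : IsUnit S := by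
    apply Matrix.isUnit_iff_isUnit_det S |>.mpr
    exact Matrix.isUnit_det_of_left_inverse h1
  have hinv : S⁻¹ = Sᵀ := Matrix.inv_eq_left_inv h1
  refine ⟨Sᵀ * A * S, ?_, ?_, (frob_conj h1 h2 A).symm⟩
  · rw [Matrix.transpose_mul, Matrix.transpose_mul, Matrix.transpose_transpose, hskew]
    simp [Matrix.mul_assoc]
  · rw [← hinv, Matrix.exp_conj' S A hS, hinv, hexp]

lemma logdist_conj {S : Matrix (Fin p) (Fin p) ℝ} (h1 : Sᵀ * S = 1) (h2 : S * Sᵀ = 1)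
    (Q : Matrix (Fin p) (Fin p) ℝ) : logdist (Sᵀ * Q * S) = logdist Q := by
  rw [logdist, logdist]
  congr 1
  apply le_antisymm
  · intro r hr
    have h1' : Sᵀᵀ * Sᵀ = 1 := by rw [Matrix.transpose_transpose]; exact h2
    have h2' : Sᵀ * Sᵀᵀ = 1 := by rw [Matrix.transpose_transpose]; exact h1
    have := logdist_conj_subset h1' h2' (Sᵀ * Q * S) hr
    simp only [Matrix.transpose_transpose] at this
    convert this using 3
    rw [show S * (Sᵀ * Q * S) * Sᵀ = (S * Sᵀ) * Q * (S * Sᵀ) by noncomm_ring, h2,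
      Matrix.one_mul, Matrix.mul_one]
  · exact logdist_conj_subset h1 h2 Q

/-- Key structural lemma: an orthogonal matrix intertwining two diagonal matrices,
one of which has distinct diagonal entries, is a signed permutation. -/
lemma orth_intertwine {S D D' : Matrix (Fin p) (Fin p) ℝ}
    (h1 : Sᵀ * S = 1) (hDd : D.IsDiag) (hD'd : D'.IsDiag)
    (hinj : Function.Injective fun i => D i i)
    (hcomm : S * D' = D * S) :
    ∃ (σ : Equiv.Perm (Fin p)) (ε : Fin p → ℝ), Eps ε ∧ S = mkSP σ ε ∧
      D' = Matrix.diagonal (fun j => D (σ j) (σ j)) := by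
  have key : ∀ i j, S i j ≠ 0 → D i i = D' j j := by
    intro i j hij
    have h := congrFun (congrFun hcomm i) j
    rw [Matrix.mul_apply, Matrix.mul_apply,
      Finset.sum_eq_single j (fun b _ hb => by rw [hD'd hb]; ring) (by simp),
      Finset.sum_eq_single i (fun b _ hb => by rw [hDd (Ne.symm hb)]; ring) (by simp)] at h
    exact (mul_left_cancel₀ hij (h.trans (mul_comm _ _))).symm
  have colsum : ∀ j j', (∑ a, S a j * S a j') = (1 : Matrix (Fin p) (Fin p) ℝ) j j' := by
    intro j j'
    have h := congrFun (congrFun h1 j) j'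
    rw [Matrix.mul_apply] at h
    simpa [Matrix.transpose_apply] using h
  have hex : ∀ j, ∃ i, S i j ≠ 0 := by
    intro j
    by_contra hc
    push_neg at hc
    have h := colsum j j
    simp only [Matrix.one_apply_eq] at h
    rw [Finset.sum_eq_zero (fun a _ => by rw [hc a]; ring)] at h
    norm_num at h
  choose f hf using hex
  have huniq : ∀ j i, S i j ≠ 0 → i = f j := by
    intro j i hi
    exact hinj ((key i j hi).trans (key (f j) j (hf j)).symm)
  have hfinj : Function.Injective f := by
    intro j j' he
    by_contra hne
    have h := colsum j j'
    rw [Matrix.one_apply_ne hne] at h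
    rw [Finset.sum_eq_single (f j)] at h
    · exact (mul_ne_zero (hf j) (he ▸ hf j')) h
    · intro b _ hb
      have : S b j = 0 := by
        by_contra hc
        exact hb (huniq j b hc)
      rw [this]; ring
    · intro hc
      exact absurd (Finset.mem_univ (f j)) hc
  have hbij : Function.Bijective f := (Finite.injective_iff_bijective).mp hfinj
  set σ : Equiv.Perm (Fin p) := Equiv.ofBijective f hbij with hσ
  have hSP : S = mkSP σ (fun j => S (f j) j) := by
    ext i j
    simp only [mkSP_apply, hσ, Equiv.ofBijective_apply]
    by_cases hij : i = f j
    · subst hij; simp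
    · rw [if_neg hij]
      by_contra hne
      exact hij (huniq j i hne)
  have heps : Eps (fun j => S (f j) j) := by
    intro j
    have h := colsum j j
    rw [Matrix.one_apply_eq] at h
    rw [Finset.sum_eq_single (f j)] at h
    · exact mul_self_eq_one_iff.mp h
    · intro b _ hb
      have : S b j = 0 := by
        by_contra hc
        exact hb (huniq j b hc)
      rw [this]; ring
    · intro hc
      exact absurd (Finset.mem_univ (f j)) hc
  refine ⟨σ, fun j => S (f j) j, heps, hSP, ?_⟩
  ext i j
  rw [Matrix.diagonal_apply]
  by_cases hij : i = j
  · subst hij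
    rw [if_pos rfl]
    exact (key (σ i) i (by simpa [hσ, Equiv.ofBijective_apply] using hf i)).symm
  · rw [if_neg hij, hD'd hij]

end SRaux
namespace SRaux

open Matrix

lemma fiber_char {p : ℕ} {X U D U' D' : Matrix (Fin p) (Fin p) ℝ}
    (hUD : (U, D) ∈ fiber X) (hUD' : (U', D') ∈ fiber X)
    (hD : Function.Injective fun i => D i i) :
    ∃ (σ : Equiv.Perm (Fin p)) (ε : Fin p → ℝ), Eps ε ∧
      U' = U * mkSP σ ε ∧ (mkSP σ ε).det = 1 ∧
      D' = Matrix.diagonal (fun j => D (σ j) (σ j)) := by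
  obtain ⟨⟨hUo, hUdet⟩, ⟨hDd, -⟩, hXeq⟩ := hUD
  obtain ⟨⟨hU'o, hU'det⟩, ⟨hD'd, -⟩, hX'eq⟩ := hUD'
  dsimp only at hUo hUdet hXeq hDd hU'o hU'det hX'eq hD'd
  have hUo' : U * Uᵀ = 1 := mul_eq_one_comm.mp hUo
  set S := Uᵀ * U' with hS
  have h1 : Sᵀ * S = 1 := by
    rw [hS, Matrix.transpose_mul, Matrix.transpose_transpose]
    rw [show U'ᵀ * U * (Uᵀ * U') = U'ᵀ * (U * Uᵀ) * U' by noncomm_ring,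
      hUo', Matrix.mul_one, hU'o]
  have hcomm : S * D' = D * S := by
    have h2 : U * D * Uᵀ = U' * D' * U'ᵀ := hXeq.trans hX'eq.symm
    calc S * D' = Uᵀ * (U' * D' * U'ᵀ) * U' := by
          rw [show Uᵀ * (U' * D' * U'ᵀ) * U' = Uᵀ * U' * D' * (U'ᵀ * U') by noncomm_ring,
            hU'o, Matrix.mul_one, hS]
      _ = Uᵀ * (U * D * Uᵀ) * U' := by rw [h2]
      _ = D * S := by
          rw [show Uᵀ * (U * D * Uᵀ) * U' = (Uᵀ * U) * D * (Uᵀ * U') by noncomm_ring,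
            hUo, Matrix.one_mul, hS]
  obtain ⟨σ, ε, heps, hSP, hdiag⟩ := orth_intertwine h1 hDd hD'd hD hcomm
  refine ⟨σ, ε, heps, ?_, ?_, hdiag⟩
  · rw [← hSP, hS, ← Matrix.mul_assoc, hUo', Matrix.one_mul]
  · rw [← hSP, hS, Matrix.det_mul, Matrix.det_transpose, hUdet, hU'det, one_mul]

lemma lemA {p : ℕ} (k : ℝ) {Y V Λ P : Matrix (Fin p) (Fin p) ℝ}
    (hVL : (V, Λ) ∈ fiber Y) (hP : IsEvenSignedPerm P) (U D : Matrix (Fin p) (Fin p) ℝ) :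
    (V * Pᵀ, P * Λ * Pᵀ) ∈ fiber Y ∧
      dM k (U, D) (V * Pᵀ, P * Λ * Pᵀ) =
        Real.sqrt ((k / 2) * logdist (U⁻¹ * V * P⁻¹) ^ 2 +
          frob (logDiag D - logDiag (P * Λ * P⁻¹)) ^ 2) := by
  obtain ⟨⟨hVo, hVdet⟩, ⟨hLd, hLpos⟩, hYeq⟩ := hVL
  dsimp only at hVo hVdet hLd hLpos hYeq
  obtain ⟨hPsp, hPdet⟩ := hP
  obtain ⟨τ, δ, hδ, rfl⟩ := signedPerm_exists hPsp
  have hPt : (mkSP τ δ)ᵀ * mkSP τ δ = 1 := mkSP_transpose_mul hδ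
  have hPt' : mkSP τ δ * (mkSP τ δ)ᵀ = 1 := mkSP_mul_transpose hδ
  have hPinv : (mkSP τ δ)⁻¹ = (mkSP τ δ)ᵀ := Matrix.inv_eq_left_inv hPt
  have hconj : mkSP τ δ * Λ * (mkSP τ δ)ᵀ
      = Matrix.diagonal (fun j => Λ (τ⁻¹ j) (τ⁻¹ j)) := by
    have hδ' : Eps (fun j => δ (τ⁻¹ j)) := fun j => hδ _
    have h := conj_diag (σ := τ⁻¹) hδ' hLd
    rw [← mkSP_transpose] at h
    rw [show mkSP τ δ * Λ * (mkSP τ δ)ᵀ = (mkSP τ δ)ᵀᵀ * Λ * (mkSP τ δ)ᵀ by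
      rw [Matrix.transpose_transpose]]
    exact h
  refine ⟨⟨⟨?_, ?_⟩, ?_, ?_⟩, ?_⟩
  · show (V * (mkSP τ δ)ᵀ)ᵀ * (V * (mkSP τ δ)ᵀ) = 1
    rw [Matrix.transpose_mul, Matrix.transpose_transpose]
    rw [show mkSP τ δ * Vᵀ * (V * (mkSP τ δ)ᵀ) = mkSP τ δ * (Vᵀ * V) * (mkSP τ δ)ᵀ by
      noncomm_ring, hVo, Matrix.mul_one, hPt']
  · show (V * (mkSP τ δ)ᵀ).det = 1
    rw [Matrix.det_mul, Matrix.det_transpose, hVdet, hPdet, one_mul]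
  · show IsPosDiag (mkSP τ δ * Λ * (mkSP τ δ)ᵀ)
    rw [hconj]
    exact ⟨Matrix.isDiag_diagonal _, fun i => by
      rw [Matrix.diagonal_apply_eq]; exact hLpos _⟩
  · show V * (mkSP τ δ)ᵀ * (mkSP τ δ * Λ * (mkSP τ δ)ᵀ) * (V * (mkSP τ δ)ᵀ)ᵀ = Y
    rw [Matrix.transpose_mul, Matrix.transpose_transpose]
    rw [show V * (mkSP τ δ)ᵀ * (mkSP τ δ * Λ * (mkSP τ δ)ᵀ) * (mkSP τ δ * Vᵀ)
        = V * (((mkSP τ δ)ᵀ * mkSP τ δ) * Λ * ((mkSP τ δ)ᵀ * mkSP τ δ)) * Vᵀ by noncomm_ring,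
      hPt, Matrix.one_mul, Matrix.mul_one]
    exact hYeq
  · simp only [dM]
    rw [hPinv, ← Matrix.mul_assoc]

lemma lemB {p : ℕ} (k : ℝ) {X Y U D V Λ U' D' V' Λ' : Matrix (Fin p) (Fin p) ℝ}
    (hUD : (U, D) ∈ fiber X) (hVL : (V, Λ) ∈ fiber Y)
    (hUD' : (U', D') ∈ fiber X) (hVL' : (V', Λ') ∈ fiber Y)
    (hD : Function.Injective fun i => D i i)
    (hL : Function.Injective fun i => Λ i i) :
    ∃ P : Matrix (Fin p) (Fin p) ℝ, IsEvenSignedPerm P ∧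
      dM k (U', D') (V', Λ') =
        Real.sqrt ((k / 2) * logdist (U⁻¹ * V * P⁻¹) ^ 2 +
          frob (logDiag D - logDiag (P * Λ * P⁻¹)) ^ 2) := by
  obtain ⟨σ₁, ε₁, hε₁, hU'eq, hdet₁, hD'eq⟩ := fiber_char hUD hUD' hD
  obtain ⟨σ₂, ε₂, hε₂, hV'eq, hdet₂, hΛ'eq⟩ := fiber_char hVL hVL' hL
  set S₁ := mkSP σ₁ ε₁ with hS₁
  set S₂ := mkSP σ₂ ε₂ with hS₂
  set τ : Equiv.Perm (Fin p) := σ₁ * σ₂⁻¹ with hτ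
  set δ : Fin p → ℝ := fun j => ε₁ (σ₂⁻¹ j) * ε₂ (σ₂⁻¹ j) with hδdef
  have hδ : Eps δ := by
    intro j
    rcases hε₁ (σ₂⁻¹ j) with h1 | h1 <;> rcases hε₂ (σ₂⁻¹ j) with h2 | h2 <;>
      (simp only [hδdef, h1, h2]; norm_num)
  set P := mkSP τ δ with hPdef
  have hPeq : P = S₁ * S₂ᵀ := by
    rw [hPdef, hS₁, hS₂, mkSP_transpose, mkSP_mul]
  have h1₁ : S₁ᵀ * S₁ = 1 := mkSP_transpose_mul hε₁
  have h2₁ : S₁ * S₁ᵀ = 1 := mkSP_mul_transpose hε₁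
  have h1₂ : S₂ᵀ * S₂ = 1 := mkSP_transpose_mul hε₂
  have hPt : Pᵀ * P = 1 := mkSP_transpose_mul hδ
  have hPinv : P⁻¹ = Pᵀ := Matrix.inv_eq_left_inv hPt
  have hPtEq : Pᵀ = S₂ * S₁ᵀ := by
    rw [hPeq, Matrix.transpose_mul, Matrix.transpose_transpose]
  obtain ⟨⟨hUo, hUdet⟩, -, -⟩ := hUD
  obtain ⟨⟨hU'o, hU'det⟩, -, -⟩ := hUD'
  have hUinv : U⁻¹ = Uᵀ := Matrix.inv_eq_left_inv hUo
  have hU'inv : U'⁻¹ = U'ᵀ := Matrix.inv_eq_left_inv hU'o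
  have hkey : U'⁻¹ * V' = S₁ᵀ * (U⁻¹ * V * P⁻¹) * S₁ := by
    rw [hU'inv, hUinv, hPinv, hPtEq, hU'eq, hV'eq]
    rw [show S₁ᵀ * (Uᵀ * V * (S₂ * S₁ᵀ)) * S₁ = S₁ᵀ * (Uᵀ * V) * S₂ * (S₁ᵀ * S₁) by
      noncomm_ring, h1₁, Matrix.mul_one, Matrix.transpose_mul]
    noncomm_ring
  have hterm1 : logdist (U'⁻¹ * V') = logdist (U⁻¹ * V * P⁻¹) := by
    rw [hkey, logdist_conj h1₁ h2₁]
  have hPconj : P * Λ * P⁻¹ = Matrix.diagonal (fun j => Λ (τ⁻¹ j) (τ⁻¹ j)) := by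
    obtain ⟨-, ⟨hLd, -⟩, -⟩ := hVL
    rw [hPinv]
    have hδ' : Eps (fun j => δ (τ⁻¹ j)) := fun j => hδ _
    have h := conj_diag (σ := τ⁻¹) hδ' hLd
    rw [← mkSP_transpose] at h
    rw [show P * Λ * Pᵀ = (mkSP τ δ)ᵀᵀ * Λ * (mkSP τ δ)ᵀ by
      rw [Matrix.transpose_transpose, hPdef]]
    exact h
  have hlog : ∀ f : Fin p → ℝ,
      logDiag (Matrix.diagonal f) = Matrix.diagonal (fun i => Real.log (f i)) := by
    intro f
    unfold logDiag
    simp only [Matrix.diagonal_apply_eq]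
  have hterm2 : frob (logDiag D' - logDiag Λ') = frob (logDiag D - logDiag (P * Λ * P⁻¹)) := by
    rw [hD'eq, hΛ'eq, hPconj, hlog, hlog, hlog,
      show logDiag D = Matrix.diagonal (fun i => Real.log (D i i)) from rfl,
      Matrix.diagonal_sub, Matrix.diagonal_sub, frob_diagonal, frob_diagonal]
    congr 1
    apply Fintype.sum_equiv σ₁
    intro j
    have hτj : τ⁻¹ (σ₁ j) = σ₂ j := by
      rw [hτ, _root_.mul_inv_rev, inv_inv, Equiv.Perm.mul_apply, Equiv.Perm.inv_def, Equiv.symm_apply_apply]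
    simp [Pi.sub_apply, hτj]
  refine ⟨P, ⟨isSignedPerm_mkSP hδ, ?_⟩, ?_⟩
  · rw [show P.det = (S₁ * S₂ᵀ).det by rw [hPeq], Matrix.det_mul, Matrix.det_transpose,
      hdet₁, hdet₂, one_mul]
  · simp only [dM]
    rw [hterm1, hterm2]

end SRaux
namespace SRaux

open Matrix

lemma isEvenSignedPerm_one {p : ℕ} :
    IsEvenSignedPerm (1 : Matrix (Fin p) (Fin p) ℝ) := by
  constructor
  · rw [show (1 : Matrix (Fin p) (Fin p) ℝ) = mkSP 1 (fun _ => 1) by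
      rw [mkSP_one, Matrix.diagonal_one]]
    exact isSignedPerm_mkSP (fun i => Or.inl rfl)
  · exact Matrix.det_one

end SRaux

open SRaux in
theorem stmt6 (k : ℝ) (hk : 0 < k)
    (X Y U D V Λ : Matrix (Fin 3) (Fin 3) ℝ)
    (hUD : (U, D) ∈ fiber X) (hVL : (V, Λ) ∈ fiber Y)
    (hD : Function.Injective fun i => D i i)
    (hL : Function.Injective fun i => Λ i i) :
    IsLeast { r : ℝ | ∃ P : Matrix (Fin 3) (Fin 3) ℝ, IsEvenSignedPerm P ∧
        r = (k / 2) * logdist (U⁻¹ * V * P⁻¹) ^ 2 +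
          frob (logDiag D - logDiag (P * Λ * P⁻¹)) ^ 2 }
      (dSR k X Y ^ 2) := by
  classical
  set SS := { r : ℝ | ∃ P : Matrix (Fin 3) (Fin 3) ℝ, IsEvenSignedPerm P ∧
        r = (k / 2) * logdist (U⁻¹ * V * P⁻¹) ^ 2 +
          frob (logDiag D - logDiag (P * Λ * P⁻¹)) ^ 2 } with hSS
  have hnn : ∀ r ∈ SS, 0 ≤ r := by
    rintro r ⟨P, -, rfl⟩
    have h1 : 0 ≤ (k / 2) * logdist (U⁻¹ * V * P⁻¹) ^ 2 :=
      mul_nonneg (by linarith) (sq_nonneg _)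
    have h2 : (0:ℝ) ≤ frob (logDiag D - logDiag (P * Λ * P⁻¹)) ^ 2 := sq_nonneg _
    linarith
  have hne : SS.Nonempty := ⟨_, ⟨1, isEvenSignedPerm_one, rfl⟩⟩
  have hfin : SS.Finite := by
    have hsub : SS ⊆ Set.range (fun q : Equiv.Perm (Fin 3) × (Fin 3 → Bool) =>
        (k / 2) * logdist (U⁻¹ * V * (mkSP q.1 (fun i => if q.2 i then 1 else -1))⁻¹) ^ 2 +
          frob (logDiag D - logDiag ((mkSP q.1 (fun i => if q.2 i then 1 else -1)) * Λ *
            (mkSP q.1 (fun i => if q.2 i then 1 else -1))⁻¹)) ^ 2) := by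
      rintro r ⟨P, ⟨hPsp, -⟩, rfl⟩
      obtain ⟨σ, ε, hε, rfl⟩ := signedPerm_exists hPsp
      refine ⟨(σ, fun i => if ε i = 1 then true else false), ?_⟩
      have hfun : (fun i => if (if ε i = 1 then true else false : Bool) = true
          then (1:ℝ) else -1) = ε := by
        funext i
        rcases hε i with h | h <;> norm_num [h]
      simp only
      rw [show (fun i => if ((fun i => if ε i = 1 then true else false) i : Bool)
          then (1:ℝ) else -1) = ε from hfun]
    exact Set.Finite.subset (Set.finite_range _) hsub
  have hset : { r | ∃ UD ∈ fiber X, ∃ VL ∈ fiber Y, r = dM k UD VL } = Real.sqrt '' SS := by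
    ext r
    constructor
    · rintro ⟨⟨U', D'⟩, hUD', ⟨V', Λ'⟩, hVL', rfl⟩
      obtain ⟨P, hPev, heq⟩ := lemB k hUD hVL hUD' hVL' hD hL
      exact ⟨_, ⟨P, hPev, rfl⟩, heq.symm⟩
    · rintro ⟨s, ⟨P, hPev, rfl⟩, rfl⟩
      obtain ⟨hmem, heq⟩ := lemA k hVL hPev U D
      exact ⟨(U, D), hUD, (V * Pᵀ, P * Λ * Pᵀ), hmem, heq.symm⟩
  have hd : dSR k X Y = Real.sqrt (sInf SS) := by
    rw [dSR, hset]
    exact (Monotone.map_csInf_of_continuousAt (Real.continuous_sqrt.continuousAt)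
      (fun a b h => Real.sqrt_le_sqrt h) hne hfin.bddBelow).symm
  have hmem : sInf SS ∈ SS := hne.csInf_mem hfin
  have h0 : 0 ≤ sInf SS := hnn _ hmem
  have hsq : dSR k X Y ^ 2 = sInf SS := by
    rw [hd, Real.sq_sqrt h0]
  rw [hsq]
  exact ⟨hmem, fun r hr => csInf_le hfin.bddBelow hr⟩
end

section
/- Fix a weight k > 0, let c > 0, let X = c·I be the 3×3 SPD matrix with single eigenvalue c, and let Y be any 3×3 SPD matrix with (V,Λ) ∈ E_Y. Then d_SR(X,Y) = ‖Log(c·I) − Log Λ‖_F, i.e., d_SR(X,Y)² = Σᵢ (log c − log λᵢ)² where λ₁, λ₂, λ₃ are the diagonal entries of Λ. -/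
open Matrix

lemma frob_nonneg {p : ℕ} (A : Matrix (Fin p) (Fin p) ℝ) : 0 ≤ frob A :=
  Real.sqrt_nonneg _

lemma frob_zero {p : ℕ} : frob (0 : Matrix (Fin p) (Fin p) ℝ) = 0 := by
  simp [frob]

lemma logdist_one {p : ℕ} : logdist (1 : Matrix (Fin p) (Fin p) ℝ) = 0 := by
  have hmem : (0 : ℝ) ∈ { r | ∃ A : Matrix (Fin p) (Fin p) ℝ,
      Aᵀ = -A ∧ NormedSpace.exp A = 1 ∧ r = frob A } :=
    ⟨0, by simp, by simp [NormedSpace.exp_zero], frob_zero.symm⟩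
  have hlb : ∀ r ∈ { r | ∃ A : Matrix (Fin p) (Fin p) ℝ,
      Aᵀ = -A ∧ NormedSpace.exp A = 1 ∧ r = frob A }, (0:ℝ) ≤ r := by
    rintro r ⟨A, -, -, rfl⟩; exact frob_nonneg A
  exact le_antisymm (csInf_le ⟨0, hlb⟩ hmem) (le_csInf ⟨0, hmem⟩ hlb)

lemma sum_f_conj {p : ℕ} (W L L' : Matrix (Fin p) (Fin p) ℝ)
    (hW : Wᵀ * W = 1) (hL : L.IsDiag) (hL' : L'.IsDiag)
    (h : L' = W * L * Wᵀ) (f : ℝ → ℝ) :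
    ∑ i, f (L' i i) = ∑ j, f (L j j) := by
  have hW' : W * Wᵀ = 1 := mul_eq_one_comm.mp hW
  have key : L' * W = W * L := by
    rw [h, Matrix.mul_assoc (W * L), hW, Matrix.mul_one]
  have entry : ∀ i j, L' i i * W i j = W i j * L j j := by
    intro i j
    have e := congrFun (congrFun key i) j
    have l1 : (L' * W) i j = L' i i * W i j := by
      rw [Matrix.mul_apply]
      exact Finset.sum_eq_single i
        (fun k _ hk => by rw [hL' (Ne.symm hk), zero_mul]) (by simp)
    have l2 : (W * L) i j = W i j * L j j := by
      rw [Matrix.mul_apply]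
      exact Finset.sum_eq_single j
        (fun k _ hk => by rw [hL hk, mul_zero]) (by simp)
    rw [l1, l2] at e; exact e
  have row : ∀ i, ∑ j, (W i j) ^ 2 = 1 := by
    intro i
    have := congrFun (congrFun hW' i) i
    rw [Matrix.mul_apply] at this
    simpa [Matrix.one_apply, sq] using this
  have col : ∀ j, ∑ i, (W i j) ^ 2 = 1 := by
    intro j
    have := congrFun (congrFun hW j) j
    rw [Matrix.mul_apply] at this
    simpa [Matrix.one_apply, sq, mul_comm] using this
  have step : ∀ i j, (W i j) ^ 2 * f (L' i i) = (W i j) ^ 2 * f (L j j) := by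
    intro i j
    by_cases hz : W i j = 0
    · simp [hz]
    · have e := entry i j
      rw [mul_comm (W i j) (L j j)] at e
      rw [mul_right_cancel₀ hz e]
  calc ∑ i, f (L' i i) = ∑ i, (∑ j, (W i j) ^ 2) * f (L' i i) := by
        simp [row]
    _ = ∑ i, ∑ j, (W i j) ^ 2 * f (L' i i) := by
        simp [Finset.sum_mul]
    _ = ∑ i, ∑ j, (W i j) ^ 2 * f (L j j) := by
        exact Finset.sum_congr rfl fun i _ => Finset.sum_congr rfl fun j _ => step i j
    _ = ∑ j, ∑ i, (W i j) ^ 2 * f (L j j) := Finset.sum_comm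
    _ = ∑ j, (∑ i, (W i j) ^ 2) * f (L j j) := by
        simp [Finset.sum_mul]
    _ = ∑ j, f (L j j) := by simp [col]

lemma frob_logDiag_sub {p : ℕ} (D L : Matrix (Fin p) (Fin p) ℝ) :
    frob (logDiag D - logDiag L) =
      Real.sqrt (∑ i, (Real.log (D i i) - Real.log (L i i)) ^ 2) := by
  unfold frob logDiag
  rw [Matrix.diagonal_sub]
  congr 1
  refine Finset.sum_congr rfl fun i _ => ?_
  rw [Finset.sum_eq_single i (fun j _ hj => by
        rw [Matrix.diagonal_apply_ne _ (Ne.symm hj)]; ring)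
      (fun h => absurd (Finset.mem_univ i) h)]
  simp

theorem stmt7 (k : ℝ) (hk : 0 < k) (c : ℝ) (hc : 0 < c)
    (Y V Λ : Matrix (Fin 3) (Fin 3) ℝ) (hVL : (V, Λ) ∈ fiber Y) :
    dSR k (c • (1 : Matrix (Fin 3) (Fin 3) ℝ)) Y =
      frob (logDiag (c • (1 : Matrix (Fin 3) (Fin 3) ℝ)) - logDiag Λ) ∧
    dSR k (c • (1 : Matrix (Fin 3) (Fin 3) ℝ)) Y ^ 2 =
      ∑ i, (Real.log c - Real.log (Λ i i)) ^ 2 := by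
  obtain ⟨hV, hΛ, hY⟩ := hVL
  set X : Matrix (Fin 3) (Fin 3) ℝ := c • 1 with hX
  have hVV : V * Vᵀ = 1 := mul_eq_one_comm.mp hV.1
  have hXii : ∀ i, X i i = c := by
    intro i; simp [hX, Matrix.smul_apply, Matrix.one_apply]
  set t : ℝ := Real.sqrt (∑ i, (Real.log c - Real.log (Λ i i)) ^ 2) with ht
  have htnn : 0 ≤ t := Real.sqrt_nonneg _
  have hfrobΛ : frob (logDiag X - logDiag Λ) = t := by
    rw [frob_logDiag_sub, ht]
    congr 1
    exact Finset.sum_congr rfl fun i _ => by rw [hXii]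
  have hfibX : (V, X) ∈ fiber X := by
    refine ⟨hV, ⟨?_, ?_⟩, ?_⟩
    · intro i j hij
      show X i j = 0
      simp [hX, Matrix.smul_apply, Matrix.one_apply, hij]
    · intro i; show 0 < X i i; rw [hXii]; exact hc
    · show V * X * Vᵀ = X
      rw [hX, Matrix.mul_smul, Matrix.mul_one, Matrix.smul_mul, hVV]
  have hVinv : V⁻¹ * V = 1 :=
    Matrix.nonsing_inv_mul V (by rw [hV.2]; exact isUnit_one)
  have hdm : dM k (V, X) (V, Λ) = t := by
    simp only [dM]
    rw [show (V, X).1⁻¹ * (V, Λ).1 = (1 : Matrix (Fin 3) (Fin 3) ℝ) from hVinv,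
      logdist_one]
    have : frob (logDiag (V, X).2 - logDiag (V, Λ).2) = t := hfrobΛ
    rw [this]
    rw [show (k / 2) * (0:ℝ) ^ 2 + t ^ 2 = t ^ 2 by ring, Real.sqrt_sq htnn]
  have hmem : t ∈ {r | ∃ UD ∈ fiber X, ∃ VL ∈ fiber Y, r = dM k UD VL} :=
    ⟨(V, X), hfibX, (V, Λ), ⟨hV, hΛ, hY⟩, hdm.symm⟩
  have hlb : ∀ r ∈ {r | ∃ UD ∈ fiber X, ∃ VL ∈ fiber Y, r = dM k UD VL}, t ≤ r := by
    rintro r ⟨⟨U, D⟩, ⟨hU, hD, hUDX⟩, ⟨V', Λ'⟩, ⟨hV', hΛ', hY'⟩, rfl⟩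
    have hDX : D = X := by
      have hfold : Uᵀ * (U * D * Uᵀ) * U = (Uᵀ * U) * D * (Uᵀ * U) := by
        simp only [← Matrix.mul_assoc]
      have h0 : Uᵀ * (U * D * Uᵀ) * U = D := by
        rw [hfold, hU.1, Matrix.one_mul, Matrix.mul_one]
      calc D = Uᵀ * (U * D * Uᵀ) * U := h0.symm
        _ = Uᵀ * X * U := by rw [hUDX]
        _ = c • (Uᵀ * U) := by
            rw [hX, Matrix.mul_smul, Matrix.mul_one, Matrix.smul_mul]
        _ = X := by rw [hU.1, hX]
    have hV'V' : V' * V'ᵀ = 1 := mul_eq_one_comm.mp hV'.1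
    set W := V'ᵀ * V with hW
    have hWo : Wᵀ * W = 1 := by
      rw [hW, Matrix.transpose_mul, Matrix.transpose_transpose]
      calc Vᵀ * V' * (V'ᵀ * V) = Vᵀ * (V' * V'ᵀ) * V := by
            simp only [← Matrix.mul_assoc]
        _ = 1 := by rw [hV'V', Matrix.mul_one, hV.1]
    have e1 : V'ᵀ * Y * V' = Λ' := by
      rw [← hY']
      have hfold : V'ᵀ * (V' * Λ' * V'ᵀ) * V' = (V'ᵀ * V') * Λ' * (V'ᵀ * V') := by
        simp only [← Matrix.mul_assoc]
      rw [hfold, hV'.1, Matrix.one_mul, Matrix.mul_one]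
    have hconj : Λ' = W * Λ * Wᵀ := by
      symm
      calc W * Λ * Wᵀ = V'ᵀ * V * Λ * (Vᵀ * V') := by
            rw [hW, Matrix.transpose_mul, Matrix.transpose_transpose]
        _ = V'ᵀ * (V * Λ * Vᵀ) * V' := by simp only [← Matrix.mul_assoc]
        _ = Λ' := by rw [hY, e1]
    have hsum : ∑ i, (Real.log c - Real.log (Λ' i i)) ^ 2
        = ∑ i, (Real.log c - Real.log (Λ i i)) ^ 2 :=
      sum_f_conj W Λ Λ' hWo hΛ.1 hΛ'.1 hconj (fun x => (Real.log c - Real.log x) ^ 2)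
    have hfrob' : frob (logDiag D - logDiag Λ') = t := by
      rw [hDX, frob_logDiag_sub, ht, ← hsum]
      congr 1
      exact Finset.sum_congr rfl fun i _ => by rw [hXii]
    have h1 : 0 ≤ (k / 2) * logdist ((U, D).1⁻¹ * (V', Λ').1) ^ 2 := by positivity
    calc t = Real.sqrt (frob (logDiag (U, D).2 - logDiag (V', Λ').2) ^ 2) := by
          rw [show frob (logDiag (U, D).2 - logDiag (V', Λ').2) = t from hfrob',
            Real.sqrt_sq htnn]
      _ ≤ dM k (U, D) (V', Λ') := by
          simp only [dM]
          exact Real.sqrt_le_sqrt (by linarith)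
  have hdsr : dSR k X Y = t :=
    le_antisymm (csInf_le ⟨t, hlb⟩ hmem) (le_csInf ⟨t, hmem⟩ hlb)
  refine ⟨?_, ?_⟩
  · rw [show dSR k (c • (1 : Matrix (Fin 3) (Fin 3) ℝ)) Y = t from hdsr]
    exact hfrobΛ.symm
  · rw [show dSR k (c • (1 : Matrix (Fin 3) (Fin 3) ℝ)) Y = t from hdsr, ht]
    exact Real.sq_sqrt (by positivity)
end

section
/- Let q, m be positive integers and let R be a (q+m)×(q+m) real symmetric matrix with R·R = I, written in block form R = fromBlocks R₁ R₂ R₂ᵀ R₄, where R₁ is a symmetric q×q block, R₄ is a symmetric m×m block, and R₂ is q×m. Then: (a) every real eigenvalue of R₁ and every real eigenvalue of R₄ lies in the interval [−1, 1]; and (b) for every λ ∈ (−1, 1), dim ker(R₁ − λ·I_q) = dim ker(R₄ + λ·I_m), i.e., λ is an eigenvalue of R₁ if and only if −λ is an eigenvalue of R₄, with equal multiplicities. -/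
open Matrix

lemma memker_iff {n : ℕ} (A : Matrix (Fin n) (Fin n) ℝ) (lam : ℝ) (x : Fin n → ℝ) :
    x ∈ LinearMap.ker (Matrix.toLin' (A - lam • 1)) ↔ A.mulVec x = lam • x := by
  simp [LinearMap.mem_ker, Matrix.toLin'_apply, Matrix.sub_mulVec,
    Matrix.smul_mulVec, Matrix.one_mulVec, sub_eq_zero]

lemma dp_self_nonneg {n : ℕ} (v : Fin n → ℝ) : 0 ≤ v ⬝ᵥ v :=
  Finset.sum_nonneg fun i _ => mul_self_nonneg _

lemma auxbound {a b : ℕ} (A : Matrix (Fin a) (Fin a) ℝ) (B : Matrix (Fin a) (Fin b) ℝ)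
    (h1 : A * A + B * Bᵀ = 1) (lam : ℝ)
    (hne : LinearMap.ker (Matrix.toLin' (A - lam • 1)) ≠ ⊥) : -1 ≤ lam ∧ lam ≤ 1 := by
  obtain ⟨x, hx, hx0⟩ := Submodule.exists_mem_ne_zero_of_ne_bot hne
  rw [memker_iff] at hx
  set w := Bᵀ.mulVec x with hw
  have key : (lam ^ 2) • x + B.mulVec w = x := by
    have := congrArg (fun M : Matrix (Fin a) (Fin a) ℝ => M.mulVec x) h1
    simpa [Matrix.add_mulVec, ← Matrix.mulVec_mulVec, hx, Matrix.mulVec_smul,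
      Matrix.one_mulVec, smul_smul, pow_two] using this
  have hdot := congrArg (fun v => x ⬝ᵥ v) key
  have hbw : x ⬝ᵥ B.mulVec w = w ⬝ᵥ w := by
    rw [Matrix.dotProduct_mulVec, ← Matrix.mulVec_transpose]
  simp only [dotProduct_add, dotProduct_smul, hbw, smul_eq_mul] at hdot
  have hxx : 0 < x ⬝ᵥ x := by
    rcases lt_or_eq_of_le (dp_self_nonneg x) with h | h
    · exact h
    · exact absurd ((dotProduct_self_eq_zero).mp h.symm) hx0
  have hww : 0 ≤ w ⬝ᵥ w := dp_self_nonneg w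
  have hsq : lam ^ 2 ≤ 1 := by nlinarith [mul_le_mul_of_nonneg_right (le_refl (lam^2)) hxx.le]
  constructor <;> nlinarith [sq_nonneg (lam - 1), sq_nonneg (lam + 1)]

lemma auxrank {a b : ℕ} (A : Matrix (Fin a) (Fin a) ℝ) (B : Matrix (Fin a) (Fin b) ℝ)
    (C : Matrix (Fin b) (Fin b) ℝ)
    (h1 : A * A + B * Bᵀ = 1) (h3 : Bᵀ * A + C * Bᵀ = 0) (lam : ℝ) (hl : lam ^ 2 ≠ 1) :
    Module.finrank ℝ (LinearMap.ker (Matrix.toLin' (A - lam • 1))) ≤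
      Module.finrank ℝ (LinearMap.ker (Matrix.toLin' (C - (-lam) • 1))) := by
  set K₁ := LinearMap.ker (Matrix.toLin' (A - lam • 1))
  set K₄ := LinearMap.ker (Matrix.toLin' (C - (-lam) • 1))
  have hmap : ∀ x ∈ K₁, Matrix.toLin' Bᵀ x ∈ K₄ := by
    intro x hx
    rw [memker_iff] at hx
    have h0 : lam • (Bᵀ.mulVec x) + C.mulVec (Bᵀ.mulVec x) = 0 := by
      have := congrArg (fun M : Matrix (Fin b) (Fin a) ℝ => M.mulVec x) h3
      simpa [Matrix.add_mulVec, ← Matrix.mulVec_mulVec, hx, Matrix.mulVec_smul] using this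
    rw [memker_iff]
    simp only [Matrix.toLin'_apply, neg_smul]
    exact eq_neg_of_add_eq_zero_right h0
  have hinj : Function.Injective ((Matrix.toLin' Bᵀ).restrict hmap) := by
    rw [← LinearMap.ker_eq_bot, LinearMap.ker_eq_bot']
    rintro ⟨x, hx⟩ h0
    have hBx : Bᵀ.mulVec x = 0 := by
      have := congrArg Subtype.val h0
      simpa [LinearMap.restrict_apply, Matrix.toLin'_apply] using this
    rw [memker_iff] at hx
    have key : (lam ^ 2) • x = x := by
      have := congrArg (fun M : Matrix (Fin a) (Fin a) ℝ => M.mulVec x) h1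
      simpa [Matrix.add_mulVec, ← Matrix.mulVec_mulVec, hx, hBx, Matrix.mulVec_smul,
        Matrix.one_mulVec, smul_smul, pow_two] using this
    have : (lam ^ 2 - 1) • x = 0 := by rw [sub_smul, key]; simp
    have hx0 : x = 0 := by
      rcases smul_eq_zero.mp this with h | h
      · exact absurd (by linarith [sub_eq_zero.mp h]) hl
      · exact h
    exact Subtype.ext hx0
  exact LinearMap.finrank_le_finrank_of_injective hinj


theorem stmt9 (q m : ℕ) (hq : 0 < q) (hm : 0 < m)
    (R₁ : Matrix (Fin q) (Fin q) ℝ) (R₂ : Matrix (Fin q) (Fin m) ℝ)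
    (R₄ : Matrix (Fin m) (Fin m) ℝ) (h1 : R₁.IsSymm) (h4 : R₄.IsSymm)
    (hinv : Matrix.fromBlocks R₁ R₂ R₂ᵀ R₄ * Matrix.fromBlocks R₁ R₂ R₂ᵀ R₄ = 1) :
    (∀ lam : ℝ,
        LinearMap.ker (Matrix.toLin' (R₁ - lam • 1)) ≠ ⊥ → -1 ≤ lam ∧ lam ≤ 1) ∧
    (∀ lam : ℝ,
        LinearMap.ker (Matrix.toLin' (R₄ - lam • 1)) ≠ ⊥ → -1 ≤ lam ∧ lam ≤ 1) ∧
    ∀ lam : ℝ, -1 < lam → lam < 1 →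
      Module.finrank ℝ (LinearMap.ker (Matrix.toLin' (R₁ - lam • 1))) =
        Module.finrank ℝ (LinearMap.ker (Matrix.toLin' (R₄ + lam • 1))) := by
  rw [Matrix.fromBlocks_multiply, ← Matrix.fromBlocks_one] at hinv
  have e1 : R₁ * R₁ + R₂ * R₂ᵀ = 1 := by
    have h := congrArg Matrix.toBlocks₁₁ hinv; simp only [Matrix.toBlocks_fromBlocks₁₁] at h; exact h
  have e2 : R₁ * R₂ + R₂ * R₄ = 0 := by
    have h := congrArg Matrix.toBlocks₁₂ hinv; simp only [Matrix.toBlocks_fromBlocks₁₂] at h; exact h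
  have e3 : R₂ᵀ * R₁ + R₄ * R₂ᵀ = 0 := by
    have h := congrArg Matrix.toBlocks₂₁ hinv; simp only [Matrix.toBlocks_fromBlocks₂₁] at h; exact h
  have e4 : R₂ᵀ * R₂ + R₄ * R₄ = 1 := by
    have h := congrArg Matrix.toBlocks₂₂ hinv; simp only [Matrix.toBlocks_fromBlocks₂₂] at h; exact h
  have e1' : R₄ * R₄ + R₂ᵀ * (R₂ᵀ)ᵀ = 1 := by
    rw [Matrix.transpose_transpose, add_comm]; exact e4
  have e3' : (R₂ᵀ)ᵀ * R₄ + R₁ * (R₂ᵀ)ᵀ = 0 := by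
    rw [Matrix.transpose_transpose, add_comm]; exact e2
  refine ⟨fun lam h => auxbound R₁ R₂ e1 lam h,
    fun lam h => auxbound R₄ R₂ᵀ e1' lam h, fun lam hlo hhi => ?_⟩
  have hl : lam ^ 2 ≠ 1 := by nlinarith
  have hl' : (-lam) ^ 2 ≠ 1 := by simpa using hl
  have le₁ := auxrank R₁ R₂ R₄ e1 e3 lam hl
  have le₂ := auxrank R₄ R₂ᵀ R₁ e1' e3' (-lam) hl'
  have hnn : R₁ - (-(-lam)) • (1 : Matrix (Fin q) (Fin q) ℝ) = R₁ - lam • 1 := by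
    rw [neg_neg]
  rw [hnn] at le₂
  have hre : R₄ + lam • 1 = R₄ - (-lam) • (1 : Matrix (Fin m) (Fin m) ℝ) := by
    simp [sub_eq_add_neg]
  rw [hre]
  exact le_antisymm le₁ le₂
end

section
/- Let p ≥ 2, fix a weight k > 0, and let U, V ∈ SO(p) be such that the pair (U,V) is not sign-change reducible, i.e., logdist(I_σ · U⁻¹ · V) ≥ logdist(U⁻¹ · V) for every even sign-change matrix I_σ. Then there exist diagonal matrices D and Λ, each with strictly positive and pairwise distinct diagonal entries, such that ((U,D),(V,Λ)) is a minimal pair: setting X = U·D·Uᵀ and Y = V·Λ·Vᵀ, one has d_M((U,D),(V,Λ)) ≤ d_M((U′,D′),(V′,Λ′)) for every (U′,D′) ∈ E_X and every (V′,Λ′) ∈ E_Y. -/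
open Matrix

-- ===== auxiliary lemmas =====

lemma IsSO.mul_transpose' {p : ℕ} {U : Matrix (Fin p) (Fin p) ℝ} (hU : IsSO U) :
    U * Uᵀ = 1 := mul_eq_one_comm.mp hU.1

lemma IsSO.inv_eq' {p : ℕ} {U : Matrix (Fin p) (Fin p) ℝ} (hU : IsSO U) :
    U⁻¹ = Uᵀ := Matrix.inv_eq_left_inv hU.1

lemma frob_sq {p : ℕ} (A : Matrix (Fin p) (Fin p) ℝ) :
    frob A ^ 2 = ∑ i, ∑ j, (A i j) ^ 2 := by
  apply Real.sq_sqrt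
  positivity

lemma frob_eq_trace {p : ℕ} (A : Matrix (Fin p) (Fin p) ℝ) :
    frob A = Real.sqrt ((Aᵀ * A).trace) := by
  unfold frob
  congr 1
  simp only [Matrix.trace, Matrix.diag, Matrix.mul_apply, Matrix.transpose_apply]
  rw [Finset.sum_comm]
  exact Finset.sum_congr rfl fun i _ => Finset.sum_congr rfl fun j _ => (pow_two (A j i))

lemma frob_conj {p : ℕ} {Q : Matrix (Fin p) (Fin p) ℝ} (hQ : Qᵀ * Q = 1)
    (A : Matrix (Fin p) (Fin p) ℝ) : frob (Q * A * Qᵀ) = frob A := by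
  rw [frob_eq_trace, frob_eq_trace A]
  congr 1
  have key : (Q * A * Qᵀ)ᵀ * (Q * A * Qᵀ) = Q * (Aᵀ * (Qᵀ * Q) * A) * Qᵀ := by
    simp only [Matrix.transpose_mul, Matrix.transpose_transpose, Matrix.mul_assoc]
  rw [key, hQ, Matrix.mul_one]
  rw [Matrix.trace_mul_comm, ← Matrix.mul_assoc, hQ, Matrix.one_mul]

lemma logdist_nonneg {p : ℕ} (Q : Matrix (Fin p) (Fin p) ℝ) : 0 ≤ logdist Q :=
  Real.sInf_nonneg (by rintro r ⟨A, -, -, rfl⟩; exact frob_nonneg A)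

lemma logdist_conj {p : ℕ} {Q : Matrix (Fin p) (Fin p) ℝ} (hQ : Qᵀ * Q = 1)
    (M : Matrix (Fin p) (Fin p) ℝ) : logdist (Q * M * Qᵀ) = logdist M := by
  have hQ2 : Q * Qᵀ = 1 := mul_eq_one_comm.mp hQ
  have hunit : IsUnit Q := by
    apply (Matrix.isUnit_iff_isUnit_det Q).mpr
    exact IsUnit.of_mul_eq_one Qᵀ.det (by rw [← Matrix.det_mul, hQ2, Matrix.det_one])
  have hunitT : IsUnit Qᵀ := by
    apply (Matrix.isUnit_iff_isUnit_det Qᵀ).mpr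
    exact IsUnit.of_mul_eq_one Q.det (by rw [← Matrix.det_mul, hQ, Matrix.det_one])
  have hinvT : Qᵀ⁻¹ = Q := Matrix.inv_eq_right_inv hQ
  have hinv : Q⁻¹ = Qᵀ := Matrix.inv_eq_right_inv hQ2
  unfold logdist
  congr 1
  ext r
  constructor
  · rintro ⟨A, hskew, hexp, rfl⟩
    refine ⟨Qᵀ * A * Q, ?_, ?_, ?_⟩
    · simp only [Matrix.transpose_mul, Matrix.transpose_transpose, hskew,
        Matrix.neg_mul, Matrix.mul_neg, Matrix.mul_assoc]
    · have h := Matrix.exp_conj Qᵀ A hunitT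
      rw [hinvT, hexp] at h
      rw [h]
      calc Qᵀ * (Q * M * Qᵀ) * Q = (Qᵀ * Q) * M * (Qᵀ * Q) := by
            simp only [Matrix.mul_assoc]
        _ = M := by rw [hQ, Matrix.one_mul, Matrix.mul_one]
    · have h : Qᵀ * A * Q = Qᵀ * A * Qᵀᵀ := by rw [Matrix.transpose_transpose]
      rw [h, frob_conj (by rw [Matrix.transpose_transpose]; exact hQ2)]
  · rintro ⟨A, hskew, hexp, rfl⟩
    refine ⟨Q * A * Qᵀ, ?_, ?_, (frob_conj hQ A).symm⟩
    · simp only [Matrix.transpose_mul, Matrix.transpose_transpose, hskew,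
        Matrix.neg_mul, Matrix.mul_neg, Matrix.mul_assoc]
    · rw [← hinv, Matrix.exp_conj Q A hunit, hinv, hexp]

/-- Characterization of the fiber over `U D Uᵀ` when `D` has distinct diagonal. -/
lemma fiber_char {p : ℕ} {U D : Matrix (Fin p) (Fin p) ℝ} (hU : IsSO U)
    (hD : IsPosDiag D) (hDinj : Function.Injective (fun i => D i i))
    {U' D' : Matrix (Fin p) (Fin p) ℝ} (h : (U', D') ∈ fiber (U * D * Uᵀ)) :
    ∃ (π : Equiv.Perm (Fin p)) (ε : Fin p → ℝ), (∀ j, ε j = 1 ∨ ε j = -1) ∧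
      U' = U * Matrix.of (fun i j => if i = π j then ε j else 0) ∧
      (∀ j, D' j j = D (π j) (π j)) := by
  obtain ⟨hU', hD', hfib⟩ := h
  dsimp only at hU' hD' hfib
  set W : Matrix (Fin p) (Fin p) ℝ := Uᵀ * U' with hW
  have hUU : U * Uᵀ = 1 := hU.mul_transpose'
  have hU'U' : U' * U'ᵀ = 1 := hU'.mul_transpose'
  have hWo : Wᵀ * W = 1 := by
    rw [hW]
    calc (Uᵀ * U')ᵀ * (Uᵀ * U') = U'ᵀ * (U * Uᵀ) * U' := by
          simp only [Matrix.transpose_mul, Matrix.transpose_transpose, Matrix.mul_assoc]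
      _ = 1 := by rw [hUU, Matrix.mul_one, hU'.1]
  have hWD : W * D' * Wᵀ = D := by
    have h1 : Uᵀ * (U' * D' * U'ᵀ) * U = Uᵀ * (U * D * Uᵀ) * U := by rw [hfib]
    have h2 : Uᵀ * (U * D * Uᵀ) * U = D := by
      calc Uᵀ * (U * D * Uᵀ) * U = (Uᵀ * U) * D * (Uᵀ * U) := by
            simp only [Matrix.mul_assoc]
        _ = D := by rw [hU.1, Matrix.one_mul, Matrix.mul_one]
    rw [← h2, ← h1]
    simp only [hW, Matrix.transpose_mul, Matrix.transpose_transpose, Matrix.mul_assoc]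
  have hrel : ∀ i j, W i j * D' j j = D i i * W i j := by
    intro i j
    have h1 : (W * D') i j = W i j * D' j j := by
      rw [Matrix.mul_apply]
      rw [Finset.sum_eq_single j]
      · intro b _ hb
        rw [hD'.1 hb, mul_zero]
      · intro hj; exact absurd (Finset.mem_univ j) hj
    have h2 : (D * W) i j = D i i * W i j := by
      rw [Matrix.mul_apply]
      rw [Finset.sum_eq_single i]
      · intro b _ hb
        rw [hD.1 (Ne.symm hb), zero_mul]
      · intro hj; exact absurd (Finset.mem_univ i) hj
    have h3 : W * D' = D * W := by
      calc W * D' = W * D' * (Wᵀ * W) := by rw [hWo, Matrix.mul_one]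
        _ = (W * D' * Wᵀ) * W := by simp only [Matrix.mul_assoc]
        _ = D * W := by rw [hWD]
    rw [← h1, ← h2, h3]
  have hcol : ∀ j l, ∑ i, W i j * W i l = if j = l then 1 else 0 := by
    intro j l
    have := congrFun (congrFun hWo j) l
    rw [Matrix.mul_apply] at this
    simp only [Matrix.transpose_apply] at this
    rw [Matrix.one_apply] at this
    exact this
  have hex : ∀ j, ∃ i, W i j ≠ 0 := by
    intro j
    by_contra hc
    push_neg at hc
    have := hcol j j
    simp only [if_pos rfl] at this
    rw [Finset.sum_eq_zero (fun i _ => by rw [hc i, zero_mul])] at this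
    norm_num at this
  have huniq : ∀ j i i', W i j ≠ 0 → W i' j ≠ 0 → i = i' := by
    intro j i i' hi hi'
    have e1 := hrel i j
    have e2 := hrel i' j
    have : D i i = D i' i' := by
      have d1 : D' j j = D i i := by
        apply mul_left_cancel₀ hi
        rw [e1, mul_comm]
      have d2 : D' j j = D i' i' := by
        apply mul_left_cancel₀ hi'
        rw [e2, mul_comm]
      rw [← d1, ← d2]
    exact hDinj this
  choose f hf using hex
  have hfinj : Function.Injective f := by
    intro j j' hjj
    by_contra hne
    have := hcol j j'
    rw [if_neg hne] at this
    rw [Finset.sum_eq_single (f j)] at this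
    · rw [hjj] at this
      exact (mul_ne_zero (hjj ▸ hf j) (hf j')) this
    · intro i _ hi
      have : W i j = 0 := by
        by_contra hc
        exact hi (huniq j i (f j) hc (hf j))
      rw [this, zero_mul]
    · intro hj; exact absurd (Finset.mem_univ _) hj
  let π : Equiv.Perm (Fin p) := Equiv.ofBijective f (Finite.injective_iff_bijective.mp hfinj)
  have hπ : ∀ j, π j = f j := fun j => rfl
  set ε : Fin p → ℝ := fun j => W (f j) j with hε
  have hWzero : ∀ i j, i ≠ f j → W i j = 0 := by
    intro i j hi
    by_contra hc
    exact hi (huniq j i (f j) hc (hf j))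
  have hsq : ∀ j, ε j ^ 2 = 1 := by
    intro j
    have := hcol j j
    rw [if_pos rfl] at this
    rw [Finset.sum_eq_single (f j)] at this
    · rw [← this]; exact (pow_two _)
    · intro i _ hi
      rw [hWzero i j hi, zero_mul]
    · intro hj; exact absurd (Finset.mem_univ _) hj
  refine ⟨π, ε, ?_, ?_, ?_⟩
  · intro j
    have h := hsq j
    rw [pow_two] at h
    exact mul_self_eq_one_iff.mp h
  · have hWform : W = Matrix.of (fun i j => if i = π j then ε j else 0) := by
      ext i j
      simp only [Matrix.of_apply, hπ]
      by_cases hij : i = f j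
      · rw [if_pos hij, hij]
      · rw [if_neg hij, hWzero i j hij]
    rw [← hWform, hW]
    calc U' = (U * Uᵀ) * U' := by rw [hUU, Matrix.one_mul]
      _ = U * (Uᵀ * U') := by rw [Matrix.mul_assoc]
  · intro j
    have e1 := hrel (f j) j
    have : D' j j = D (f j) (f j) := by
      apply mul_left_cancel₀ (hf j)
      rw [e1, mul_comm]
    rw [this, hπ]

/-- Orthogonality of a signed permutation matrix. -/
lemma sp_orth {p : ℕ} (π : Equiv.Perm (Fin p)) (ε : Fin p → ℝ)
    (hε : ∀ j, ε j = 1 ∨ ε j = -1) :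
    (Matrix.of (fun i j => if i = π j then ε j else 0) : Matrix (Fin p) (Fin p) ℝ)ᵀ *
      Matrix.of (fun i j => if i = π j then ε j else 0) = 1 := by
  ext j l
  rw [Matrix.mul_apply, Matrix.one_apply]
  simp only [Matrix.transpose_apply, Matrix.of_apply]
  rw [Finset.sum_eq_single (π j)]
  · by_cases hjl : j = l
    · subst hjl
      simp only [if_pos rfl]
      rcases hε j with h | h <;> rw [h] <;> norm_num
    · rw [if_neg hjl, if_pos rfl]
      rw [if_neg (fun h => hjl (π.injective h)), mul_zero]
  · intro i _ hi
    rw [if_neg hi, zero_mul]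
  · intro h; exact absurd (Finset.mem_univ _) h

/-- Product `W' * Wᵀ` of two signed permutation matrices with the same permutation. -/
lemma sp_mul_transpose {p : ℕ} (π : Equiv.Perm (Fin p)) (ε ε' : Fin p → ℝ) :
    (Matrix.of (fun i j => if i = π j then ε' j else 0) : Matrix (Fin p) (Fin p) ℝ) *
      (Matrix.of (fun i j => if i = π j then ε j else 0) : Matrix (Fin p) (Fin p) ℝ)ᵀ =
      Matrix.diagonal (fun i => ε' (π.symm i) * ε (π.symm i)) := by
  ext i j
  rw [Matrix.mul_apply, Matrix.diagonal_apply]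
  simp only [Matrix.transpose_apply, Matrix.of_apply]
  rw [Finset.sum_eq_single (π.symm i)]
  · rw [Equiv.apply_symm_apply]
    by_cases hij : i = j
    · subst hij
      simp only [if_pos rfl, if_true]
    · rw [if_neg hij, if_neg (Ne.symm hij), mul_zero]
  · intro l _ hl
    rw [if_neg (fun h => hl (by rw [h, Equiv.symm_apply_apply])), zero_mul]
  · intro h; exact absurd (Finset.mem_univ _) h

theorem stmt19 (p : ℕ) (hp : 2 ≤ p) (k : ℝ) (hk : 0 < k)
    (U V : Matrix (Fin p) (Fin p) ℝ) (hU : IsSO U) (hV : IsSO V)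
    (hnsr : ∀ σ : Fin p → ℝ, (∀ i, σ i = 1 ∨ σ i = -1) →
      (Matrix.diagonal σ).det = 1 →
      logdist (U⁻¹ * V) ≤ logdist (Matrix.diagonal σ * (U⁻¹ * V))) :
    ∃ D Λ : Matrix (Fin p) (Fin p) ℝ, IsPosDiag D ∧ IsPosDiag Λ ∧
      Function.Injective (fun i => D i i) ∧ Function.Injective (fun i => Λ i i) ∧
      ∀ UD' ∈ fiber (U * D * Uᵀ), ∀ VL' ∈ fiber (V * Λ * Vᵀ),
        dM k (U, D) (V, Λ) ≤ dM k UD' VL' := by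
  classical
  set c₀ : ℝ := (k / 2) * logdist (U⁻¹ * V) ^ 2 with hc₀def
  have hc₀ : 0 ≤ c₀ := by positivity
  set Mc : ℝ := Real.sqrt c₀ + 1 with hMcdef
  have hMc : 0 < Mc := by positivity
  have hMcsq : c₀ < Mc ^ 2 := by
    have h1 : Real.sqrt c₀ ^ 2 = c₀ := Real.sq_sqrt hc₀
    nlinarith [Real.sqrt_nonneg c₀]
  set d : Fin p → ℝ := fun i => Real.exp (Mc * ((i : ℕ) + 1)) with hd
  have hdpos : ∀ i, 0 < d i := fun i => Real.exp_pos _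
  have hdinj : Function.Injective d := by
    intro i j hij
    simp only [hd, Real.exp_eq_exp] at hij
    have h2 : ((i : ℕ) : ℝ) = ((j : ℕ) : ℝ) := by
      have := mul_left_cancel₀ (ne_of_gt hMc) hij
      linarith
    exact Fin.ext (Nat.cast_injective h2)
  have hlogd : ∀ i, Real.log (d i) = Mc * ((i : ℕ) + 1) := fun i => Real.log_exp _
  refine ⟨Matrix.diagonal d, Matrix.diagonal d,
    ⟨Matrix.isDiag_diagonal d, fun i => by simpa using hdpos i⟩,
    ⟨Matrix.isDiag_diagonal d, fun i => by simpa using hdpos i⟩,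
    ?_, ?_, ?_⟩
  · intro i j hij
    simp only [Matrix.diagonal_apply_eq] at hij
    exact hdinj hij
  · intro i j hij
    simp only [Matrix.diagonal_apply_eq] at hij
    exact hdinj hij
  intro UD' hUD' VL' hVL'
  obtain ⟨U', D'⟩ := UD'
  obtain ⟨V', Λ'⟩ := VL'
  have hDpos : IsPosDiag (Matrix.diagonal d) :=
    ⟨Matrix.isDiag_diagonal d, fun i => by simpa using hdpos i⟩
  have hDinj : Function.Injective (fun i => Matrix.diagonal d i i) := by
    intro i j hij
    simp only [Matrix.diagonal_apply_eq] at hij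
    exact hdinj hij
  obtain ⟨π, ε, hε, hU'eq, hD'diag⟩ := fiber_char hU hDpos hDinj hUD'
  obtain ⟨π', ε', hε', hV'eq, hΛ'diag⟩ := fiber_char hV hDpos hDinj hVL'
  have hU'SO : IsSO U' := hUD'.1
  have hV'SO : IsSO V' := hVL'.1
  have hD'diag' : ∀ j, D' j j = d (π j) := by
    intro j; rw [hD'diag j, Matrix.diagonal_apply_eq]
  have hΛ'diag' : ∀ j, Λ' j j = d (π' j) := by
    intro j; rw [hΛ'diag j, Matrix.diagonal_apply_eq]
  set W : Matrix (Fin p) (Fin p) ℝ :=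
    Matrix.of (fun i j => if i = π j then ε j else 0) with hWdef
  set W' : Matrix (Fin p) (Fin p) ℝ :=
    Matrix.of (fun i j => if i = π' j then ε' j else 0) with hW'def
  -- dM on the left
  have hleft : dM k (U, Matrix.diagonal d) (V, Matrix.diagonal d) = Real.sqrt (c₀ + 0) := by
    unfold dM
    congr 1
    simp only [sub_self]
    have : frob (0 : Matrix (Fin p) (Fin p) ℝ) = 0 := by
      unfold frob
      simp
    rw [this]
    norm_num
    exact hc₀def.symm
  rw [hleft]
  -- dM on the right
  have hright : dM k (U', D') (V', Λ') =
      Real.sqrt ((k / 2) * logdist (U'⁻¹ * V') ^ 2 +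
        frob (logDiag D' - logDiag Λ') ^ 2) := rfl
  rw [hright]
  apply Real.sqrt_le_sqrt
  by_cases hππ' : π = π'
  · -- same permutation: diagonal term vanishes, rotation term compares via hnsr
    subst hππ'
    have hdiag0 : logDiag D' - logDiag Λ' = 0 := by
      unfold logDiag
      ext i l
      simp only [Matrix.sub_apply, Matrix.zero_apply, Matrix.diagonal_apply]
      by_cases h : i = l
      · rw [if_pos h, if_pos h, hD'diag' i, hΛ'diag' i, sub_self]
      · rw [if_neg h, if_neg h, sub_self]
    rw [hdiag0]
    have hfrob0 : frob (0 : Matrix (Fin p) (Fin p) ℝ) = 0 := by unfold frob; simp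
    rw [hfrob0]
    -- rotation comparison
    have hWo : Wᵀ * W = 1 := sp_orth π ε hε
    have hW'o : W'ᵀ * W' = 1 := sp_orth π ε' hε'
    have hW'o2 : W' * W'ᵀ = 1 := mul_eq_one_comm.mp hW'o
    set σ : Fin p → ℝ := fun i => ε' (π.symm i) * ε (π.symm i) with hσdef
    have hWW' : W' * Wᵀ = Matrix.diagonal σ := sp_mul_transpose π ε ε'
    have hσpm : ∀ i, σ i = 1 ∨ σ i = -1 := by
      intro i
      rcases hε (π.symm i) with h1 | h1 <;> rcases hε' (π.symm i) with h2 | h2 <;>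
        simp [hσdef, h1, h2]
    have hdetW : W.det = 1 := by
      have h := hU'SO.2
      rw [hU'eq, Matrix.det_mul, hU.2, one_mul] at h
      exact h
    have hdetW' : W'.det = 1 := by
      have h := hV'SO.2
      rw [hV'eq, Matrix.det_mul, hV.2, one_mul] at h
      exact h
    have hσdet : (Matrix.diagonal σ).det = 1 := by
      rw [← hWW', Matrix.det_mul, Matrix.det_transpose, hdetW, hdetW', one_mul]
    -- U'⁻¹ * V' = Wᵀ * (Uᵀ * V) * W'
    have hUinv : U⁻¹ = Uᵀ := hU.inv_eq'
    have hU'inv : U'⁻¹ = U'ᵀ := hU'SO.inv_eq'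
    have hform : U'⁻¹ * V' = Wᵀ * (Uᵀ * V) * W' := by
      rw [hU'inv, hU'eq, hV'eq]
      simp only [Matrix.transpose_mul, Matrix.mul_assoc]
    have hconj : W' * (Wᵀ * (Uᵀ * V) * W') * W'ᵀ = Matrix.diagonal σ * (Uᵀ * V) := by
      calc W' * (Wᵀ * (Uᵀ * V) * W') * W'ᵀ
          = (W' * Wᵀ) * (Uᵀ * V) * (W' * W'ᵀ) := by
            simp only [Matrix.mul_assoc]
        _ = Matrix.diagonal σ * (Uᵀ * V) := by
            rw [hWW', hW'o2, Matrix.mul_one]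
    have hld : logdist (U'⁻¹ * V') = logdist (Matrix.diagonal σ * (Uᵀ * V)) := by
      rw [hform, ← hconj, logdist_conj hW'o]
    have hmain : logdist (U⁻¹ * V) ≤ logdist (U'⁻¹ * V') := by
      rw [hld, hUinv]
      have := hnsr σ hσpm hσdet
      rwa [hUinv] at this
    have hsq : logdist (U⁻¹ * V) ^ 2 ≤ logdist (U'⁻¹ * V') ^ 2 := by
      exact pow_le_pow_left₀ (logdist_nonneg _) hmain 2
    have : c₀ ≤ (k / 2) * logdist (U'⁻¹ * V') ^ 2 := by
      rw [hc₀def]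
      apply mul_le_mul_of_nonneg_left hsq (by positivity)
    linarith
  · -- different permutations: diagonal term dominates
    obtain ⟨j, hj⟩ : ∃ j, π j ≠ π' j := by
      by_contra hc
      push_neg at hc
      exact hππ' (Equiv.ext hc)
    have hentry : (logDiag D' - logDiag Λ') j j =
        Mc * (((π j : ℕ) : ℝ) - ((π' j : ℕ) : ℝ)) := by
      unfold logDiag
      simp only [Matrix.sub_apply, Matrix.diagonal_apply_eq]
      rw [hD'diag' j, hΛ'diag' j, hlogd, hlogd]
      ring
    have hgap : (1 : ℝ) ≤ (((π j : ℕ) : ℝ) - ((π' j : ℕ) : ℝ)) ^ 2 := by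
      have hne : ((π j : ℕ) : ℤ) ≠ ((π' j : ℕ) : ℤ) := by
        intro h
        exact hj (Fin.ext (Int.ofNat_inj.mp h))
      have h1 : (1 : ℤ) ≤ |((π j : ℕ) : ℤ) - ((π' j : ℕ) : ℤ)| :=
        Int.one_le_abs (sub_ne_zero.mpr hne)
      have h2 : (1 : ℤ) ≤ (((π j : ℕ) : ℤ) - ((π' j : ℕ) : ℤ)) ^ 2 := by
        nlinarith [sq_abs (((π j : ℕ) : ℤ) - ((π' j : ℕ) : ℤ))]
      have h3 : (1 : ℝ) ≤ (((((π j : ℕ) : ℤ) - ((π' j : ℕ) : ℤ)) : ℤ) : ℝ) ^ 2 := by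
        exact_mod_cast h2
      push_cast at h3 ⊢
      linarith
    have hterm : Mc ^ 2 ≤ ((logDiag D' - logDiag Λ') j j) ^ 2 := by
      rw [hentry, mul_pow]
      nlinarith [sq_nonneg Mc]
    have hfrobsq : ((logDiag D' - logDiag Λ') j j) ^ 2 ≤
        frob (logDiag D' - logDiag Λ') ^ 2 := by
      rw [frob_sq]
      calc ((logDiag D' - logDiag Λ') j j) ^ 2
          ≤ ∑ l, ((logDiag D' - logDiag Λ') j l) ^ 2 := by
            exact Finset.single_le_sum
              (f := fun l => ((logDiag D' - logDiag Λ') j l) ^ 2)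
              (fun l _ => sq_nonneg _) (Finset.mem_univ j)
        _ ≤ ∑ i, ∑ l, ((logDiag D' - logDiag Λ') i l) ^ 2 := by
            exact Finset.single_le_sum
              (f := fun i => ∑ l, ((logDiag D' - logDiag Λ') i l) ^ 2)
              (fun i _ => Finset.sum_nonneg (fun l _ => sq_nonneg _)) (Finset.mem_univ j)
    have hrot : 0 ≤ (k / 2) * logdist (U'⁻¹ * V') ^ 2 := by positivity
    have : c₀ ≤ frob (logDiag D' - logDiag Λ') ^ 2 := by
      calc c₀ ≤ Mc ^ 2 := le_of_lt hMcsq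
        _ ≤ _ := le_trans hterm hfrobsq
    linarith
end
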